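/- arXiv:1711.00731 — 9 statements merged into one kernel-verified Lean document; each statement's English description precedes it below -/
import Mathlib

section
/- Let ω ⊂ ℝ² be a bounded domain and let θ : closure(ω) → ℝ³ be an injective mapping of class C² such that the two vectors a_α(y) := ∂_α θ(y), α = 1,2, are linearly independent at all points y of the closure of ω. Then there exists ε₀ > 0 such that for every ε₁ with 0 < ε₁ ≤ ε₀, the mapping Θ : closure(ω) × [−ε₁, ε₁] → ℝ³ defined by Θ(y, x₃) := θ(y) + x₃ a₃(y) is a C¹-diffeomorphism from closure(ω) × [−ε₁, ε₁] onto its image Θ(closure(ω) × [−ε₁, ε₁]), and det(g₁, g₂, g₃) > 0 at every point of closure(ω) × [−ε₁, ε₁], where g_i := ∂_i Θ. -/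
open Set
open Matrix Topology Filter

def bvec : Fin 3 → (Fin 2 → ℝ) × ℝ := ![(Pi.single 0 1, 0), (Pi.single 1 1, 0), (0, 1)]

lemma det_triple (u v : Fin 3 → ℝ) (r : ℝ) (hr : 0 < r)
    (hrr : r * r = (u 1 * v 2 - u 2 * v 1)^2 + (u 2 * v 0 - u 0 * v 2)^2
      + (u 0 * v 1 - u 1 * v 0)^2) :
    (Matrix.of fun i j =>
      ![u, v, r⁻¹ • ![u 1 * v 2 - u 2 * v 1, u 2 * v 0 - u 0 * v 2,
          u 0 * v 1 - u 1 * v 0]] j i : Matrix (Fin 3) (Fin 3) ℝ).det = r := by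
  rw [Matrix.det_fin_three]
  simp only [Matrix.of_apply, Matrix.cons_val_zero, Matrix.cons_val_one, Matrix.head_cons,
    Matrix.cons_val_two, Matrix.tail_cons, Pi.smul_apply, smul_eq_mul]
  field_simp
  linear_combination -hrr

lemma aux_bij (L : ((Fin 2 → ℝ) × ℝ) →L[ℝ] (Fin 3 → ℝ))
    (hdet : (Matrix.of fun i j => L (bvec j) i : Matrix (Fin 3) (Fin 3) ℝ).det ≠ 0) :
    Function.Bijective L := by
  have hinj : Function.Injective L := by
    rw [injective_iff_map_eq_zero]
    intro u hu
    set w : Fin 3 → ℝ := ![u.1 0, u.1 1, u.2] with hw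
    have hu' : u = w 0 • bvec 0 + w 1 • bvec 1 + w 2 • bvec 2 := by
      refine Prod.ext ?_ ?_
      · funext x
        fin_cases x <;> simp [bvec, hw]
      · simp [bvec, hw]
    have hLu : ∀ i, w 0 * L (bvec 0) i + w 1 * L (bvec 1) i + w 2 * L (bvec 2) i = 0 := by
      intro i
      have h := congrFun hu i
      rw [hu'] at h
      simpa [mul_comm] using h
    have hmv : (Matrix.of fun i j => L (bvec j) i).mulVec w = 0 := by
      funext i
      simpa [Matrix.mulVec, dotProduct, Fin.sum_univ_three, mul_comm] using hLu i
    have hw0 : w = 0 := Matrix.eq_zero_of_mulVec_eq_zero hdet hmv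
    rw [hu', hw0]
    simp
  refine ⟨hinj, ?_⟩
  have hfr : Module.finrank ℝ ((Fin 2 → ℝ) × ℝ) = Module.finrank ℝ (Fin 3 → ℝ) := by simp
  exact (LinearMap.injective_iff_surjective_of_finrank_eq_finrank
    (f := (L : ((Fin 2 → ℝ) × ℝ) →ₗ[ℝ] (Fin 3 → ℝ))) hfr).mp hinj

/-- If `θ` is an injective `C²` immersion of the closure of a bounded domain `ω ⊂ ℝ²`
into `ℝ³`, then for all small enough `ε₁ > 0` the map `Θ(y,x₃) = θ(y) + x₃ a₃(y)` is a
`C¹`-diffeomorphism of `closure ω × [−ε₁, ε₁]` onto its image, with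
`det(∂₁Θ, ∂₂Θ, ∂₃Θ) > 0` everywhere on that set. -/
theorem stmt0 (ω : Set (Fin 2 → ℝ)) (hωo : IsOpen ω) (hωb : Bornology.IsBounded ω)
    (hωc : IsConnected ω)
    (U : Set (Fin 2 → ℝ)) (hUo : IsOpen U) (hωU : closure ω ⊆ U)
    (θ : (Fin 2 → ℝ) → Fin 3 → ℝ) (hθ : ContDiffOn ℝ 2 θ U) (hθinj : InjOn θ (closure ω))
    (a : Fin 2 → (Fin 2 → ℝ) → Fin 3 → ℝ)
    (ha : ∀ α y, a α y = fderiv ℝ θ y (Pi.single α 1))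
    (hind : ∀ y ∈ closure ω, LinearIndependent ℝ ![a 0 y, a 1 y])
    (c : (Fin 2 → ℝ) → Fin 3 → ℝ)
    (hc : ∀ y, c y = ![a 0 y 1 * a 1 y 2 - a 0 y 2 * a 1 y 1,
                       a 0 y 2 * a 1 y 0 - a 0 y 0 * a 1 y 2,
                       a 0 y 0 * a 1 y 1 - a 0 y 1 * a 1 y 0])
    (a3 : (Fin 2 → ℝ) → Fin 3 → ℝ)
    (ha3 : ∀ y, a3 y = (Real.sqrt (∑ i, c y i ^ 2))⁻¹ • c y)
    (Θ : (Fin 2 → ℝ) × ℝ → Fin 3 → ℝ)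
    (hΘ : ∀ p, Θ p = θ p.1 + p.2 • a3 p.1)
    (gvec : Fin 3 → ((Fin 2 → ℝ) × ℝ) → Fin 3 → ℝ)
    (hgvec0 : ∀ p, gvec 0 p = fderiv ℝ Θ p (Pi.single 0 1, 0))
    (hgvec1 : ∀ p, gvec 1 p = fderiv ℝ Θ p (Pi.single 1 1, 0))
    (hgvec2 : ∀ p, gvec 2 p = fderiv ℝ Θ p (0, 1)) :
    ∃ ε₀ > (0 : ℝ), ∀ ε₁ : ℝ, 0 < ε₁ → ε₁ ≤ ε₀ →
      InjOn Θ (closure ω ×ˢ Icc (-ε₁) ε₁) ∧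
      ContDiffOn ℝ 1 Θ (closure ω ×ˢ Icc (-ε₁) ε₁) ∧
      (∃ Ψ : (Fin 3 → ℝ) → (Fin 2 → ℝ) × ℝ,
        ContDiffOn ℝ 1 Ψ (Θ '' (closure ω ×ˢ Icc (-ε₁) ε₁)) ∧
        ∀ p ∈ closure ω ×ˢ Icc (-ε₁) ε₁, Ψ (Θ p) = p) ∧
      ∀ p ∈ closure ω ×ˢ Icc (-ε₁) ε₁,
        0 < (Matrix.of fun i j => gvec j p i : Matrix (Fin 3) (Fin 3) ℝ).det := by
  classical
  set K := closure ω with hKdef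
  have hKc : IsCompact K := Metric.isCompact_of_isClosed_isBounded isClosed_closure hωb.closure
  have hΘfun : Θ = fun p => θ p.1 + p.2 • a3 p.1 := funext hΘ
  -- smoothness of a, c on U
  have hθ1 : ContDiffOn ℝ 1 θ U := hθ.of_le one_le_two
  have hDθ : ContDiffOn ℝ 1 (fderiv ℝ θ) U := hθ.fderiv_of_isOpen hUo (by norm_num)
  have haC : ∀ α, ContDiffOn ℝ 1 (a α) U := by
    intro α
    have h := hDθ.clm_apply (contDiffOn_const (c := (Pi.single α 1 : Fin 2 → ℝ)))
    have he : a α = fun y => fderiv ℝ θ y (Pi.single α 1) := funext (ha α)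
    rw [he]; exact h
  have haCi : ∀ α i, ContDiffOn ℝ 1 (fun y => a α y i) U := by
    intro α i
    exact contDiffOn_pi.mp (haC α) i
  have hcC : ContDiffOn ℝ 1 c U := by
    apply contDiffOn_pi.mpr
    intro i
    have hrw : (fun y => c y i) = fun y => (![a 0 y 1 * a 1 y 2 - a 0 y 2 * a 1 y 1,
        a 0 y 2 * a 1 y 0 - a 0 y 0 * a 1 y 2,
        a 0 y 0 * a 1 y 1 - a 0 y 1 * a 1 y 0] : Fin 3 → ℝ) i := by
      funext y; rw [hc]
    rw [hrw]
    fin_cases i <;>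
      simp only [Matrix.cons_val_zero, Matrix.cons_val_one, Matrix.head_cons,
        Matrix.cons_val_two, Matrix.tail_cons] <;>
      exact ((haCi _ _).mul (haCi _ _)).sub ((haCi _ _).mul (haCi _ _))
  have hcCi : ∀ i, ContDiffOn ℝ 1 (fun y => c y i) U := fun i => contDiffOn_pi.mp hcC i
  have hsC : ContDiffOn ℝ 1 (fun y => ∑ i, c y i ^ 2) U := by
    apply ContDiffOn.sum
    intro i _
    exact (hcCi i).pow 2
  -- c ≠ 0 on K
  have hcK : ∀ y ∈ K, c y ≠ 0 := by
    intro y hy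
    have hcross : c y = crossProduct (a 0 y) (a 1 y) := by
      rw [hc, cross_apply]
    rw [hcross]
    exact crossProduct_ne_zero_iff_linearIndependent.mpr (hind y hy)
  -- the open set V
  set V : Set (Fin 2 → ℝ) := U ∩ c ⁻¹' ({0}ᶜ) with hVdef
  have hVo : IsOpen V :=
    hcC.continuousOn.isOpen_inter_preimage hUo (isOpen_compl_iff.mpr isClosed_singleton)
  have hKV : K ⊆ V := fun y hy => ⟨hωU hy, hcK y hy⟩
  have hVU : V ⊆ U := fun y hy => hy.1
  have hsV : ∀ y ∈ V, 0 < ∑ i, c y i ^ 2 := by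
    intro y hy
    have hne : c y ≠ 0 := hy.2
    obtain ⟨i, hi⟩ := Function.ne_iff.mp hne
    refine Finset.sum_pos' (fun j _ => sq_nonneg _) ⟨i, Finset.mem_univ i, ?_⟩
    exact lt_of_le_of_ne (sq_nonneg _) (Ne.symm (pow_ne_zero 2 hi))
  have hsqrtV : ∀ y ∈ V, Real.sqrt (∑ i, c y i ^ 2) ≠ 0 :=
    fun y hy => (Real.sqrt_pos.mpr (hsV y hy)).ne'
  have ha3C : ContDiffOn ℝ 1 a3 V := by
    have h1 : ContDiffOn ℝ 1 (fun y => (Real.sqrt (∑ i, c y i ^ 2))⁻¹) V := by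
      apply ContDiffOn.inv
      · exact ContDiffOn.sqrt (hsC.mono hVU) (fun y hy => (hsV y hy).ne')
      · exact hsqrtV
    have h2 : a3 = fun y => (Real.sqrt (∑ i, c y i ^ 2))⁻¹ • c y := funext ha3
    rw [h2]
    exact h1.smul (hcC.mono hVU)
  -- Θ is C¹ on V × ℝ
  set Vℝ : Set ((Fin 2 → ℝ) × ℝ) := V ×ˢ (univ : Set ℝ) with hVℝdef
  have hVℝo : IsOpen Vℝ := hVo.prod isOpen_univ
  have hΘC : ContDiffOn ℝ 1 Θ Vℝ := by
    rw [hΘfun]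
    apply ContDiffOn.add
    · exact ContDiffOn.comp (hθ1.mono hVU) contDiff_fst.contDiffOn (fun p hp => hp.1)
    · exact ContDiffOn.smul contDiff_snd.contDiffOn
        (ContDiffOn.comp ha3C contDiff_fst.contDiffOn (fun p hp => hp.1))
  have hΘat : ∀ p ∈ Vℝ, ContDiffAt ℝ 1 Θ p :=
    fun p hp => hΘC.contDiffAt (hVℝo.mem_nhds hp)
  have hKVℝ : ∀ {p : (Fin 2 → ℝ) × ℝ}, p.1 ∈ K → p ∈ Vℝ :=
    fun {p} hp => ⟨hKV hp, mem_univ _⟩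
  -- the matrix of the derivative
  set Mat : ((Fin 2 → ℝ) × ℝ) → Matrix (Fin 3) (Fin 3) ℝ :=
    fun p => Matrix.of fun i j => fderiv ℝ Θ p (bvec j) i with hMatdef
  have hgM : ∀ p, (Matrix.of fun i j => gvec j p i : Matrix (Fin 3) (Fin 3) ℝ) = Mat p := by
    intro p
    ext i j
    fin_cases j <;>
      simp [hMatdef, Matrix.of_apply, hgvec0, hgvec1, hgvec2, bvec]
  -- continuity of the determinant
  have hdetC : ContinuousOn (fun p => (Mat p).det) Vℝ := by
    have hfd : ContinuousOn (fderiv ℝ Θ) Vℝ := hΘC.continuousOn_fderiv_of_isOpen hVℝo le_rfl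
    have hentry : ∀ (i j : Fin 3), ContinuousOn (fun p => fderiv ℝ Θ p (bvec j) i) Vℝ := by
      intro i j
      have h1 : ContinuousOn (fun p => fderiv ℝ Θ p (bvec j)) Vℝ :=
        hfd.clm_apply continuousOn_const
      exact (continuous_apply i).comp_continuousOn h1
    have hMatC : ContinuousOn Mat Vℝ := by
      rw [hMatdef]
      exact continuousOn_pi.mpr fun i => continuousOn_pi.mpr fun j => hentry i j
    exact (Continuous.matrix_det continuous_id).comp_continuousOn hMatC
  -- derivative at (y, 0) and its determinant
  have hdet0 : ∀ y ∈ V, (Mat (y, 0)).det = Real.sqrt (∑ i, c y i ^ 2) := by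
    intro y hy
    have hyU : y ∈ U := hVU hy
    have hAy : HasFDerivAt θ (fderiv ℝ θ y) y :=
      ((hθ1.contDiffAt (hUo.mem_nhds hyU)).differentiableAt one_ne_zero).hasFDerivAt
    have ha3y : HasFDerivAt a3 (fderiv ℝ a3 y) y :=
      ((ha3C.contDiffAt (hVo.mem_nhds hy)).differentiableAt one_ne_zero).hasFDerivAt
    have h1 : HasFDerivAt (fun p : (Fin 2 → ℝ) × ℝ => θ p.1)
        ((fderiv ℝ θ y).comp (ContinuousLinearMap.fst ℝ (Fin 2 → ℝ) ℝ)) (y, 0) :=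
      hAy.comp (y, (0:ℝ)) hasFDerivAt_fst
    have h2 : HasFDerivAt (fun p : (Fin 2 → ℝ) × ℝ => a3 p.1)
        ((fderiv ℝ a3 y).comp (ContinuousLinearMap.fst ℝ (Fin 2 → ℝ) ℝ)) (y, 0) :=
      ha3y.comp (y, (0:ℝ)) hasFDerivAt_fst
    have h3 := (hasFDerivAt_snd (𝕜 := ℝ) (p := ((y, (0:ℝ))))).smul h2
    have h4 := h1.add h3
    have h4' : HasFDerivAt Θ
        ((fderiv ℝ θ y).comp (ContinuousLinearMap.fst ℝ (Fin 2 → ℝ) ℝ) +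
          (((y, (0:ℝ)).2 : ℝ) • ((fderiv ℝ a3 y).comp (ContinuousLinearMap.fst ℝ (Fin 2 → ℝ) ℝ)) +
            (ContinuousLinearMap.snd ℝ (Fin 2 → ℝ) ℝ).smulRight (a3 (y, (0:ℝ)).1))) (y, 0) := by
      rw [hΘfun]; exact h4
    have hfder := h4'.fderiv
    have hcol : ∀ j : Fin 3, fderiv ℝ Θ (y, (0:ℝ)) (bvec j) = ![a 0 y, a 1 y, a3 y] j := by
      intro j
      rw [hfder]
      fin_cases j <;>
        simp [bvec, ha, ContinuousLinearMap.add_apply, ContinuousLinearMap.comp_apply,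
          ContinuousLinearMap.smulRight_apply]
    have hMrw : Mat (y, 0) = Matrix.of fun i j => (![a 0 y, a 1 y, a3 y] j) i := by
      ext i j
      rw [hMatdef]
      simp only [Matrix.of_apply]
      rw [hcol j]
    have hsy : 0 ≤ ∑ i, c y i ^ 2 := (hsV y hy).le
    have hrr : Real.sqrt (∑ i, c y i ^ 2) * Real.sqrt (∑ i, c y i ^ 2)
        = (a 0 y 1 * a 1 y 2 - a 0 y 2 * a 1 y 1)^2 + (a 0 y 2 * a 1 y 0 - a 0 y 0 * a 1 y 2)^2
          + (a 0 y 0 * a 1 y 1 - a 0 y 1 * a 1 y 0)^2 := by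
      rw [Real.mul_self_sqrt hsy]
      simp [hc, Fin.sum_univ_three]
    have ha3y' : a3 y = (Real.sqrt (∑ i, c y i ^ 2))⁻¹ •
        ![a 0 y 1 * a 1 y 2 - a 0 y 2 * a 1 y 1,
          a 0 y 2 * a 1 y 0 - a 0 y 0 * a 1 y 2,
          a 0 y 0 * a 1 y 1 - a 0 y 1 * a 1 y 0] := by
      rw [ha3 y, hc y]
    rw [hMrw, ha3y']
    exact det_triple (a 0 y) (a 1 y) _ (Real.sqrt_pos.mpr (hsV y hy)) hrr
  have hK0D : ∀ y ∈ K, 0 < (Mat (y, 0)).det := by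
    intro y hy
    rw [hdet0 y (hKV hy)]
    exact Real.sqrt_pos.mpr (hsV y (hKV hy))
  -- invertibility of the derivative
  have hEquiv : ∀ p ∈ Vℝ, 0 < (Mat p).det →
      ∃ e : ((Fin 2 → ℝ) × ℝ) ≃L[ℝ] (Fin 3 → ℝ),
        (e : ((Fin 2 → ℝ) × ℝ) →L[ℝ] (Fin 3 → ℝ)) = fderiv ℝ Θ p := by
    intro p hp hdet
    have hbij : Function.Bijective (fderiv ℝ Θ p) := by
      apply aux_bij
      rw [hMatdef] at hdet
      exact hdet.ne'
    exact ⟨(LinearEquiv.ofBijective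
      ((fderiv ℝ Θ p) : ((Fin 2 → ℝ) × ℝ) →ₗ[ℝ] (Fin 3 → ℝ)) hbij).toContinuousLinearEquiv,
      ContinuousLinearMap.ext fun u => rfl⟩
  -- local inverse / local injectivity
  have hloc : ∀ p ∈ Vℝ, 0 < (Mat p).det →
      ∃ O : Set ((Fin 2 → ℝ) × ℝ), IsOpen O ∧ p ∈ O ∧ InjOn Θ O ∧
        ∃ g : (Fin 3 → ℝ) → (Fin 2 → ℝ) × ℝ,
          ContDiffAt ℝ 1 g (Θ p) ∧ ∀ r ∈ O, g (Θ r) = r := by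
    intro p hp hdet
    obtain ⟨e, he⟩ := hEquiv p hp hdet
    have hcd : ContDiffAt ℝ 1 Θ p := hΘat p hp
    have hfd : HasFDerivAt Θ (e : ((Fin 2 → ℝ) × ℝ) →L[ℝ] (Fin 3 → ℝ)) p := by
      rw [he]; exact (hcd.differentiableAt one_ne_zero).hasFDerivAt
    have hstrict : HasStrictFDerivAt Θ (e : ((Fin 2 → ℝ) × ℝ) →L[ℝ] (Fin 3 → ℝ)) p :=
      hcd.hasStrictFDerivAt' hfd one_ne_zero
    have hg : ContDiffAt ℝ 1 (hcd.localInverse hfd one_ne_zero) (Θ p) :=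
      hcd.to_localInverse hfd one_ne_zero
    have hgl : ∀ᶠ r in 𝓝 p, hcd.localInverse hfd one_ne_zero (Θ r) = r :=
      hstrict.eventually_left_inverse
    obtain ⟨O', hO'sub, hO'open, hpO'⟩ := mem_nhds_iff.mp hgl
    refine ⟨(hstrict.toOpenPartialHomeomorph Θ).source ∩ O',
      ((hstrict.toOpenPartialHomeomorph Θ).open_source).inter hO'open,
      ⟨hstrict.mem_toOpenPartialHomeomorph_source, hpO'⟩, ?_, hcd.localInverse hfd one_ne_zero, hg,
      fun r hr => hO'sub hr.2⟩
    have := (hstrict.toOpenPartialHomeomorph Θ).injOn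
    rw [HasStrictFDerivAt.toOpenPartialHomeomorph_coe] at this
    exact this.mono inter_subset_left
  -- global injectivity for small ε
  have hglobinj : ∃ εi : ℝ, 0 < εi ∧ InjOn Θ (K ×ˢ Icc (-εi) εi) := by
    by_contra hcon
    push_neg at hcon
    have hex : ∀ n : ℕ, ∃ pq : ((Fin 2 → ℝ) × ℝ) × ((Fin 2 → ℝ) × ℝ),
        pq.1 ∈ K ×ˢ Icc (-(1/(n+1) : ℝ)) (1/(n+1)) ∧
        pq.2 ∈ K ×ˢ Icc (-(1/(n+1) : ℝ)) (1/(n+1)) ∧ Θ pq.1 = Θ pq.2 ∧ pq.1 ≠ pq.2 := by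
      intro n
      have hn : (0:ℝ) < 1/(n+1) := by positivity
      have h := hcon (1/(n+1)) hn
      rw [InjOn] at h; push_neg at h
      obtain ⟨x, hx, y, hy, hxy, hne⟩ := h
      exact ⟨(x, y), hx, hy, hxy, hne⟩
    choose z hz1 hz2 hz3 hz4 using hex
    set C := K ×ˢ Icc (-(1:ℝ)) 1 with hCdef
    have hCc : IsCompact C := hKc.prod isCompact_Icc
    have hIccsub : ∀ n : ℕ, Icc (-(1/(n+1) : ℝ)) (1/(n+1)) ⊆ Icc (-(1:ℝ)) 1 := by
      intro n
      apply Icc_subset_Icc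
      · rw [neg_le_neg_iff]
        rw [div_le_one (by positivity)]
        linarith [Nat.cast_nonneg (α := ℝ) n]
      · rw [div_le_one (by positivity)]
        linarith [Nat.cast_nonneg (α := ℝ) n]
    have hzC : ∀ n, z n ∈ C ×ˢ C := by
      intro n
      exact ⟨⟨(hz1 n).1, hIccsub n (hz1 n).2⟩, ⟨(hz2 n).1, hIccsub n (hz2 n).2⟩⟩
    obtain ⟨l, hlC, φ, hφ, hφt⟩ := (hCc.prod hCc).tendsto_subseq hzC
    have ht1 : Filter.Tendsto (fun n => (z (φ n)).1) Filter.atTop (𝓝 l.1) :=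
      (continuous_fst.tendsto l).comp hφt
    have ht2 : Filter.Tendsto (fun n => (z (φ n)).2) Filter.atTop (𝓝 l.2) :=
      (continuous_snd.tendsto l).comp hφt
    have hbound : ∀ (w : ℕ → (Fin 2 → ℝ) × ℝ),
        (∀ n : ℕ, w n ∈ K ×ˢ Icc (-(1/(n+1) : ℝ)) (1/(n+1))) →
        Filter.Tendsto (fun n => (w (φ n)).2) Filter.atTop (𝓝 (0:ℝ)) := by
      intro w hw
      apply squeeze_zero_norm (a := fun n : ℕ => 1/(n+1))
      · intro n
        have hmem := (hw (φ n)).2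
        have h1 : |(w (φ n)).2| ≤ 1/((φ n : ℝ)+1) := abs_le.mpr ⟨hmem.1, hmem.2⟩
        refine h1.trans (one_div_le_one_div_of_le (by positivity) ?_)
        have : n ≤ φ n := hφ.le_apply
        push_cast
        linarith [Nat.cast_le (α := ℝ).mpr this]
      · exact tendsto_one_div_add_atTop_nhds_zero_nat
    have hl12 : (l.1).2 = 0 :=
      tendsto_nhds_unique ((continuous_snd.tendsto l.1).comp ht1) (hbound (fun n => (z n).1) hz1)
    have hl22 : (l.2).2 = 0 :=
      tendsto_nhds_unique ((continuous_snd.tendsto l.2).comp ht2) (hbound (fun n => (z n).2) hz2)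
    have hl1K : (l.1).1 ∈ K := (hlC.1 : l.1 ∈ C).1
    have hl2K : (l.2).1 ∈ K := (hlC.2 : l.2 ∈ C).1
    have hΘ12 : Θ l.1 = Θ l.2 := by
      have t1 : Filter.Tendsto (fun n => Θ ((z (φ n)).1)) Filter.atTop (𝓝 (Θ l.1)) :=
        ((hΘat l.1 (hKVℝ hl1K)).continuousAt.tendsto).comp ht1
      have t2 : Filter.Tendsto (fun n => Θ ((z (φ n)).2)) Filter.atTop (𝓝 (Θ l.2)) :=
        ((hΘat l.2 (hKVℝ hl2K)).continuousAt.tendsto).comp ht2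
      have heq : (fun n => Θ ((z (φ n)).1)) = fun n => Θ ((z (φ n)).2) :=
        funext fun n => hz3 (φ n)
      rw [heq] at t1
      exact tendsto_nhds_unique t1 t2
    have hθeq : θ (l.1).1 = θ (l.2).1 := by
      have e1 : Θ l.1 = θ (l.1).1 := by
        rw [hΘ l.1, hl12]; simp
      have e2 : Θ l.2 = θ (l.2).1 := by
        rw [hΘ l.2, hl22]; simp
      rw [← e1, ← e2, hΘ12]
    have hll : l.1 = l.2 := by
      refine Prod.ext (hθinj hl1K hl2K hθeq) ?_
      rw [hl12, hl22]
    have hl1eq : l.1 = ((l.1).1, (0:ℝ)) := Prod.ext rfl hl12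
    obtain ⟨O, hOopen, hpO, hOinj, -⟩ :=
      hloc l.1 (hKVℝ hl1K) (by rw [hl1eq]; exact hK0D (l.1).1 hl1K)
    have hev1 : ∀ᶠ n in Filter.atTop, (z (φ n)).1 ∈ O := ht1 (hOopen.mem_nhds hpO)
    have hev2 : ∀ᶠ n in Filter.atTop, (z (φ n)).2 ∈ O := ht2 (hOopen.mem_nhds (hll ▸ hpO))
    obtain ⟨n, h1, h2⟩ := (hev1.and hev2).exists
    exact hz4 (φ n) (hOinj h1 h2 (hz3 (φ n)))
  -- positivity of det on a neighborhood, via thickening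
  have hDopen : IsOpen (Vℝ ∩ (fun p => (Mat p).det) ⁻¹' Ioi 0) :=
    hdetC.isOpen_inter_preimage hVℝo isOpen_Ioi
  have hK0sub : K ×ˢ ({0} : Set ℝ) ⊆ Vℝ ∩ (fun p => (Mat p).det) ⁻¹' Ioi 0 := by
    rintro ⟨y, t⟩ ⟨hy, ht⟩
    have ht' : t = 0 := ht
    subst ht'
    exact ⟨hKVℝ hy, hK0D y hy⟩
  have hK0c : IsCompact (K ×ˢ ({0} : Set ℝ)) := hKc.prod isCompact_singleton
  obtain ⟨δ, hδ, hth⟩ := hK0c.exists_thickening_subset_open hDopen hK0sub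
  obtain ⟨εi, hεi, hinjK⟩ := hglobinj
  refine ⟨min (δ/2) εi, lt_min (by positivity) hεi, ?_⟩
  intro ε₁ hε₁ hε₁le
  have hε₁δ : ε₁ ≤ δ/2 := hε₁le.trans (min_le_left _ _)
  have hε₁i : ε₁ ≤ εi := hε₁le.trans (min_le_right _ _)
  set S := K ×ˢ Icc (-ε₁) ε₁ with hSdef
  have hSsub : ∀ p ∈ S, p ∈ Vℝ ∧ 0 < (Mat p).det := by
    intro p hp
    have : p ∈ Vℝ ∩ (fun p => (Mat p).det) ⁻¹' Ioi 0 := by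
      apply hth
      rw [Metric.mem_thickening_iff]
      refine ⟨(p.1, 0), ⟨hp.1, rfl⟩, ?_⟩
      rw [Prod.dist_eq]
      simp only [dist_self, Real.dist_eq, sub_zero]
      have habs : |p.2| ≤ ε₁ := abs_le.mpr ⟨hp.2.1, hp.2.2⟩
      exact max_lt (by linarith) (by linarith [habs.trans hε₁δ])
    exact ⟨this.1, this.2⟩
  have hSVℝ : S ⊆ Vℝ := fun p hp => (hSsub p hp).1
  have hinjS : InjOn Θ S :=
    hinjK.mono (Set.prod_mono Subset.rfl (Icc_subset_Icc (neg_le_neg hε₁i) hε₁i))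
  have hScomp : IsCompact S := hKc.prod isCompact_Icc
  refine ⟨hinjS, hΘC.mono hSVℝ, ⟨Function.invFunOn Θ S, ?_, fun p hp => hinjS.leftInvOn_invFunOn hp⟩, ?_⟩
  · -- smoothness of the inverse
    intro x hx
    obtain ⟨p, hpS, rfl⟩ := hx
    obtain ⟨O, hOopen, hpO, hOinj, g, hg, hgO⟩ :=
      hloc p (hSVℝ hpS) (hSsub p hpS).2
    have hSOc : IsCompact (S \ O) := hScomp.diff hOopen
    have hTc : IsClosed (Θ '' (S \ O)) :=
      (hSOc.image_of_continuousOn (hΘC.continuousOn.mono (diff_subset.trans hSVℝ))).isClosed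
    have hxT : Θ p ∉ Θ '' (S \ O) := by
      rintro ⟨r, hr, hrq⟩
      have : r = p := hinjS hr.1 hpS hrq
      exact hr.2 (this ▸ hpO)
    have hN : (Θ '' (S \ O))ᶜ ∈ 𝓝 (Θ p) := hTc.isOpen_compl.mem_nhds hxT
    have hev : Function.invFunOn Θ S =ᶠ[nhdsWithin (Θ p) (Θ '' S)] g := by
      filter_upwards [self_mem_nhdsWithin, nhdsWithin_le_nhds hN] with q hq hqN
      obtain ⟨r, hrS, rfl⟩ := hq
      have h1 : Function.invFunOn Θ S (Θ r) = r := hinjS.leftInvOn_invFunOn hrS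
      have hrO : r ∈ O := by
        by_contra hro
        exact hqN ⟨r, ⟨hrS, hro⟩, rfl⟩
      rw [h1, hgO r hrO]
    have hx0 : Function.invFunOn Θ S (Θ p) = g (Θ p) := by
      rw [hinjS.leftInvOn_invFunOn hpS, hgO p hpO]
    exact (hg.contDiffWithinAt).congr_of_eventuallyEq hev hx0
  · -- determinant positivity
    intro p hp
    rw [hgM p]
    exact (hSsub p hp).2
end

section
/- Let (a^{αβ}) be a symmetric positive definite 2×2 real matrix, λ ≥ 0, μ > 0. Define the 3×3 symmetric matrix (g^{ij}) by g^{αβ} := a^{αβ} for α,β ∈ {1,2}, g^{α3} = g^{3α} := 0, g^{33} := 1, and set A^{ijkl} := λ g^{ij} g^{kl} + μ (g^{ik} g^{jl} + g^{il} g^{jk}) for i,j,k,l ∈ {1,2,3}. Then there exists a constant C_e > 0 such that for every symmetric 3×3 real matrix t = (t_{ij}): Σ_{i,j=1}^{3} |t_{ij}|² ≤ C_e · Σ_{i,j,k,l=1}^{3} A^{ijkl} t_{kl} t_{ij}. Moreover A^{αβστ} = λ a^{αβ} a^{στ} + μ (a^{ασ} a^{βτ} + a^{ατ} a^{βσ}),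 A^{αβ33} = λ a^{αβ}, A^{α3σ3} = μ a^{ασ}, A^{3333} = λ + 2μ, and A^{αβσ3} = A^{α333} = 0 for all Greek indices in {1,2}. -/
open Matrix in
private lemma aux_cs_stmt1 (P Q M : Matrix (Fin 3) (Fin 3) ℝ) :
    ∑ i, ∑ j, ((P * M * Q) i j)^2 ≤
      ((∑ i, ∑ k, (P i k)^2) * (∑ l, ∑ j, (Q l j)^2)) * (∑ k, ∑ l, (M k l)^2) := by
  have key : ∀ i j, ((P * M * Q) i j)^2 ≤
      ((∑ k, (P i k)^2) * (∑ l, (Q l j)^2)) * (∑ k, ∑ l, (M k l)^2) := by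
    intro i j
    have h1 : (P * M * Q) i j = ∑ p : Fin 3 × Fin 3, (P i p.1 * Q p.2 j) * (M p.1 p.2) := by
      simp only [Matrix.mul_apply, Finset.sum_mul, Fintype.sum_prod_type, Fin.sum_univ_three]
      ring
    have h2 := Finset.sum_mul_sq_le_sq_mul_sq Finset.univ
        (fun p : Fin 3 × Fin 3 => P i p.1 * Q p.2 j) (fun p : Fin 3 × Fin 3 => M p.1 p.2)
    rw [h1]
    refine h2.trans_eq ?_
    congr 1
    · simp only [Fintype.sum_prod_type, Fin.sum_univ_three]
      ring
    · simp only [Fintype.sum_prod_type]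
  calc ∑ i, ∑ j, ((P * M * Q) i j)^2
      ≤ ∑ i, ∑ j, (((∑ k, (P i k)^2) * (∑ l, (Q l j)^2)) * (∑ k, ∑ l, (M k l)^2)) := by
        refine Finset.sum_le_sum fun i _ => Finset.sum_le_sum fun j _ => key i j
    _ = ((∑ i, ∑ k, (P i k)^2) * (∑ l, ∑ j, (Q l j)^2)) * (∑ k, ∑ l, (M k l)^2) := by
        simp only [Fin.sum_univ_three]
        ring

private lemma aux_final_stmt1 (mu lam C S T x : ℝ) (hmu : 0 < mu) (hC : 0 ≤ C) (hS : 0 ≤ S)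
    (hlam : 0 ≤ lam) (hx : x ≤ C * S) :
    x ≤ (C + 1) / (2 * mu) * (lam * T ^ 2 + 2 * mu * S) := by
  have h1 : (C + 1) / (2 * mu) * (2 * mu) = C + 1 := div_mul_cancel₀ _ (by positivity)
  have h2 : 0 ≤ (C + 1) / (2 * mu) * (lam * T ^ 2) :=
    mul_nonneg (div_nonneg (by linarith) (by linarith)) (mul_nonneg hlam (sq_nonneg T))
  nlinarith [h1, h2]

open Matrix in
/-- Uniform positive definiteness and component formulas for the limit
three-dimensional elasticity tensor `A^{ijkl}(0)` of a linearly viscoelastic shell. -/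
theorem stmt1 (a : Matrix (Fin 2) (Fin 2) ℝ) (hpos : a.PosDef) (hsym : a.IsSymm)
    (lam mu : ℝ) (hlam : 0 ≤ lam) (hmu : 0 < mu)
    (g : Matrix (Fin 3) (Fin 3) ℝ)
    (hg : ∀ α β : Fin 2, g α.castSucc β.castSucc = a α β)
    (hg3 : ∀ α : Fin 2, g α.castSucc 2 = 0 ∧ g 2 α.castSucc = 0)
    (hg33 : g 2 2 = 1)
    (A : Fin 3 → Fin 3 → Fin 3 → Fin 3 → ℝ)
    (hA : ∀ i j k l, A i j k l = lam * g i j * g k l + mu * (g i k * g j l + g i l * g j k)) :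
    (∃ Ce > 0, ∀ t : Matrix (Fin 3) (Fin 3) ℝ, t.IsSymm →
      ∑ i, ∑ j, |t i j| ^ 2 ≤ Ce * ∑ i, ∑ j, ∑ k, ∑ l, A i j k l * t k l * t i j) ∧
    (∀ α β σ τ : Fin 2,
      A α.castSucc β.castSucc σ.castSucc τ.castSucc
        = lam * a α β * a σ τ + mu * (a α σ * a β τ + a α τ * a β σ) ∧
      A α.castSucc β.castSucc 2 2 = lam * a α β ∧
      A α.castSucc 2 σ.castSucc 2 = mu * a α σ ∧
      A 2 2 2 2 = lam + 2 * mu ∧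
      A α.castSucc β.castSucc σ.castSucc 2 = 0 ∧
      A α.castSucc 2 2 2 = 0) := by
  -- entry facts
  have e00 : g 0 0 = a 0 0 := hg 0 0
  have e01 : g 0 1 = a 0 1 := hg 0 1
  have e10 : g 1 0 = a 1 0 := hg 1 0
  have e11 : g 1 1 = a 1 1 := hg 1 1
  have e02 : g 0 2 = 0 := (hg3 0).1
  have e12 : g 1 2 = 0 := (hg3 1).1
  have e20 : g 2 0 = 0 := (hg3 0).2
  have e21 : g 2 1 = 0 := (hg3 1).2
  have e22 : g 2 2 = 1 := hg33
  have g10 : g 1 0 = g 0 1 := by rw [e10, e01, hsym.apply]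
  have g20 : g 2 0 = g 0 2 := by rw [e20, e02]
  have g21 : g 2 1 = g 1 2 := by rw [e21, e12]
  have gsym : g.IsSymm := by
    refine Matrix.IsSymm.ext fun i j => ?_
    fin_cases i <;> fin_cases j <;> simp [g10, g20, g21]
  -- g is positive definite
  have gPD : g.PosDef := by
    refine Matrix.posDef_iff_dotProduct_mulVec.mpr ⟨?_, ?_⟩
    · rw [Matrix.IsHermitian, Matrix.conjTranspose_eq_transpose_of_trivial, gsym.eq]
    · intro x hx
      simp only [star_trivial, dotProduct, Matrix.mulVec, dotProduct,
        Fin.sum_univ_three]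
      rw [e00, e01, e02, e10, e11, e12, e20, e21, e22]
      set y : Fin 2 → ℝ := ![x 0, x 1] with hy
      have hq : ∀ z : Fin 2 → ℝ, dotProduct z (a.mulVec z)
          = z 0 * (a 0 0 * z 0 + a 0 1 * z 1) + z 1 * (a 1 0 * z 0 + a 1 1 * z 1) := by
        intro z
        simp [dotProduct, Matrix.mulVec, Fin.sum_univ_two]
      have hy0 : y 0 = x 0 := rfl
      have hy1 : y 1 = x 1 := rfl
      by_cases h2 : x 2 = 0
      · have hyne : y ≠ 0 := by
          intro h
          apply hx
          funext i
          fin_cases i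
          · simpa [hy0] using congrFun h 0
          · simpa [hy1] using congrFun h 1
          · exact h2
        have := hpos.dotProduct_mulVec_pos hyne
        rw [star_trivial, hq] at this
        simp only [hy0, hy1] at this
        nlinarith [sq_nonneg (x 2)]
      · have := hpos.posSemidef.dotProduct_mulVec_nonneg y
        rw [star_trivial, hq] at this
        simp only [hy0, hy1] at this
        nlinarith [sq_nonneg (x 2), mul_self_pos.mpr h2]
  constructor
  · -- the coercivity estimate
    obtain ⟨B, hB⟩ : ∃ B : Matrix (Fin 3) (Fin 3) ℝ, g = star B * B := by
      open scoped MatrixOrder Matrix.Norms.L2Operator in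
      exact CStarAlgebra.nonneg_iff_eq_star_mul_self.mp gPD.posSemidef.nonneg
    rw [Matrix.star_eq_conjTranspose, Matrix.conjTranspose_eq_transpose_of_trivial] at hB
    have hdetg : 0 < g.det := gPD.det_pos
    have hdet : B.det ≠ 0 := by
      intro h
      rw [hB, Matrix.det_mul, Matrix.det_transpose, h, mul_zero] at hdetg
      exact lt_irrefl _ hdetg
    have hu : IsUnit B.det := isUnit_iff_ne_zero.mpr hdet
    have huT : IsUnit Bᵀ.det := by rwa [Matrix.det_transpose]
    refine ⟨((∑ i, ∑ k, ((B⁻¹) i k)^2) * (∑ l, ∑ j, (((Bᵀ)⁻¹) l j)^2) + 1) / (2 * mu),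
      by positivity, ?_⟩
    intro t ht
    have t10 : t 1 0 = t 0 1 := ht.apply 0 1
    have t20 : t 2 0 = t 0 2 := ht.apply 0 2
    have t21 : t 2 1 = t 1 2 := ht.apply 1 2
    -- step A: algebraic expansion of the quadruple sum
    have key1 : ∑ i, ∑ j, ∑ k, ∑ l, A i j k l * t k l * t i j
        = lam * (∑ i, ∑ j, g i j * t i j)^2 + 2 * mu * ∑ i, ∑ j, (g * t * g) i j * t i j := by
      simp only [hA, Matrix.mul_apply, Fin.sum_univ_three]
      rw [t10, t20, t21, g10, g20, g21]
      ring
    -- step B: the middle sum is a sum of squares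
    have key2 : ∑ i, ∑ j, (g * t * g) i j * t i j = ∑ i, ∑ j, ((B * t * Bᵀ) i j)^2 := by
      have e1 : ∀ X Y : Matrix (Fin 3) (Fin 3) ℝ,
          ∑ i, ∑ j, X i j * Y i j = Matrix.trace (X * Yᵀ) := by
        intro X Y
        simp [Matrix.trace, Matrix.mul_apply, Matrix.diag]
      have e2 : ∀ X : Matrix (Fin 3) (Fin 3) ℝ,
          ∑ i, ∑ j, (X i j)^2 = Matrix.trace (X * Xᵀ) := by
        intro X
        rw [← e1]
        simp [sq]
      rw [e1, e2, ht.eq, Matrix.transpose_mul, Matrix.transpose_mul,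
        Matrix.transpose_transpose, ht.eq, hB]
      rw [show Bᵀ * B * t * (Bᵀ * B) * t = Bᵀ * (B * t * (Bᵀ * (B * t))) by
        simp only [Matrix.mul_assoc]]
      rw [Matrix.trace_mul_comm]
      congr 1
      simp only [Matrix.mul_assoc]
    -- step C: Cauchy–Schwarz bound
    have hfact : B⁻¹ * (B * t * Bᵀ) * (Bᵀ)⁻¹ = t := by
      rw [show B⁻¹ * (B * t * Bᵀ) * (Bᵀ)⁻¹ = (B⁻¹ * B) * (t * (Bᵀ * (Bᵀ)⁻¹)) by
        simp only [Matrix.mul_assoc], Matrix.nonsing_inv_mul B hu,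
        Matrix.mul_nonsing_inv Bᵀ huT, one_mul, mul_one]
    have key3 := aux_cs_stmt1 B⁻¹ (Bᵀ)⁻¹ (B * t * Bᵀ)
    rw [hfact] at key3
    simp only [sq_abs]
    rw [key1, key2]
    exact aux_final_stmt1 mu lam _ _ _ _ hmu (by positivity) (by positivity) hlam key3
  · -- component formulas
    have h3a : ∀ α : Fin 2, g α.castSucc 2 = 0 := fun α => (hg3 α).1
    have h3b : ∀ α : Fin 2, g 2 α.castSucc = 0 := fun α => (hg3 α).2
    intro α β σ τ
    refine ⟨?_, ?_, ?_, ?_, ?_, ?_⟩ <;>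
      simp [hA, hg, h3a, h3b, hg33] <;> ring
end

section
/- Let (a^{αβ}) be a symmetric positive definite 2×2 real matrix and let λ ≥ 0, μ > 0, θ ≥ 0, ρ ≥ 0 with θ + ρ > 0. Define a^{αβστ} := ((2λρ² + 4μθ²)/(θ + ρ)²) a^{αβ} a^{στ} + 2μ (a^{ασ} a^{βτ} + a^{ατ} a^{βσ}). Then there exists a constant c > 0 such that for every symmetric 2×2 real matrix t = (t_{αβ}): Σ_{α,β=1}^{2} a^{αβστ} t_{στ} t_{αβ} ≥ c · Σ_{α,β=1}^{2} |t_{αβ}|² (summation over σ, τ ∈ {1,2} understood). -/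
set_option maxHeartbeats 1000000

/-- trace of product of two PSD 2x2 symmetric matrices is nonneg (scalar form). -/
lemma trCB_nonneg (c11 c12 c22 b11 b12 b22 : ℝ) (hc1 : 0 ≤ c11) (hc2 : 0 ≤ c22)
    (hc : c12 ^ 2 ≤ c11 * c22) (hb1 : 0 ≤ b11) (hb2 : 0 ≤ b22) (hb : b12 ^ 2 ≤ b11 * b22) :
    0 ≤ c11 * b11 + 2 * c12 * b12 + c22 * b22 := by
  nlinarith [sq_nonneg (c11 * b11 - c22 * b22), sq_nonneg (c11 * b11 + c22 * b22),
    mul_nonneg hc1 hb1, mul_nonneg hc2 hb2, mul_nonneg (mul_nonneg hc1 hb1) (mul_nonneg hc2 hb2),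
    mul_le_mul hc hb (sq_nonneg b12) (mul_nonneg hc1 hc2), sq_nonneg (c12 * b12)]

/-- Uniform positive definiteness of the fourth-order two-dimensional elasticity tensor
`a^{αβστ}` of the limit viscoelastic flexural shell equations. -/
theorem stmt3 (a : Matrix (Fin 2) (Fin 2) ℝ) (hpos : a.PosDef) (hsym : a.IsSymm)
    (lam mu th rho : ℝ) (hlam : 0 ≤ lam) (hmu : 0 < mu) (hth : 0 ≤ th) (hrho : 0 ≤ rho)
    (hsum : 0 < th + rho)
    (A : Fin 2 → Fin 2 → Fin 2 → Fin 2 → ℝ)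
    (hA : ∀ α β σ τ, A α β σ τ =
      ((2 * lam * rho ^ 2 + 4 * mu * th ^ 2) / (th + rho) ^ 2) * a α β * a σ τ
        + 2 * mu * (a α σ * a β τ + a α τ * a β σ)) :
    ∃ c > 0, ∀ t : Matrix (Fin 2) (Fin 2) ℝ, t.IsSymm →
      c * ∑ α, ∑ β, |t α β| ^ 2 ≤ ∑ α, ∑ β, ∑ σ, ∑ τ, A α β σ τ * t σ τ * t α β := by
  set p := a 0 0 with hp'
  set q := a 0 1 with hq'
  set r := a 1 1 with hr'
  have ha10 : a 1 0 = q := hsym.apply 0 1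
  have hp : 0 < p := by
    have h1 : (![1, 0] : Fin 2 → ℝ) ≠ 0 := by
      intro h; simpa using congrFun h 0
    have := hpos.dotProduct_mulVec_pos h1
    simpa [Matrix.mulVec, dotProduct, Fin.sum_univ_two, ← hp'] using this
  have hr : 0 < r := by
    have h1 : (![0, 1] : Fin 2 → ℝ) ≠ 0 := by
      intro h; simpa using congrFun h 1
    have := hpos.dotProduct_mulVec_pos h1
    simpa [Matrix.mulVec, dotProduct, Fin.sum_univ_two, ← hr'] using this
  have hd : 0 < p * r - q ^ 2 := by
    have h0 := hpos.det_pos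
    rw [Matrix.det_fin_two, ha10] at h0
    nlinarith [h0]
  have hs : 0 < p + r := by linarith
  set K : ℝ := (2 * lam * rho ^ 2 + 4 * mu * th ^ 2) / (th + rho) ^ 2 with hK'
  have hK : 0 ≤ K := by positivity
  refine ⟨4 * mu * ((p * r - q ^ 2) / (p + r)) ^ 2, by positivity, ?_⟩
  intro t ht
  set x := t 0 0 with hx'
  set y := t 0 1 with hy'
  set z := t 1 1 with hz'
  have ht10 : t 1 0 = y := ht.apply 0 1
  -- entries of B = t * a * t
  have hB11 : 0 ≤ p * x ^ 2 + 2 * q * x * y + r * y ^ 2 := by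
    nlinarith [sq_nonneg (p * x + q * y), mul_nonneg hd.le (sq_nonneg y), hp]
  have hB22 : 0 ≤ p * y ^ 2 + 2 * q * y * z + r * z ^ 2 := by
    nlinarith [sq_nonneg (p * y + q * z), mul_nonneg hd.le (sq_nonneg z), hp]
  have hBdet : (p * x * y + q * x * z + q * y ^ 2 + r * y * z) ^ 2 ≤
      (p * x ^ 2 + 2 * q * x * y + r * y ^ 2) * (p * y ^ 2 + 2 * q * y * z + r * z ^ 2) := by
    nlinarith [mul_nonneg hd.le (sq_nonneg (x * z - y ^ 2))]
  -- C' = (p+r)•a - (pr-q²)•I is PSD, so tr(C' B) ≥ 0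
  have hC : 0 ≤ (p ^ 2 + q ^ 2) * (p * x ^ 2 + 2 * q * x * y + r * y ^ 2)
      + 2 * ((p + r) * q) * (p * x * y + q * x * z + q * y ^ 2 + r * y * z)
      + (r ^ 2 + q ^ 2) * (p * y ^ 2 + 2 * q * y * z + r * z ^ 2) := by
    refine trCB_nonneg _ _ _ _ _ _ (by positivity) (by positivity) ?_ hB11 hB22 hBdet
    nlinarith [sq_nonneg (p * r - q ^ 2)]
  -- step 1: (p+r) * tr(t a t) ≥ (pr-q²) * |t|²
  have h1 : (p * r - q ^ 2) * (x ^ 2 + 2 * y ^ 2 + z ^ 2) ≤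
      (p + r) * ((p * x ^ 2 + 2 * q * x * y + r * y ^ 2)
        + (p * y ^ 2 + 2 * q * y * z + r * z ^ 2)) := by
    nlinarith [sq_nonneg (p * x + q * y), sq_nonneg (q * x + r * y),
      sq_nonneg (p * y + q * z), sq_nonneg (q * y + r * z)]
  -- step 2: (p+r)² * tr(a t a t) ≥ (pr-q²)² * |t|²
  have h2 : (p * r - q ^ 2) ^ 2 * (x ^ 2 + 2 * y ^ 2 + z ^ 2) ≤
      (p + r) ^ 2 * (p * (p * x ^ 2 + 2 * q * x * y + r * y ^ 2)
        + 2 * q * (p * x * y + q * x * z + q * y ^ 2 + r * y * z)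
        + r * (p * y ^ 2 + 2 * q * y * z + r * z ^ 2)) := by
    nlinarith [mul_nonneg hs.le hC, mul_le_mul_of_nonneg_left h1 hd.le]
  have h3 : ((p * r - q ^ 2) / (p + r)) ^ 2 * (x ^ 2 + 2 * y ^ 2 + z ^ 2) ≤
      p * (p * x ^ 2 + 2 * q * x * y + r * y ^ 2)
        + 2 * q * (p * x * y + q * x * z + q * y ^ 2 + r * y * z)
        + r * (p * y ^ 2 + 2 * q * y * z + r * z ^ 2) := by
    rw [div_pow, div_mul_eq_mul_div, div_le_iff₀ (by positivity)]
    nlinarith [h2]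
  have h4 := mul_le_mul_of_nonneg_left h3 (by positivity : (0:ℝ) ≤ 4 * mu)
  simp only [hA, Fin.sum_univ_two, ha10, ht10, ← hp', ← hq', ← hr', ← hx', ← hy', ← hz',
    sq_abs, ← hK']
  linarith [h4, mul_nonneg hK (sq_nonneg (p * x + 2 * q * y + r * z))]
end

section
/- Let λ ≥ 0, μ > 0, θ > 0, ρ ≥ 0, T > 0, and set k := (λ + 2μ)/(θ + ρ) and Λ := λ/θ − (λ + 2μ)/(θ + ρ). Let E, F : [0,T] → ℝ be differentiable with E(0) = 0 and F(0) = 0, and suppose that λ E(t) + (λ + 2μ) F(t) + θ E′(t) + (θ + ρ) F′(t) = 0 for all t ∈ [0,T]. Then F(t) = −(θ/(θ + ρ)) ( E(t) + Λ ∫₀ᵗ e^{−k(t−s)} E(s) ds ) for all t ∈ [0,T]. -/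
/-- Solving the limit constitutive ODE linking the trace of the in-plane strain `E`
and the transverse strain `F` produces the exponential memory kernel. -/
theorem stmt6 (lam mu th rho T : ℝ) (hlam : 0 ≤ lam) (hmu : 0 < mu) (hth : 0 < th)
    (hrho : 0 ≤ rho) (hT : 0 < T)
    (k Λ : ℝ) (hk : k = (lam + 2 * mu) / (th + rho))
    (hΛ : Λ = lam / th - (lam + 2 * mu) / (th + rho))
    (E F E' F' : ℝ → ℝ) (hE0 : E 0 = 0) (hF0 : F 0 = 0)
    (hE : ∀ t ∈ Set.Icc (0 : ℝ) T, HasDerivWithinAt E (E' t) (Set.Icc 0 T) t)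
    (hF : ∀ t ∈ Set.Icc (0 : ℝ) T, HasDerivWithinAt F (F' t) (Set.Icc 0 T) t)
    (hode : ∀ t ∈ Set.Icc (0 : ℝ) T,
      lam * E t + (lam + 2 * mu) * F t + th * E' t + (th + rho) * F' t = 0) :
    ∀ t ∈ Set.Icc (0 : ℝ) T,
      F t = -(th / (th + rho)) *
        (E t + Λ * ∫ s in (0 : ℝ)..t, Real.exp (-k * (t - s)) * E s) := by
  have hthr : 0 < th + rho := by linarith
  set c : ℝ := th / (th + rho) with hc
  set Et : ℝ → ℝ := fun s => E (max 0 (min s T)) with hEt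
  have hprojmem : ∀ s : ℝ, max 0 (min s T) ∈ Set.Icc (0:ℝ) T := fun s =>
    ⟨le_max_left _ _, max_le hT.le (min_le_right _ _)⟩
  have hEcont : ContinuousOn E (Set.Icc 0 T) := fun t ht => (hE t ht).continuousWithinAt
  have hEtc : Continuous Et :=
    hEcont.comp_continuous (continuous_const.max (continuous_id.min continuous_const)) hprojmem
  have hEteq : ∀ s ∈ Set.Icc (0:ℝ) T, Et s = E s := by
    intro s hs
    simp only [hEt, min_eq_left hs.2, max_eq_right hs.1]
  set g : ℝ → ℝ := fun s => Real.exp (k * s) * Et s with hg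
  have hgc : Continuous g :=
    (Real.continuous_exp.comp (continuous_const.mul continuous_id)).mul hEtc
  set H : ℝ → ℝ := fun t =>
    Real.exp (k * t) * (F t + c * E t) + c * Λ * ∫ s in (0:ℝ)..t, g s with hH
  have hHd : ∀ t ∈ Set.Icc (0:ℝ) T, HasDerivWithinAt H 0 (Set.Icc 0 T) t := by
    intro t ht
    have hexp : HasDerivAt (fun t => Real.exp (k * t)) (Real.exp (k * t) * (k * 1)) t :=
      ((hasDerivAt_id t).const_mul k).exp
    have hint : HasDerivWithinAt (fun u => ∫ s in (0:ℝ)..u, g s) (g t) (Set.Icc 0 T) t :=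
      (hgc.integral_hasStrictDerivAt 0 t).hasDerivAt.hasDerivWithinAt
    have h1 := (hexp.hasDerivWithinAt.mul ((hF t ht).add ((hE t ht).const_mul c))).add
      (hint.const_mul (c * Λ))
    refine h1.congr_deriv ?_
    have hode' := hode t ht
    have hEt' := hEteq t ht
    have hthne : th ≠ 0 := hth.ne'
    have hthrne : th + rho ≠ 0 := hthr.ne'
    have inner : k * (F t + c * E t) + (F' t + c * E' t) + c * Λ * E t = 0 := by
      have h2 : k * (F t + c * E t) + (F' t + c * E' t) + c * Λ * E t
          = (lam * E t + (lam + 2 * mu) * F t + th * E' t + (th + rho) * F' t) / (th + rho) := by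
        rw [hk, hΛ, hc]; field_simp; ring
      rw [h2, hode', zero_div]
    have hgt : g t = Real.exp (k * t) * E t := by simp only [hg]; rw [hEt']
    rw [hgt, Pi.add_apply]
    linear_combination (Real.exp (k * t)) * inner
  have hHcont : ContinuousOn H (Set.Icc 0 T) := fun t ht => (hHd t ht).continuousWithinAt
  have hconst : ∀ t ∈ Set.Icc (0:ℝ) T, H t = H 0 := by
    intro t ht
    exact constant_of_has_deriv_right_zero hHcont
      (fun x hx => (hHd x (Set.mem_Icc_of_Ico hx)).mono_of_mem_nhdsWithin (Icc_mem_nhdsGE_of_mem hx)) t ht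
  have hH0 : H 0 = 0 := by simp [hH, hE0, hF0]
  intro t ht
  have hHt : H t = 0 := (hconst t ht).trans hH0
  have hInt : (∫ s in (0:ℝ)..t, Real.exp (-k * (t - s)) * E s)
      = Real.exp (-(k * t)) * ∫ s in (0:ℝ)..t, g s := by
    rw [← intervalIntegral.integral_const_mul]
    apply intervalIntegral.integral_congr
    intro s hs
    rw [Set.uIcc_of_le ht.1] at hs
    have he : Et s = E s := hEteq s ⟨hs.1, hs.2.trans ht.2⟩
    simp only [hg, he]
    have : -k * (t - s) = -(k * t) + k * s := by ring
    rw [this, Real.exp_add]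
    ring
  rw [hInt]
  simp only [hH] at hHt
  have hexpne : Real.exp (k * t) ≠ 0 := Real.exp_ne_zero _
  rw [Real.exp_neg]
  have h4 : F t + c * E t
      = -(c * Λ * ∫ s in (0:ℝ)..t, g s) * (Real.exp (k * t))⁻¹ := by
    field_simp
    linear_combination hHt
  linear_combination h4
end

section
/- Let ω ⊂ ℝ² be a bounded domain with boundary γ, let Ω := ω × (−1, 1), let p > 1, and let g ∈ Lᵖ(Ω) be such that ∫_Ω g ∂₃v dx = 0 for every function v that is the restriction to Ω of a C^∞ function on ℝ³ and satisfies v = 0 on γ × [−1, 1]. Then g = 0 almost everywhere in Ω. -/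
open MeasureTheory

open Set in
private lemma mom_int11 (h : ℝ → ℝ) (hint : Integrable h (volume.restrict (Ioo (-1:ℝ) 1)))
    (f : ℝ → ℝ) (hf : Continuous f) (C : ℝ) (hC : ∀ x ∈ Icc (-1:ℝ) 1, ‖f x‖ ≤ C) :
    Integrable (fun t => h t * f t) (volume.restrict (Ioo (-1:ℝ) 1)) := by
  have : Integrable (fun t => f t * h t) (volume.restrict (Ioo (-1:ℝ) 1)) := by
    refine hint.bdd_mul (c := C) (hf.aestronglyMeasurable) ?_
    filter_upwards [ae_restrict_mem measurableSet_Ioo] with t ht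
    exact hC t ⟨ht.1.le, ht.2.le⟩
  simpa [mul_comm] using this

open Set in
/-- 1D vanishing-moments lemma. -/
private lemma oned11 (h : ℝ → ℝ) (hint : Integrable h (volume.restrict (Ioo (-1:ℝ) 1)))
    (hmom : ∀ n : ℕ, ∫ t in Ioo (-1:ℝ) 1, h t * t ^ n = 0) :
    ∀ᵐ t ∂(volume.restrict (Ioo (-1:ℝ) 1)), h t = 0 := by
  have bnd : ∀ q : Polynomial ℝ, ∃ C, ∀ x ∈ Icc (-1:ℝ) 1, ‖q.eval x‖ ≤ C := fun q =>
    (isCompact_Icc (a := (-1:ℝ)) (b := 1)).exists_bound_of_continuousOn q.continuous.continuousOn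
  have intq : ∀ q : Polynomial ℝ,
      Integrable (fun t => h t * q.eval t) (volume.restrict (Ioo (-1:ℝ) 1)) := by
    intro q
    obtain ⟨C, hC⟩ := bnd q
    exact mom_int11 h hint _ q.continuous C hC
  have hpoly : ∀ q : Polynomial ℝ, ∫ t in Ioo (-1:ℝ) 1, h t * q.eval t = 0 := by
    intro q
    induction q using Polynomial.induction_on' with
    | add p r hp hr =>
        simp only [Polynomial.eval_add, mul_add]
        rw [integral_add (intq p) (intq r), hp, hr, add_zero]
    | monomial n a =>
        have : ∀ t : ℝ, h t * (Polynomial.monomial n a).eval t = a * (h t * t ^ n) := by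
          intro t; simp [Polynomial.eval_monomial]; ring
        simp only [this, integral_const_mul, hmom n, mul_zero]
  have hcont : ∀ f : ℝ → ℝ, Continuous f → ∫ t in Ioo (-1:ℝ) 1, h t * f t = 0 := by
    intro f hf
    set M := ∫ t in Ioo (-1:ℝ) 1, |h t| with hM
    have hM0 : 0 ≤ M := integral_nonneg fun t => abs_nonneg _
    have key : ∀ ε : ℝ, 0 < ε → |∫ t in Ioo (-1:ℝ) 1, h t * f t| ≤ ε * (M + 1) := by
      intro ε hε
      obtain ⟨q, hq⟩ := exists_polynomial_near_of_continuousOn (-1) 1 f hf.continuousOn ε hε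
      obtain ⟨Cf, hCf⟩ := (isCompact_Icc (a := (-1:ℝ)) (b := 1)).exists_bound_of_continuousOn
        hf.continuousOn
      have iff' : Integrable (fun t => h t * f t) (volume.restrict (Ioo (-1:ℝ) 1)) :=
        mom_int11 h hint f hf Cf hCf
      have heq : ∫ t in Ioo (-1:ℝ) 1, h t * f t
          = ∫ t in Ioo (-1:ℝ) 1, (h t * f t - h t * q.eval t) := by
        rw [integral_sub iff' (intq q), hpoly q, sub_zero]
      rw [heq]
      have hb : ∀ᵐ t ∂(volume.restrict (Ioo (-1:ℝ) 1)),
          ‖h t * f t - h t * q.eval t‖ ≤ ε * |h t| := by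
        filter_upwards [ae_restrict_mem measurableSet_Ioo] with t ht
        have h1 : |f t - q.eval t| ≤ ε := by
          rw [abs_sub_comm]; linarith [hq t ⟨ht.1.le, ht.2.le⟩]
        rw [← mul_sub, Real.norm_eq_abs, abs_mul]
        calc |h t| * |f t - q.eval t| ≤ |h t| * ε :=
              mul_le_mul_of_nonneg_left h1 (abs_nonneg _)
          _ = ε * |h t| := mul_comm _ _
      calc |∫ t in Ioo (-1:ℝ) 1, (h t * f t - h t * q.eval t)|
          ≤ ∫ t in Ioo (-1:ℝ) 1, ε * |h t| :=
            norm_integral_le_of_norm_le (hint.abs.const_mul ε) hb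
        _ = ε * M := by rw [integral_const_mul]
        _ ≤ ε * (M + 1) := by nlinarith
    by_contra hne
    have habs : 0 < |∫ t in Ioo (-1:ℝ) 1, h t * f t| := abs_pos.mpr hne
    set I := |∫ t in Ioo (-1:ℝ) 1, h t * f t| with hI
    have h2 := key (I / (2 * (M + 1))) (by positivity)
    have h3 : I ≤ I / 2 := by
      calc I ≤ I / (2 * (M + 1)) * (M + 1) := h2
        _ = I / 2 := by field_simp
    linarith
  have hdb : ∀ᵐ x ∂(volume : Measure ℝ), x ∈ Ioo (-1:ℝ) 1 → h x = 0 := by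
    apply (isOpen_Ioo (a := (-1:ℝ)) (b := 1)).ae_eq_zero_of_integral_contDiff_smul_eq_zero
      (IntegrableOn.locallyIntegrableOn hint)
    intro ψ hψ hψc hψs
    rw [← setIntegral_eq_integral_of_forall_compl_eq_zero
      (s := Ioo (-1:ℝ) 1) (fun x hx => by
        rw [image_eq_zero_of_notMem_tsupport (fun hc => hx (hψs hc)), zero_smul])]
    simpa [smul_eq_mul, mul_comm] using hcont ψ hψ.continuous
  exact (ae_restrict_iff' measurableSet_Ioo).2 hdb

open Set in
/-- Tensor-product test functions. -/
private lemma tensorA11 (ω : Set (Fin 2 → ℝ)) (hωo : IsOpen ω)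
    (g : (Fin 2 → ℝ) × ℝ → ℝ)
    (hdist : ∀ v : (Fin 2 → ℝ) × ℝ → ℝ, ContDiff ℝ (⊤ : ℕ∞) v →
      (∀ x ∈ (frontier ω) ×ˢ Set.Icc (-1 : ℝ) 1, v x = 0) →
      ∫ x in ω ×ˢ Set.Ioo (-1 : ℝ) 1, g x * fderiv ℝ v x (0, 1) = 0)
    (φ : (Fin 2 → ℝ) → ℝ) (hφ : ContDiff ℝ (⊤ : ℕ∞) φ) (hφs : tsupport φ ⊆ ω)
    (ψ : ℝ → ℝ) (hψ : ContDiff ℝ (⊤ : ℕ∞) ψ) :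
    ∫ x in ω ×ˢ Set.Ioo (-1 : ℝ) 1, g x * (φ x.1 * ψ x.2) = 0 := by
  set Ψ : ℝ → ℝ := fun s => ∫ t in (0:ℝ)..s, ψ t with hΨdef
  have hΨd : ∀ s : ℝ, HasDerivAt Ψ (ψ s) s := fun s =>
    (hψ.continuous.integral_hasStrictDerivAt 0 s).hasDerivAt
  have hΨ : ContDiff ℝ (⊤ : ℕ∞) Ψ := by
    rw [contDiff_infty_iff_deriv]
    refine ⟨fun s => (hΨd s).differentiableAt, ?_⟩
    have : deriv Ψ = ψ := funext fun s => (hΨd s).deriv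
    rw [this]
    exact hψ
  set v : (Fin 2 → ℝ) × ℝ → ℝ := fun x => φ x.1 * Ψ x.2 with hvdef
  have hv : ContDiff ℝ (⊤ : ℕ∞) v :=
    (hφ.comp contDiff_fst).mul (hΨ.comp contDiff_snd)
  have hvb : ∀ x ∈ (frontier ω) ×ˢ Set.Icc (-1 : ℝ) 1, v x = 0 := by
    rintro ⟨x', t⟩ ⟨hx', -⟩
    have : x' ∉ ω := fun hmem => (hωo.frontier_eq ▸ hx').2 hmem
    have : φ x' = 0 := image_eq_zero_of_notMem_tsupport fun hc => this (hφs hc)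
    simp [v, this]
  have hfd : ∀ x : (Fin 2 → ℝ) × ℝ, fderiv ℝ v x (0, 1) = φ x.1 * ψ x.2 := by
    intro x
    have hc : HasFDerivAt (fun y : (Fin 2 → ℝ) × ℝ => φ y.1)
        ((fderiv ℝ φ x.1).comp (ContinuousLinearMap.fst ℝ (Fin 2 → ℝ) ℝ)) x :=
      ((hφ.differentiable (by simp) x.1).hasFDerivAt).comp x hasFDerivAt_fst
    have hd : HasFDerivAt (fun y : (Fin 2 → ℝ) × ℝ => Ψ y.2)
        (((1 : ℝ →L[ℝ] ℝ).smulRight (ψ x.2)).comp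
          (ContinuousLinearMap.snd ℝ (Fin 2 → ℝ) ℝ)) x :=
      ((hΨd x.2).hasFDerivAt).comp x hasFDerivAt_snd
    have hmul := hc.mul hd
    rw [hvdef, show (fun x : (Fin 2 → ℝ) × ℝ => φ x.1 * Ψ x.2) = (fun y => φ y.1) * (fun y => Ψ y.2) from rfl, hmul.fderiv]
    simp [ContinuousLinearMap.smulRight_apply]
  have := hdist v hv hvb
  rw [show (fun x => g x * fderiv ℝ v x (0,1)) = fun x => g x * (φ x.1 * ψ x.2) from
    funext fun x => by rw [hfd x]] at this
  exact this

/-- If `g ∈ Lᵖ(Ω)`, `p > 1`, `Ω = ω × (−1,1)`, satisfies `∫_Ω g ∂₃v = 0` for every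
smooth `v` vanishing on the lateral face `γ × [−1,1]`, then `g = 0` a.e. in `Ω`. -/
theorem stmt11 (ω : Set (Fin 2 → ℝ)) (hωo : IsOpen ω) (hωb : Bornology.IsBounded ω)
    (hωc : IsConnected ω)
    (p : ENNReal) (hp : 1 < p)
    (g : (Fin 2 → ℝ) × ℝ → ℝ)
    (hg : MemLp g p (volume.restrict (ω ×ˢ Set.Ioo (-1 : ℝ) 1)))
    (hdist : ∀ v : (Fin 2 → ℝ) × ℝ → ℝ, ContDiff ℝ (⊤ : ℕ∞) v →
      (∀ x ∈ (frontier ω) ×ˢ Set.Icc (-1 : ℝ) 1, v x = 0) →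
      ∫ x in ω ×ˢ Set.Ioo (-1 : ℝ) 1, g x * fderiv ℝ v x (0, 1) = 0) :
    ∀ᵐ x ∂(volume.restrict (ω ×ˢ Set.Ioo (-1 : ℝ) 1)), g x = 0 := by
  have hmeasΩ : MeasurableSet (ω ×ˢ Set.Ioo (-1:ℝ) 1) :=
    hωo.measurableSet.prod measurableSet_Ioo
  haveI hfin2 : IsFiniteMeasure (volume.restrict ω) :=
    ⟨by rw [Measure.restrict_apply_univ]; exact hωb.measure_lt_top⟩
  set μ₂ := volume.restrict ω with hμ₂
  set μ₁ := volume.restrict (Set.Ioo (-1:ℝ) 1) with hμ₁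
  have hProd : volume.restrict (ω ×ˢ Set.Ioo (-1:ℝ) 1) = μ₂.prod μ₁ := by
    rw [Measure.volume_eq_prod, ← Measure.prod_restrict]
  haveI : IsFiniteMeasure (volume.restrict (ω ×ˢ Set.Ioo (-1:ℝ) 1)) := by
    rw [hProd]; infer_instance
  have hgInt : Integrable g (volume.restrict (ω ×ˢ Set.Ioo (-1:ℝ) 1)) := hg.integrable hp.le
  have hgIntP : Integrable g (μ₂.prod μ₁) := hProd ▸ hgInt
  -- integrability of `g z * z.2 ^ n`
  have hFn : ∀ n : ℕ, Integrable (fun z : (Fin 2 → ℝ) × ℝ => g z * z.2 ^ n) (μ₂.prod μ₁) := by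
    intro n
    have : Integrable (fun z : (Fin 2 → ℝ) × ℝ => z.2 ^ n * g z) (μ₂.prod μ₁) := by
      refine hgIntP.bdd_mul (c := 1)
        ((continuous_pow n).comp continuous_snd).aestronglyMeasurable ?_
      rw [← hProd]
      filter_upwards [ae_restrict_mem hmeasΩ] with z hz
      have h2 : |z.2| ≤ 1 := le_of_lt (abs_lt.2 ⟨hz.2.1, hz.2.2⟩)
      calc ‖z.2 ^ n‖ = |z.2| ^ n := by rw [Real.norm_eq_abs, abs_pow]
        _ ≤ 1 := pow_le_one₀ (abs_nonneg _) h2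
    simpa [mul_comm] using this
  -- vanishing of the moments as functions on ω
  have hGn : ∀ n : ℕ, ∀ᵐ x' ∂μ₂, (∫ t, g (x', t) * t ^ n ∂μ₁) = 0 := by
    intro n
    have hInt : Integrable (fun x' => ∫ t, g (x', t) * t ^ n ∂μ₁) μ₂ :=
      (hFn n).integral_prod_left
    have hdb : ∀ᵐ x' ∂(volume : Measure (Fin 2 → ℝ)),
        x' ∈ ω → (∫ t, g (x', t) * t ^ n ∂μ₁) = 0 := by
      apply hωo.ae_eq_zero_of_integral_contDiff_smul_eq_zero
        (IntegrableOn.locallyIntegrableOn hInt)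
      intro φ hφ hφc hφs
      rw [← setIntegral_eq_integral_of_forall_compl_eq_zero (s := ω) (fun x hx => by
        rw [image_eq_zero_of_notMem_tsupport (fun hc => hx (hφs hc)), zero_smul])]
      have hIntT : Integrable
          (fun z : (Fin 2 → ℝ) × ℝ => φ z.1 * (g z * z.2 ^ n)) (μ₂.prod μ₁) := by
        obtain ⟨C, hC⟩ := hφc.exists_bound_of_continuous hφ.continuous
        exact (hFn n).bdd_mul (c := C)
          (hφ.continuous.comp continuous_fst).aestronglyMeasurable
          (Filter.Eventually.of_forall fun z => hC z.1)
      have fub := integral_integral (f := fun (x : Fin 2 → ℝ) (t : ℝ) => φ x * (g (x, t) * t ^ n)) hIntT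
      calc ∫ x in ω, φ x • (∫ t, g (x, t) * t ^ n ∂μ₁)
          = ∫ x, (∫ t, φ x * (g (x, t) * t ^ n) ∂μ₁) ∂μ₂ := by
            refine integral_congr_ae (Filter.Eventually.of_forall fun x => ?_)
            show φ x • (∫ t, g (x, t) * t ^ n ∂μ₁) = ∫ t, φ x * (g (x, t) * t ^ n) ∂μ₁
            rw [smul_eq_mul, ← integral_const_mul]
        _ = ∫ z : (Fin 2 → ℝ) × ℝ, φ z.1 * (g z * z.2 ^ n) ∂(μ₂.prod μ₁) := fub
        _ = ∫ z in ω ×ˢ Set.Ioo (-1:ℝ) 1, g z * (φ z.1 * z.2 ^ n) := by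
            rw [← hProd]
            exact integral_congr_ae (Filter.Eventually.of_forall fun z => by ring)
        _ = 0 := tensorA11 ω hωo g hdist φ hφ hφs (fun t => t ^ n)
            (contDiff_id.pow n)
    exact (ae_restrict_iff' hωo.measurableSet).2 hdb
  -- slicewise conclusion
  have hslice : ∀ᵐ x' ∂μ₂, Integrable (fun t => g (x', t)) μ₁ := hgIntP.prod_right_ae
  have hmomae : ∀ᵐ x' ∂μ₂, ∀ n : ℕ, (∫ t, g (x', t) * t ^ n ∂μ₁) = 0 := ae_all_iff.2 hGn
  have hz : ∀ᵐ x' ∂μ₂, ∀ᵐ t ∂μ₁, g (x', t) = 0 := by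
    filter_upwards [hslice, hmomae] with x' h1 h2
    exact oned11 (fun t => g (x', t)) h1 h2
  -- from slicewise to product
  obtain ⟨g', hg'sm, hg'eq⟩ : ∃ g', StronglyMeasurable g' ∧
      g =ᵐ[volume.restrict (ω ×ˢ Set.Ioo (-1:ℝ) 1)] g' :=
    ⟨hg.aestronglyMeasurable.mk g, hg.aestronglyMeasurable.stronglyMeasurable_mk,
      hg.aestronglyMeasurable.ae_eq_mk⟩
  have heqP : g =ᵐ[μ₂.prod μ₁] g' := hProd ▸ hg'eq
  have heqslices := Measure.ae_ae_of_ae_prod heqP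
  have hz' : ∀ᵐ x' ∂μ₂, ∀ᵐ t ∂μ₁, g' (x', t) = 0 := by
    filter_upwards [hz, heqslices] with x' a b
    filter_upwards [a, b] with t ha hb
    rw [← hb]; exact ha
  have hSm : MeasurableSet {z : (Fin 2 → ℝ) × ℝ | g' z ≠ 0} :=
    hg'sm.measurable (measurableSet_singleton (0:ℝ)).compl
  have hS : (μ₂.prod μ₁) {z | g' z ≠ 0} = 0 := by
    rw [Measure.measure_prod_null hSm]
    filter_upwards [hz'] with x' hx'
    show μ₁ (Prod.mk x' ⁻¹' {z | g' z ≠ 0}) = 0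
    have : Prod.mk x' ⁻¹' {z : (Fin 2 → ℝ) × ℝ | g' z ≠ 0} = {t | ¬ g' (x', t) = 0} := rfl
    rw [this, ← ae_iff]
    exact hx'
  have hg'z : ∀ᵐ z ∂(μ₂.prod μ₁), g' z = 0 := by
    rw [ae_iff]; exact hS
  rw [hProd]
  filter_upwards [heqP, hg'z] with z h1 h2
  rw [h1]; exact h2
end

section
/- Let ω ⊂ ℝ² be a bounded domain and θ : closure(ω) → ℝ³ an injective C² mapping such that a_α := ∂_α θ are linearly independent at all points of closure(ω); let a₃ := (a₁ × a₂)/|a₁ × a₂|, Θ(y, x₃) := θ(y) + x₃ a₃(y), and let ε₀ > 0 be such that Θ is a C¹-diffeomorphism with det(∂₁Θ, ∂₂Θ, ∂₃Θ) > 0 on closure(ω) × [−ε₀, ε₀]. Let Ω := ω × (−1,1); for 0 < ε ≤ ε₀ and x = (y, x₃) ∈ closure(Ω) define g(ε)(x) := det( g_{ij}(y, εx₃) ), where g_{ij} := ∂_i Θ · ∂_j Θ, and let a(y) := det(a_{αβ}(y)) with a_{αβ} := a_α · a_β. Then: (i) there exists a₀ > 0 with a(y) ≥ a₀ for all y ∈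 closure(ω); (ii) there exists C > 0 such that |g(ε)(x) − a(y)| ≤ Cε for all x = (y,x₃) ∈ closure(Ω) and all 0 < ε ≤ ε₀; (iii) there exist constants g₀, g₁ > 0 such that g₀ ≤ g(ε)(x) ≤ g₁ for all x ∈ closure(Ω) and all ε with 0 < ε ≤ ε₀. -/
open Set

section helpers

lemma aux_mul3 (x y z x' y' z' M δ : ℝ) (hx : |x| ≤ M) (hy : |y| ≤ M) (hz : |z| ≤ M)
    (hx' : |x'| ≤ M) (hy' : |y'| ≤ M) (hz' : |z'| ≤ M)
    (h1 : |x - x'| ≤ δ) (h2 : |y - y'| ≤ δ) (h3 : |z - z'| ≤ δ) :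
    |x * y * z - x' * y' * z'| ≤ 3 * M ^ 2 * δ := by
  have hM : 0 ≤ M := le_trans (abs_nonneg x) hx
  have hδ : 0 ≤ δ := le_trans (abs_nonneg _) h1
  have e : x * y * z - x' * y' * z' = (x - x') * y * z + x' * (y - y') * z + x' * y' * (z - z') := by
    ring
  rw [e]
  have b1 : |(x - x') * y * z| ≤ δ * M * M := by
    rw [abs_mul, abs_mul]
    exact mul_le_mul (mul_le_mul h1 hy (abs_nonneg _) hδ) hz (abs_nonneg _) (mul_nonneg hδ hM)
  have b2 : |x' * (y - y') * z| ≤ M * δ * M := by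
    rw [abs_mul, abs_mul]
    exact mul_le_mul (mul_le_mul hx' h2 (abs_nonneg _) hM) hz (abs_nonneg _) (mul_nonneg hM hδ)
  have b3 : |x' * y' * (z - z')| ≤ M * M * δ := by
    rw [abs_mul, abs_mul]
    exact mul_le_mul (mul_le_mul hx' hy' (abs_nonneg _) hM) h3 (abs_nonneg _) (mul_nonneg hM hM)
  calc |(x - x') * y * z + x' * (y - y') * z + x' * y' * (z - z')|
      ≤ |(x - x') * y * z| + |x' * (y - y') * z| + |x' * y' * (z - z')| := abs_add_three _ _ _
    _ ≤ δ * M * M + M * δ * M + M * M * δ := by linarith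
    _ = 3 * M ^ 2 * δ := by ring

lemma det3_lip (A B : Matrix (Fin 3) (Fin 3) ℝ) (M δ : ℝ)
    (hA : ∀ i j, |A i j| ≤ M) (hB : ∀ i j, |B i j| ≤ M)
    (hd : ∀ i j, |A i j - B i j| ≤ δ) :
    |A.det - B.det| ≤ 18 * M ^ 2 * δ := by
  rw [Matrix.det_fin_three, Matrix.det_fin_three]
  have t1 := abs_le.1 (aux_mul3 (A 0 0) (A 1 1) (A 2 2) (B 0 0) (B 1 1) (B 2 2) M δ
    (hA _ _) (hA _ _) (hA _ _) (hB _ _) (hB _ _) (hB _ _) (hd _ _) (hd _ _) (hd _ _))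
  have t2 := abs_le.1 (aux_mul3 (A 0 0) (A 1 2) (A 2 1) (B 0 0) (B 1 2) (B 2 1) M δ
    (hA _ _) (hA _ _) (hA _ _) (hB _ _) (hB _ _) (hB _ _) (hd _ _) (hd _ _) (hd _ _))
  have t3 := abs_le.1 (aux_mul3 (A 0 1) (A 1 0) (A 2 2) (B 0 1) (B 1 0) (B 2 2) M δ
    (hA _ _) (hA _ _) (hA _ _) (hB _ _) (hB _ _) (hB _ _) (hd _ _) (hd _ _) (hd _ _))
  have t4 := abs_le.1 (aux_mul3 (A 0 1) (A 1 2) (A 2 0) (B 0 1) (B 1 2) (B 2 0) M δ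
    (hA _ _) (hA _ _) (hA _ _) (hB _ _) (hB _ _) (hB _ _) (hd _ _) (hd _ _) (hd _ _))
  have t5 := abs_le.1 (aux_mul3 (A 0 2) (A 1 0) (A 2 1) (B 0 2) (B 1 0) (B 2 1) M δ
    (hA _ _) (hA _ _) (hA _ _) (hB _ _) (hB _ _) (hB _ _) (hd _ _) (hd _ _) (hd _ _))
  have t6 := abs_le.1 (aux_mul3 (A 0 2) (A 1 1) (A 2 0) (B 0 2) (B 1 1) (B 2 0) M δ
    (hA _ _) (hA _ _) (hA _ _) (hB _ _) (hB _ _) (hB _ _) (hd _ _) (hd _ _) (hd _ _))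
  rw [abs_le]
  constructor <;> linarith [t1.1, t1.2, t2.1, t2.2, t3.1, t3.2, t4.1, t4.2, t5.1, t5.2, t6.1, t6.2]

lemma cross_ne_zero (u v : Fin 3 → ℝ) (h : LinearIndependent ℝ ![u, v])
    (hA : u 1 * v 2 - u 2 * v 1 = 0) (hB : u 2 * v 0 - u 0 * v 2 = 0)
    (hC : u 0 * v 1 - u 1 * v 0 = 0) : False := by
  rw [linearIndependent_fin2] at h
  simp only [Matrix.cons_val_one, Matrix.head_cons, Matrix.cons_val_zero] at h
  obtain ⟨hv, hsv⟩ := h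
  obtain ⟨k, hk⟩ := Function.ne_iff.1 hv
  simp only [Pi.zero_apply] at hk
  apply hsv (u k / v k)
  funext i
  have e2 : (⟨2, by omega⟩ : Fin 3) = 2 := rfl
  have e1 : (⟨1, by omega⟩ : Fin 3) = 1 := rfl
  have e0 : (⟨0, by omega⟩ : Fin 3) = 0 := rfl
  simp only [Pi.smul_apply, smul_eq_mul]
  fin_cases k <;> fin_cases i <;>
    simp only [e0, e1, e2] at hk ⊢ <;> field_simp <;> linarith

lemma aux_entry (bi bj di dj t Cb Cd e : ℝ) (h1 : |bi| ≤ Cb) (h2 : |bj| ≤ Cb)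
    (h3 : |di| ≤ Cd) (h4 : |dj| ≤ Cd) (ht : |t| ≤ e) :
    |bi * dj + di * bj + t * (di * dj)| ≤ 2 * (Cb * Cd) + e * (Cd * Cd) := by
  have hCb : 0 ≤ Cb := le_trans (abs_nonneg _) h1
  have hCd : 0 ≤ Cd := le_trans (abs_nonneg _) h3
  have b1 : |bi * dj| ≤ Cb * Cd := by
    rw [abs_mul]; exact mul_le_mul h1 h4 (abs_nonneg _) hCb
  have b2 : |di * bj| ≤ Cd * Cb := by
    rw [abs_mul]; exact mul_le_mul h3 h2 (abs_nonneg _) hCd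
  have b3 : |t * (di * dj)| ≤ e * (Cd * Cd) := by
    rw [abs_mul, abs_mul]
    exact mul_le_mul ht (mul_le_mul h3 h4 (abs_nonneg _) hCd)
      (mul_nonneg (abs_nonneg _) (abs_nonneg _)) (le_trans (abs_nonneg _) ht)
  calc |bi * dj + di * bj + t * (di * dj)|
      ≤ |bi * dj| + |di * bj| + |t * (di * dj)| := abs_add_three _ _ _
    _ ≤ 2 * (Cb * Cd) + e * (Cd * Cd) := by linarith

end helpers

/-- Bounds for the scaled volume-element density `g(ε)` of a thin shell: positivity of the
area element `a = det(a_{αβ})`, the estimate `g(ε) = a + O(ε)`, and uniform two-sided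
positive bounds `0 < g₀ ≤ g(ε) ≤ g₁` on the fixed domain, for all `0 < ε ≤ ε₀`. -/
theorem stmt12 (ω : Set (Fin 2 → ℝ)) (hωo : IsOpen ω) (hωb : Bornology.IsBounded ω)
    (hωc : IsConnected ω)
    (U : Set (Fin 2 → ℝ)) (hUo : IsOpen U) (hωU : closure ω ⊆ U)
    (θ : (Fin 2 → ℝ) → Fin 3 → ℝ) (hθ : ContDiffOn ℝ 2 θ U) (hθinj : InjOn θ (closure ω))
    (a : Fin 2 → (Fin 2 → ℝ) → Fin 3 → ℝ)
    (ha : ∀ α y, a α y = fderiv ℝ θ y (Pi.single α 1))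
    (hind : ∀ y ∈ closure ω, LinearIndependent ℝ ![a 0 y, a 1 y])
    (c : (Fin 2 → ℝ) → Fin 3 → ℝ)
    (hc : ∀ y, c y = ![a 0 y 1 * a 1 y 2 - a 0 y 2 * a 1 y 1,
                       a 0 y 2 * a 1 y 0 - a 0 y 0 * a 1 y 2,
                       a 0 y 0 * a 1 y 1 - a 0 y 1 * a 1 y 0])
    (a3 : (Fin 2 → ℝ) → Fin 3 → ℝ)
    (ha3 : ∀ y, a3 y = (Real.sqrt (∑ i, c y i ^ 2))⁻¹ • c y)
    (Θ : (Fin 2 → ℝ) × ℝ → Fin 3 → ℝ)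
    (hΘ : ∀ p, Θ p = θ p.1 + p.2 • a3 p.1)
    (gvec : Fin 3 → ((Fin 2 → ℝ) × ℝ) → Fin 3 → ℝ)
    (hgvec0 : ∀ p, gvec 0 p = fderiv ℝ Θ p (Pi.single 0 1, 0))
    (hgvec1 : ∀ p, gvec 1 p = fderiv ℝ Θ p (Pi.single 1 1, 0))
    (hgvec2 : ∀ p, gvec 2 p = fderiv ℝ Θ p (0, 1))
    (ε₀ : ℝ) (hε₀ : 0 < ε₀)
    (hΘinj : InjOn Θ (closure ω ×ˢ Icc (-ε₀) ε₀))
    (hΘC1 : ContDiffOn ℝ 1 Θ (closure ω ×ˢ Icc (-ε₀) ε₀))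
    (hdet : ∀ p ∈ closure ω ×ˢ Icc (-ε₀) ε₀,
      0 < (Matrix.of fun i j => gvec j p i : Matrix (Fin 3) (Fin 3) ℝ).det)
    (G : ((Fin 2 → ℝ) × ℝ) → Matrix (Fin 3) (Fin 3) ℝ)
    (hG : ∀ p i j, G p i j = ∑ m, gvec i p m * gvec j p m)
    (gdet : ℝ → ((Fin 2 → ℝ) × ℝ) → ℝ)
    (hgdet : ∀ ε p, gdet ε p = (G (p.1, ε * p.2)).det)
    (amat : (Fin 2 → ℝ) → Matrix (Fin 2) (Fin 2) ℝ)
    (hamat : ∀ y α β, amat y α β = ∑ m, a α y m * a β y m)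
    (adet : (Fin 2 → ℝ) → ℝ) (hadet : ∀ y, adet y = (amat y).det) :
    (∃ a₀ > (0 : ℝ), ∀ y ∈ closure ω, a₀ ≤ adet y) ∧
    (∃ C > (0 : ℝ), ∀ ε : ℝ, 0 < ε → ε ≤ ε₀ →
      ∀ p ∈ closure ω ×ˢ Icc (-1 : ℝ) 1, |gdet ε p - adet p.1| ≤ C * ε) ∧
    (∃ g₀ > (0 : ℝ), ∃ g₁ > (0 : ℝ), ∀ ε : ℝ, 0 < ε → ε ≤ ε₀ →
      ∀ p ∈ closure ω ×ˢ Icc (-1 : ℝ) 1, g₀ ≤ gdet ε p ∧ gdet ε p ≤ g₁) := by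
  classical
  set K := closure ω with hK
  have hKcl : IsClosed K := isClosed_closure
  have hKc : IsCompact K := Metric.isCompact_of_isClosed_isBounded hKcl hωb.closure
  have hKne : K.Nonempty := hωc.nonempty.closure
  -- the scalar field q = |c|²
  set q : (Fin 2 → ℝ) → ℝ := fun y => ∑ i, c y i ^ 2 with hq
  -- Lagrange identity : adet = q
  have hlag : ∀ y, adet y = q y := by
    intro y
    rw [hadet, Matrix.det_fin_two, hamat, hamat, hamat, hamat, hq]
    simp only [Fin.sum_univ_three, hc, Matrix.cons_val_zero, Matrix.cons_val_one,
      Matrix.head_cons, Matrix.cons_val_two, Matrix.tail_cons]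
    ring
  -- regularity of a, c, q
  have hθ1 : ContDiffOn ℝ 1 θ U := hθ.of_le (by norm_num)
  have hDθ : ContDiffOn ℝ 1 (fun y => fderiv ℝ θ y) U := hθ.fderiv_of_isOpen hUo (by norm_num)
  have haC : ∀ α, ContDiffOn ℝ 1 (a α) U := by
    intro α
    have h1 : ContDiffOn ℝ 1 (fun y => (fderiv ℝ θ y) (Pi.single α 1)) U :=
      hDθ.clm_apply contDiffOn_const
    exact h1.congr fun y _ => ha α y
  have haCm : ∀ α m, ContDiffOn ℝ 1 (fun y => a α y m) U := by
    intro α m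
    exact (ContinuousLinearMap.proj (R := ℝ) (φ := fun _ : Fin 3 => ℝ) m).contDiff.comp_contDiffOn
      (haC α)
  have hcC : ContDiffOn ℝ 1 c U := by
    have h1 : ContDiffOn ℝ 1 (fun y => (![a 0 y 1 * a 1 y 2 - a 0 y 2 * a 1 y 1,
        a 0 y 2 * a 1 y 0 - a 0 y 0 * a 1 y 2,
        a 0 y 0 * a 1 y 1 - a 0 y 1 * a 1 y 0] : Fin 3 → ℝ)) U := by
      rw [contDiffOn_pi]
      intro i
      fin_cases i <;>
        simp only [Matrix.cons_val_zero, Matrix.cons_val_one, Matrix.head_cons,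
          Matrix.cons_val_two, Matrix.tail_cons] <;>
        exact ((haCm _ _).mul (haCm _ _)).sub ((haCm _ _).mul (haCm _ _))
    exact h1.congr fun y _ => hc y
  have hcCm : ∀ m, ContDiffOn ℝ 1 (fun y => c y m) U := by
    intro m
    exact (ContinuousLinearMap.proj (R := ℝ) (φ := fun _ : Fin 3 => ℝ) m).contDiff.comp_contDiffOn
      hcC
  have hqC : ContDiffOn ℝ 1 q U := by
    rw [hq]
    exact ContDiffOn.sum fun i _ => (hcCm i).pow 2
  -- positivity of q on K
  have hqpos : ∀ y ∈ K, 0 < q y := by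
    intro y hy
    rcases lt_or_eq_of_le (show (0:ℝ) ≤ q y by
      rw [hq]; positivity) with h | h
    · exact h
    · exfalso
      have hsum : c y 0 ^ 2 + c y 1 ^ 2 + c y 2 ^ 2 = 0 := by
        have h' : q y = 0 := h.symm
        rw [← h']
        exact (Fin.sum_univ_three fun i => c y i ^ 2).symm
      have h0 : c y 0 = 0 := by
        nlinarith [sq_nonneg (c y 0), sq_nonneg (c y 1), sq_nonneg (c y 2)]
      have h1 : c y 1 = 0 := by
        nlinarith [sq_nonneg (c y 0), sq_nonneg (c y 1), sq_nonneg (c y 2)]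
      have h2 : c y 2 = 0 := by
        nlinarith [sq_nonneg (c y 0), sq_nonneg (c y 1), sq_nonneg (c y 2)]
      rw [hc] at h0 h1 h2
      simp only [Matrix.cons_val_zero, Matrix.cons_val_one, Matrix.head_cons,
        Matrix.cons_val_two, Matrix.tail_cons] at h0 h1 h2
      exact cross_ne_zero _ _ (hind y hy) h0 h1 h2
  -- the open neighbourhood V of K where c ≠ 0
  set V : Set (Fin 2 → ℝ) := U ∩ q ⁻¹' Ioi 0 with hV
  have hVU : V ⊆ U := inter_subset_left
  have hVo : IsOpen V := hqC.continuousOn.isOpen_inter_preimage hUo isOpen_Ioi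
  have hKV : K ⊆ V := fun y hy => ⟨hωU hy, hqpos y hy⟩
  have hqposV : ∀ y ∈ V, 0 < q y := fun y hy => hy.2
  -- a3 is C¹ on V
  have hsqinv : ContDiffOn ℝ 1 (fun y => (Real.sqrt (q y))⁻¹) V := by
    intro y hy
    have h1 : ContDiffWithinAt ℝ 1 q V y := (hqC.mono hVU) y hy
    have h2 : ContDiffAt ℝ 1 Real.sqrt (q y) := Real.contDiffAt_sqrt (ne_of_gt (hqposV y hy))
    have h3 : ContDiffWithinAt ℝ 1 (fun y => Real.sqrt (q y)) V y := h2.comp_contDiffWithinAt y h1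
    exact h3.inv (ne_of_gt (Real.sqrt_pos.2 (hqposV y hy)))
  have ha3C : ContDiffOn ℝ 1 a3 V := by
    have h1 : ContDiffOn ℝ 1 (fun y => (Real.sqrt (q y))⁻¹ • c y) V :=
      hsqinv.smul (hcC.mono hVU)
    exact h1.congr fun y _ => ha3 y
  have hDa3 : ContinuousOn (fun y => fderiv ℝ a3 y) V :=
    ha3C.continuousOn_fderiv_of_isOpen hVo le_rfl
  -- the derivative of Θ
  have hΘfun : Θ = fun p : (Fin 2 → ℝ) × ℝ => θ p.1 + p.2 • a3 p.1 := funext hΘ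
  have keyD : ∀ y ∈ V, ∀ t : ℝ,
      HasFDerivAt Θ
        (((fderiv ℝ θ y).comp (ContinuousLinearMap.fst ℝ (Fin 2 → ℝ) ℝ)) +
          (t • ((fderiv ℝ a3 y).comp (ContinuousLinearMap.fst ℝ (Fin 2 → ℝ) ℝ)) +
            (ContinuousLinearMap.snd ℝ (Fin 2 → ℝ) ℝ).smulRight (a3 y))) (y, t) := by
    intro y hy t
    have hθd : HasFDerivAt θ (fderiv ℝ θ y) y :=
      ((hθ1.differentiableOn one_ne_zero).differentiableAt (hUo.mem_nhds (hVU hy))).hasFDerivAt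
    have ha3d : HasFDerivAt a3 (fderiv ℝ a3 y) y :=
      ((ha3C.differentiableOn one_ne_zero).differentiableAt (hVo.mem_nhds hy)).hasFDerivAt
    have h1 : HasFDerivAt (fun p : (Fin 2 → ℝ) × ℝ => θ p.1)
        ((fderiv ℝ θ y).comp (ContinuousLinearMap.fst ℝ (Fin 2 → ℝ) ℝ)) (y, t) :=
      hθd.comp (y, t) hasFDerivAt_fst
    have h2 : HasFDerivAt (fun p : (Fin 2 → ℝ) × ℝ => a3 p.1)
        ((fderiv ℝ a3 y).comp (ContinuousLinearMap.fst ℝ (Fin 2 → ℝ) ℝ)) (y, t) :=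
      ha3d.comp (y, t) hasFDerivAt_fst
    have h3 : HasFDerivAt (fun p : (Fin 2 → ℝ) × ℝ => p.2)
        (ContinuousLinearMap.snd ℝ (Fin 2 → ℝ) ℝ) (y, t) := hasFDerivAt_snd
    have h4 := h3.smul h2
    have h5 := h1.add h4
    rw [hΘfun]
    exact h5
  -- the tangent vector fields
  set d : Fin 2 → (Fin 2 → ℝ) → Fin 3 → ℝ := fun α y => fderiv ℝ a3 y (Pi.single α 1) with hd
  set gb : Fin 3 → (Fin 2 → ℝ) → Fin 3 → ℝ := ![a 0, a 1, a3] with hgb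
  set gd : Fin 3 → (Fin 2 → ℝ) → Fin 3 → ℝ := ![d 0, d 1, fun _ => 0] with hgd
  have hgvecV : ∀ i : Fin 3, ∀ y ∈ V, ∀ t : ℝ, ∀ m : Fin 3,
      gvec i (y, t) m = gb i y m + t * gd i y m := by
    intro i y hy t m
    have hf := (keyD y hy t).fderiv
    fin_cases i
    · rw [show ((⟨0, by omega⟩ : Fin 3)) = 0 from rfl, hgvec0 (y, t), hf]
      simp only [ContinuousLinearMap.add_apply, ContinuousLinearMap.coe_comp',
        Function.comp_apply, ContinuousLinearMap.coe_fst', ContinuousLinearMap.coe_smul',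
        Pi.smul_apply, ContinuousLinearMap.smulRight_apply, ContinuousLinearMap.coe_snd']
      rw [hgb, hgd]
      simp only [Matrix.cons_val_zero, Pi.add_apply, Pi.smul_apply, smul_eq_mul, zero_smul,
        add_zero, hd]
      rw [ha 0 y]
    · rw [show ((⟨1, by omega⟩ : Fin 3)) = 1 from rfl, hgvec1 (y, t), hf]
      simp only [ContinuousLinearMap.add_apply, ContinuousLinearMap.coe_comp',
        Function.comp_apply, ContinuousLinearMap.coe_fst', ContinuousLinearMap.coe_smul',
        Pi.smul_apply, ContinuousLinearMap.smulRight_apply, ContinuousLinearMap.coe_snd']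
      rw [hgb, hgd]
      simp only [Matrix.cons_val_one, Matrix.head_cons, Matrix.cons_val_zero, Pi.add_apply, Pi.smul_apply,
        smul_eq_mul, zero_smul, add_zero, hd]
      rw [ha 1 y]
    · rw [show ((⟨2, by omega⟩ : Fin 3)) = 2 from rfl, hgvec2 (y, t), hf]
      simp only [ContinuousLinearMap.add_apply, ContinuousLinearMap.coe_comp',
        Function.comp_apply, ContinuousLinearMap.coe_fst', ContinuousLinearMap.coe_smul',
        Pi.smul_apply, ContinuousLinearMap.smulRight_apply, ContinuousLinearMap.coe_snd']
      rw [hgb, hgd]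
      simp only [Matrix.cons_val_two, Matrix.tail_cons, Matrix.head_cons, map_zero,
        Pi.add_apply, Pi.smul_apply, Pi.zero_apply, smul_eq_mul, mul_zero, one_smul]
      simp
  -- the matrix field Gm, agreeing with G on V × ℝ
  set Gm : ((Fin 2 → ℝ) × ℝ) → Matrix (Fin 3) (Fin 3) ℝ := fun p =>
    Matrix.of fun i j => ∑ m, (gb i p.1 m + p.2 * gd i p.1 m) * (gb j p.1 m + p.2 * gd j p.1 m)
    with hGm
  have hGmapp : ∀ p : (Fin 2 → ℝ) × ℝ, ∀ i j,
      Gm p i j = ∑ m, (gb i p.1 m + p.2 * gd i p.1 m) * (gb j p.1 m + p.2 * gd j p.1 m) :=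
    fun p i j => rfl
  have hGeq : ∀ p : (Fin 2 → ℝ) × ℝ, p.1 ∈ V → G p = Gm p := by
    rintro ⟨y, t⟩ hp1
    ext i j
    rw [hG, hGmapp]
    exact Finset.sum_congr rfl fun m _ => by
      rw [hgvecV i y hp1 t m, hgvecV j y hp1 t m]
  -- continuity of the entries
  have hfstC : ∀ f : (Fin 2 → ℝ) → ℝ, ContinuousOn f V →
      ContinuousOn (fun p : (Fin 2 → ℝ) × ℝ => f p.1) (V ×ˢ (univ : Set ℝ)) :=
    fun f hf => hf.comp continuousOn_fst fun p hp => hp.1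
  have hgbC : ∀ i m, ContinuousOn (fun y => gb i y m) V := by
    intro i m
    fin_cases i
    · exact ((haCm 0 m).continuousOn).mono hVU
    · exact ((haCm 1 m).continuousOn).mono hVU
    · exact (continuous_apply m).comp_continuousOn ha3C.continuousOn
  have hgdC : ∀ i m, ContinuousOn (fun y => gd i y m) V := by
    intro i m
    have hdC : ∀ α : Fin 2, ContinuousOn (fun y => d α y m) V := by
      intro α
      have h1 : ContinuousOn (fun y => fderiv ℝ a3 y (Pi.single α 1)) V :=
        hDa3.clm_apply continuousOn_const
      exact (continuous_apply m).comp_continuousOn h1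
    fin_cases i
    · exact hdC 0
    · exact hdC 1
    · exact continuousOn_const
  have hGmentC : ∀ i j, ContinuousOn (fun p => Gm p i j) (V ×ˢ (univ : Set ℝ)) := by
    intro i j
    have : ContinuousOn (fun p : (Fin 2 → ℝ) × ℝ =>
        ∑ m, (gb i p.1 m + p.2 * gd i p.1 m) * (gb j p.1 m + p.2 * gd j p.1 m))
        (V ×ˢ (univ : Set ℝ)) := by
      apply continuousOn_finset_sum
      intro m _
      exact ((hfstC _ (hgbC i m)).add
        ((continuous_snd.continuousOn).mul (hfstC _ (hgdC i m)))).mul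
        ((hfstC _ (hgbC j m)).add
        ((continuous_snd.continuousOn).mul (hfstC _ (hgdC j m))))
    exact this.congr fun p _ => hGmapp p i j
  have hGmdetC : ContinuousOn (fun p => (Gm p).det) (V ×ˢ (univ : Set ℝ)) := by
    have heq : (fun p : (Fin 2 → ℝ) × ℝ => (Gm p).det) = fun p =>
        Gm p 0 0 * Gm p 1 1 * Gm p 2 2 - Gm p 0 0 * Gm p 1 2 * Gm p 2 1 -
          Gm p 0 1 * Gm p 1 0 * Gm p 2 2 + Gm p 0 1 * Gm p 1 2 * Gm p 2 0 +
          Gm p 0 2 * Gm p 1 0 * Gm p 2 1 - Gm p 0 2 * Gm p 1 1 * Gm p 2 0 :=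
      funext fun p => Matrix.det_fin_three (Gm p)
    rw [heq]
    exact (((((((hGmentC 0 0).mul (hGmentC 1 1)).mul (hGmentC 2 2)).sub
      (((hGmentC 0 0).mul (hGmentC 1 2)).mul (hGmentC 2 1))).sub
      (((hGmentC 0 1).mul (hGmentC 1 0)).mul (hGmentC 2 2))).add
      (((hGmentC 0 1).mul (hGmentC 1 2)).mul (hGmentC 2 0))).add
      (((hGmentC 0 2).mul (hGmentC 1 0)).mul (hGmentC 2 1))).sub
      (((hGmentC 0 2).mul (hGmentC 1 1)).mul (hGmentC 2 0))
  -- the compact set Q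
  set Q : Set ((Fin 2 → ℝ) × ℝ) := K ×ˢ Icc (-ε₀) ε₀ with hQdef
  have hQc : IsCompact Q := hKc.prod isCompact_Icc
  have hQW : Q ⊆ V ×ˢ (univ : Set ℝ) := prod_mono hKV (subset_univ _)
  have hQne : Q.Nonempty := by
    obtain ⟨y₀, hy₀⟩ := hKne
    have h0 : (0:ℝ) ∈ Icc (-ε₀) ε₀ := mem_Icc.2 ⟨by linarith, by linarith⟩
    exact ⟨(y₀, 0), ⟨hy₀, h0⟩⟩
  -- orthonormality relations at t = 0
  have hGm0 : ∀ y ∈ V, (Gm (y, (0:ℝ))).det = adet y := by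
    intro y hy
    have ha3m : ∀ m, a3 y m = (Real.sqrt (q y))⁻¹ * c y m := by
      intro m
      rw [ha3]
      simp [hq]
    have hca : ∀ α : Fin 2, c y 0 * a α y 0 + c y 1 * a α y 1 + c y 2 * a α y 2 = 0 := by
      intro α
      have f0 : (⟨0, by omega⟩ : Fin 2) = 0 := rfl
      have f1 : (⟨1, by omega⟩ : Fin 2) = 1 := rfl
      fin_cases α <;>
        simp only [f0, f1, hc, Matrix.cons_val_zero, Matrix.cons_val_one, Matrix.head_cons,
          Matrix.cons_val_two, Matrix.tail_cons] <;>
        ring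
    have h3a : ∀ α : Fin 2, ∑ m, a3 y m * a α y m = 0 := by
      intro α
      rw [Fin.sum_univ_three, ha3m 0, ha3m 1, ha3m 2]
      have := hca α
      calc (Real.sqrt (q y))⁻¹ * c y 0 * a α y 0 + (Real.sqrt (q y))⁻¹ * c y 1 * a α y 1 +
            (Real.sqrt (q y))⁻¹ * c y 2 * a α y 2
          = (Real.sqrt (q y))⁻¹ * (c y 0 * a α y 0 + c y 1 * a α y 1 + c y 2 * a α y 2) := by
            ring
        _ = 0 := by rw [this, mul_zero]
    have hao : ∀ α : Fin 2, ∑ m, a α y m * a3 y m = 0 := by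
      intro α
      rw [show (∑ m, a α y m * a3 y m) = ∑ m, a3 y m * a α y m from
        Finset.sum_congr rfl fun m _ => mul_comm _ _]
      exact h3a α
    have h33 : ∑ m, a3 y m * a3 y m = 1 := by
      have hqy : 0 < q y := hqposV y hy
      have hs := Real.mul_self_sqrt hqy.le
      have hspos : 0 < Real.sqrt (q y) := Real.sqrt_pos.2 hqy
      have e1 : ∑ m, a3 y m * a3 y m
          = (Real.sqrt (q y))⁻¹ * (Real.sqrt (q y))⁻¹ * (c y 0 ^ 2 + c y 1 ^ 2 + c y 2 ^ 2) := by
        rw [Fin.sum_univ_three, ha3m 0, ha3m 1, ha3m 2]; ring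
      have e2 : c y 0 ^ 2 + c y 1 ^ 2 + c y 2 ^ 2 = q y :=
        (Fin.sum_univ_three fun i => c y i ^ 2).symm
      rw [e1, e2, ← hs]
      field_simp
      rw [Real.sqrt_sq hspos.le]
    have hb : ∀ i j : Fin 3, Gm (y, (0:ℝ)) i j = ∑ m, gb i y m * gb j y m := by
      intro i j
      rw [hGmapp]
      simp
    rw [Matrix.det_fin_three, hb 0 0, hb 0 1, hb 0 2, hb 1 0, hb 1 1, hb 1 2, hb 2 0,
      hb 2 1, hb 2 2]
    rw [hgb]
    simp only [Matrix.cons_val_zero, Matrix.cons_val_one, Matrix.head_cons,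
      Matrix.cons_val_two, Matrix.tail_cons]
    rw [h33, h3a 0, h3a 1, hao 0, hao 1, ← hamat y 0 0, ← hamat y 0 1, ← hamat y 1 0,
      ← hamat y 1 1, hadet, Matrix.det_fin_two]
    ring
  -- positivity of det Gm on Q
  have hGmpos : ∀ p ∈ Q, 0 < (Gm p).det := by
    rintro ⟨y, t⟩ hp
    have hp1 : y ∈ V := hKV hp.1
    have h1 := hdet (y, t) hp
    have hJ : Gm (y, t) = (Matrix.of fun i j => gvec j (y, t) i).transpose *
        (Matrix.of fun i j => gvec j (y, t) i) := by
      ext i j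
      rw [Matrix.mul_apply]
      simp only [Matrix.transpose_apply, Matrix.of_apply]
      rw [hGmapp]
      exact Finset.sum_congr rfl fun m _ => by
        rw [hgvecV i y hp1 t m, hgvecV j y hp1 t m]
    rw [hJ, Matrix.det_mul, Matrix.det_transpose]
    exact mul_pos h1 h1
  -- uniform bounds on the entries
  obtain ⟨M0, hM0⟩ := hQc.exists_bound_of_continuousOn
    (f := fun p (ij : Fin 3 × Fin 3) => Gm p ij.1 ij.2)
    (continuousOn_pi.2 fun ij => (hGmentC ij.1 ij.2).mono hQW)
  set M : ℝ := max M0 0 with hMdef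
  have hMnn : 0 ≤ M := le_max_right _ _
  have hMB : ∀ p ∈ Q, ∀ i j, |Gm p i j| ≤ M := by
    intro p hp i j
    have h1 := norm_le_pi_norm (fun ij : Fin 3 × Fin 3 => Gm p ij.1 ij.2) (i, j)
    rw [← Real.norm_eq_abs]
    exact le_trans (le_trans h1 (hM0 p hp)) (le_max_left _ _)
  obtain ⟨Cb0, hCb0⟩ := hKc.exists_bound_of_continuousOn
    (f := fun y (im : Fin 3 × Fin 3) => gb im.1 y im.2)
    (continuousOn_pi.2 fun im => (hgbC im.1 im.2).mono hKV)
  set Cb : ℝ := max Cb0 0 with hCbdef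
  have hCbnn : 0 ≤ Cb := le_max_right _ _
  have hCbB : ∀ y ∈ K, ∀ i m, |gb i y m| ≤ Cb := by
    intro y hy i m
    have h1 := norm_le_pi_norm (fun im : Fin 3 × Fin 3 => gb im.1 y im.2) (i, m)
    rw [← Real.norm_eq_abs]
    exact le_trans (le_trans h1 (hCb0 y hy)) (le_max_left _ _)
  obtain ⟨Cd0, hCd0⟩ := hKc.exists_bound_of_continuousOn
    (f := fun y (im : Fin 3 × Fin 3) => gd im.1 y im.2)
    (continuousOn_pi.2 fun im => (hgdC im.1 im.2).mono hKV)
  set Cd : ℝ := max Cd0 0 with hCddef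
  have hCdnn : 0 ≤ Cd := le_max_right _ _
  have hCdB : ∀ y ∈ K, ∀ i m, |gd i y m| ≤ Cd := by
    intro y hy i m
    have h1 := norm_le_pi_norm (fun im : Fin 3 × Fin 3 => gd im.1 y im.2) (i, m)
    rw [← Real.norm_eq_abs]
    exact le_trans (le_trans h1 (hCd0 y hy)) (le_max_left _ _)
  set C₂ : ℝ := 3 * (2 * (Cb * Cd) + ε₀ * (Cd * Cd)) with hC₂def
  have hC₂nn : 0 ≤ C₂ := by
    have h1 := mul_nonneg hCbnn hCdnn
    have h2 := mul_nonneg hε₀.le (mul_nonneg hCdnn hCdnn)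
    rw [hC₂def]; linarith
  -- entrywise Lipschitz estimate in t
  have hdiffE : ∀ y ∈ K, ∀ t : ℝ, |t| ≤ ε₀ → ∀ i j,
      |Gm (y, t) i j - Gm (y, (0:ℝ)) i j| ≤ |t| * C₂ := by
    intro y hy t ht i j
    have hsplit : Gm (y, t) i j - Gm (y, (0:ℝ)) i j
        = t * ((gb i y 0 * gd j y 0 + gd i y 0 * gb j y 0 + t * (gd i y 0 * gd j y 0))
             + (gb i y 1 * gd j y 1 + gd i y 1 * gb j y 1 + t * (gd i y 1 * gd j y 1))
             + (gb i y 2 * gd j y 2 + gd i y 2 * gb j y 2 + t * (gd i y 2 * gd j y 2))) := by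
      rw [hGmapp, hGmapp]
      simp only [Fin.sum_univ_three]
      ring
    rw [hsplit, abs_mul]
    have hterm : ∀ m : Fin 3,
        |gb i y m * gd j y m + gd i y m * gb j y m + t * (gd i y m * gd j y m)|
          ≤ 2 * (Cb * Cd) + ε₀ * (Cd * Cd) := fun m =>
      aux_entry _ _ _ _ _ _ _ _ (hCbB y hy i m) (hCbB y hy j m) (hCdB y hy i m)
        (hCdB y hy j m) ht
    have hsum3 : |(gb i y 0 * gd j y 0 + gd i y 0 * gb j y 0 + t * (gd i y 0 * gd j y 0))
             + (gb i y 1 * gd j y 1 + gd i y 1 * gb j y 1 + t * (gd i y 1 * gd j y 1))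
             + (gb i y 2 * gd j y 2 + gd i y 2 * gb j y 2 + t * (gd i y 2 * gd j y 2))| ≤ C₂ := by
      calc _ ≤ _ := abs_add_three _ _ _
        _ ≤ C₂ := by rw [hC₂def]; linarith [hterm 0, hterm 1, hterm 2]
    exact mul_le_mul_of_nonneg_left hsum3 (abs_nonneg t)
  -- determinant estimate
  have hdetdiff : ∀ y ∈ K, ∀ t : ℝ, |t| ≤ ε₀ →
      |(Gm (y, t)).det - (Gm (y, (0:ℝ))).det| ≤ 18 * M ^ 2 * (|t| * C₂) := by
    intro y hy t ht
    have hyt : (y, t) ∈ Q := ⟨hy, mem_Icc.2 (abs_le.1 ht)⟩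
    have h0 : (0:ℝ) ∈ Icc (-ε₀) ε₀ := mem_Icc.2 ⟨by linarith, by linarith⟩
    have hy0 : (y, (0:ℝ)) ∈ Q := ⟨hy, h0⟩
    exact det3_lip _ _ M (|t| * C₂) (fun i j => hMB _ hyt i j) (fun i j => hMB _ hy0 i j)
      (fun i j => hdiffE y hy t ht i j)
  -- extrema of det Gm on Q
  obtain ⟨pm, hpmQ, hmin⟩ := hQc.exists_isMinOn hQne (hGmdetC.mono hQW)
  obtain ⟨pM, hpMQ, hmax⟩ := hQc.exists_isMaxOn hQne (hGmdetC.mono hQW)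
  -- the identification of gdet with det Gm
  have hge : ∀ (ε : ℝ) (y : Fin 2 → ℝ), y ∈ K → ∀ x₃ : ℝ,
      gdet ε (y, x₃) = (Gm (y, ε * x₃)).det := by
    intro ε y hy x₃
    rw [hgdet]
    have : G ((y, x₃).1, ε * (y, x₃).2) = Gm (y, ε * x₃) := hGeq (y, ε * x₃) (hKV hy)
    rw [this]
  refine ⟨?_, ?_, ?_⟩
  · -- (i)
    obtain ⟨ym, hymK, hymin⟩ := hKc.exists_isMinOn hKne (hqC.continuousOn.mono hωU)
    exact ⟨q ym, hqpos ym hymK, fun y hy => by rw [hlag y]; exact hymin hy⟩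
  · -- (ii)
    have h18 : 0 ≤ 18 * M ^ 2 * C₂ := by positivity
    refine ⟨18 * M ^ 2 * C₂ + 1, by linarith, ?_⟩
    intro ε hε hεε p hp
    obtain ⟨y, x₃⟩ := p
    have hyK : y ∈ K := hp.1
    have hx : |x₃| ≤ 1 := abs_le.2 ⟨hp.2.1, hp.2.2⟩
    have ht1 : |ε * x₃| ≤ ε := by
      rw [abs_mul, abs_of_pos hε]
      calc ε * |x₃| ≤ ε * 1 := mul_le_mul_of_nonneg_left hx hε.le
        _ = ε := mul_one ε
    have ht0 : |ε * x₃| ≤ ε₀ := le_trans ht1 hεε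
    have key2 := hdetdiff y hyK (ε * x₃) ht0
    have hfin : |gdet ε (y, x₃) - adet (y, x₃).1| =
        |(Gm (y, ε * x₃)).det - (Gm (y, (0:ℝ))).det| := by
      rw [hge ε y hyK x₃, hGm0 y (hKV hyK)]
    rw [hfin]
    calc |(Gm (y, ε * x₃)).det - (Gm (y, (0:ℝ))).det|
        ≤ 18 * M ^ 2 * (|ε * x₃| * C₂) := key2
      _ ≤ 18 * M ^ 2 * C₂ * ε := by nlinarith [abs_nonneg (ε * x₃)]
      _ ≤ (18 * M ^ 2 * C₂ + 1) * ε := by nlinarith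
  · -- (iii)
    refine ⟨(Gm pm).det, hGmpos pm hpmQ, (Gm pM).det, hGmpos pM hpMQ, ?_⟩
    intro ε hε hεε p hp
    obtain ⟨y, x₃⟩ := p
    have hyK : y ∈ K := hp.1
    have hx : |x₃| ≤ 1 := abs_le.2 ⟨hp.2.1, hp.2.2⟩
    have ht1 : |ε * x₃| ≤ ε := by
      rw [abs_mul, abs_of_pos hε]
      calc ε * |x₃| ≤ ε * 1 := mul_le_mul_of_nonneg_left hx hε.le
        _ = ε := mul_one ε
    have ht0 : |ε * x₃| ≤ ε₀ := le_trans ht1 hεε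
    have hytQ : (y, ε * x₃) ∈ Q := ⟨hyK, mem_Icc.2 (abs_le.1 ht0)⟩
    rw [hge ε y hyK x₃]
    exact ⟨hmin hytQ, hmax hytQ⟩
end

section
/- Under the geometric hypotheses: ω ⊂ ℝ² a bounded domain, θ : closure(ω) → ℝ³ injective of class C³ with a_α := ∂_α θ linearly independent on closure(ω), a₃ := (a₁ × a₂)/|a₁ × a₂|, Θ(y, x₃) := θ(y) + x₃ a₃(y), and ε₀ > 0 such that g_i := ∂_i Θ are linearly independent on closure(ω) × [−ε₀, ε₀], let λ ≥ 0 and μ > 0, let Ω := ω × (−1,1), and for 0 < ε ≤ ε₀ define (g^{ij}(ε)(x)) as the inverse of (g_i · g_j)(y, εx₃) and A^{ijkl}(ε) := λ g^{ij}(ε) g^{kl}(ε) + μ (g^{ik}(ε) g^{jl}(ε) + g^{il}(ε) g^{jk}(ε)). Then there exists a constant C_e > 0, independent of ε and x, such that for all ε with 0 < ε ≤ ε₀, all x ∈ closure(Ω), and all symmetric 3×3 real matrices t = (t_{ij}): Σ_{i,j=1}^{3} |t_{ij}|² ≤ C_e · Σ_{i,j,k,l=1}^{3} A^{ijkl}(ε)(x)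 t_{kl} t_{ij}. -/
open Set Matrix

lemma gram_posDef (v : Fin 3 → Fin 3 → ℝ) (hv : LinearIndependent ℝ v) :
    Matrix.PosDef (Matrix.of fun i j => ∑ m, v i m * v j m) := by
  refine Matrix.PosDef.of_dotProduct_mulVec_pos ?_ ?_
  · ext i j
    simp only [conjTranspose_apply, of_apply, star_trivial]
    exact Finset.sum_congr rfl fun m _ => mul_comm _ _
  · intro x hx
    have key : dotProduct (star x) ((Matrix.of fun i j => ∑ m, v i m * v j m) *ᵥ x)
        = ∑ m, (∑ i, x i * v i m) ^ 2 := by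
      simp only [dotProduct, Matrix.mulVec, star_trivial, of_apply, dotProduct,
        Fin.sum_univ_three]
      ring
    rw [key]
    have hex : ∃ m, (∑ i, x i * v i m) ≠ 0 := by
      by_contra h
      push_neg at h
      have hsum : ∑ i, x i • v i = 0 := by
        funext m
        simpa [Finset.sum_apply] using h m
      have := Fintype.linearIndependent_iff.mp hv x hsum
      exact hx (funext this)
    obtain ⟨m, hm⟩ := hex
    refine Finset.sum_pos' (fun m _ => sq_nonneg _) ⟨m, Finset.mem_univ m, ?_⟩
    positivity

open scoped MatrixOrder in
lemma trace_pos_of_posDef {S t : Matrix (Fin 3) (Fin 3) ℝ} (hS : S.PosDef)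
    (ht : t.IsSymm) (ht0 : t ≠ 0) : 0 < Matrix.trace (S * t * S * t) := by
  have hPSD := hS.posSemidef
  set B := CFC.sqrt S with hBdef
  have hBB : B * B = S := CFC.sqrt_mul_sqrt_self S hPSD.nonneg
  have hBsymm : Bᵀ = B := by
    have := (Matrix.nonneg_iff_posSemidef.mp (CFC.sqrt_nonneg S : 0 ≤ B)).isHermitian
    exact (Matrix.conjTranspose_eq_transpose_of_trivial B).symm.trans this
  have hdetS : S.det ≠ 0 := ne_of_gt hS.det_pos
  have hdetB : IsUnit B.det := by
    refine isUnit_iff_ne_zero.mpr fun h => hdetS ?_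
    rw [← hBB, Matrix.det_mul, h, mul_zero]
  set N := B * t * B with hNdef
  have hNsymm : Nᵀ = N := by
    have htt : tᵀ = t := ht
    rw [hNdef, Matrix.transpose_mul, Matrix.transpose_mul, hBsymm, htt, Matrix.mul_assoc]
  have hN0 : N ≠ 0 := by
    intro h
    apply ht0
    have : B⁻¹ * N * B⁻¹ = t := by
      show B⁻¹ * (B * t * B) * B⁻¹ = t
      rw [← Matrix.mul_assoc (B⁻¹) (B*t) B]
      rw [← Matrix.mul_assoc (B⁻¹) B t, Matrix.nonsing_inv_mul B hdetB, Matrix.one_mul,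
        Matrix.mul_assoc, Matrix.mul_nonsing_inv B hdetB, Matrix.mul_one]
    rw [← this, h, Matrix.mul_zero, Matrix.zero_mul]
  have htr : Matrix.trace (S * t * S * t) = Matrix.trace (N * N) := by
    rw [← hBB]
    have e1 : B * B * t * (B * B) * t = B * (B * t * B * (B * t)) := by
      simp only [Matrix.mul_assoc]
    have e2 : N * N = (B * t * B * (B * t)) * B := by
      simp only [hNdef, Matrix.mul_assoc]
    rw [e1, e2, Matrix.trace_mul_comm]
  rw [htr]
  clear htr
  have htr2 : Matrix.trace (N * N) = ∑ i, ∑ j, (N i j) ^ 2 := by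
    simp only [Matrix.trace, Matrix.diag, Matrix.mul_apply]
    refine Finset.sum_congr rfl fun i _ => Finset.sum_congr rfl fun j _ => ?_
    have : N j i = N i j := by rw [← Matrix.transpose_apply N i j, hNsymm]
    rw [this, sq]
  rw [htr2]
  have hex : ∃ i j, N i j ≠ 0 := by
    by_contra h
    push_neg at h
    exact hN0 (by ext i j; exact h i j)
  obtain ⟨i, j, hij⟩ := hex
  refine Finset.sum_pos' (fun i _ => Finset.sum_nonneg fun j _ => sq_nonneg _)
    ⟨i, Finset.mem_univ i, ?_⟩
  refine Finset.sum_pos' (fun j _ => sq_nonneg _) ⟨j, Finset.mem_univ j, ?_⟩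
  positivity

lemma elas_identity (lam mu : ℝ) (S t : Matrix (Fin 3) (Fin 3) ℝ)
    (hS : ∀ i j, S i j = S j i) (ht : ∀ i j, t i j = t j i) :
    ∑ i, ∑ j, ∑ k, ∑ l,
      (lam * S i j * S k l + mu * (S i k * S j l + S i l * S j k)) * t k l * t i j
    = lam * (∑ i, ∑ j, S i j * t i j) ^ 2 + 2 * mu * Matrix.trace (S * t * S * t) := by
  simp only [Matrix.trace, Matrix.diag, Matrix.mul_apply, Fin.sum_univ_three]
  rw [hS 1 0, hS 2 0, hS 2 1, ht 1 0, ht 2 0, ht 2 1]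
  ring

lemma quad_scale (A : Fin 3 → Fin 3 → Fin 3 → Fin 3 → ℝ) (t : Fin 3 → Fin 3 → ℝ) (sg : ℝ) :
    ∑ i, ∑ j, ∑ k, ∑ l, A i j k l * (sg * t k l) * (sg * t i j)
      = sg ^ 2 * ∑ i, ∑ j, ∑ k, ∑ l, A i j k l * t k l * t i j := by
  rw [Finset.mul_sum]
  refine Finset.sum_congr rfl fun i _ => ?_
  rw [Finset.mul_sum]
  refine Finset.sum_congr rfl fun j _ => ?_
  rw [Finset.mul_sum]
  refine Finset.sum_congr rfl fun k _ => ?_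
  rw [Finset.mul_sum]
  refine Finset.sum_congr rfl fun l _ => ?_
  ring

/-- Uniform positive definiteness of the scaled three-dimensional elasticity tensor
`A^{ijkl}(ε)`: the constant is independent of the point of the fixed domain and of the
thickness parameter `ε ∈ (0, ε₀]`. -/
theorem stmt14 (ω : Set (Fin 2 → ℝ)) (hωo : IsOpen ω) (hωb : Bornology.IsBounded ω)
    (hωc : IsConnected ω)
    (U : Set (Fin 2 → ℝ)) (hUo : IsOpen U) (hωU : closure ω ⊆ U)
    (θ : (Fin 2 → ℝ) → Fin 3 → ℝ) (hθ : ContDiffOn ℝ 3 θ U) (hθinj : InjOn θ (closure ω))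
    (a : Fin 2 → (Fin 2 → ℝ) → Fin 3 → ℝ)
    (ha : ∀ α y, a α y = fderiv ℝ θ y (Pi.single α 1))
    (hind : ∀ y ∈ closure ω, LinearIndependent ℝ ![a 0 y, a 1 y])
    (c : (Fin 2 → ℝ) → Fin 3 → ℝ)
    (hc : ∀ y, c y = ![a 0 y 1 * a 1 y 2 - a 0 y 2 * a 1 y 1,
                       a 0 y 2 * a 1 y 0 - a 0 y 0 * a 1 y 2,
                       a 0 y 0 * a 1 y 1 - a 0 y 1 * a 1 y 0])
    (a3 : (Fin 2 → ℝ) → Fin 3 → ℝ)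
    (ha3 : ∀ y, a3 y = (Real.sqrt (∑ i, c y i ^ 2))⁻¹ • c y)
    (Θ : (Fin 2 → ℝ) × ℝ → Fin 3 → ℝ)
    (hΘ : ∀ p, Θ p = θ p.1 + p.2 • a3 p.1)
    (gvec : Fin 3 → ((Fin 2 → ℝ) × ℝ) → Fin 3 → ℝ)
    (hgvec0 : ∀ p, gvec 0 p = fderiv ℝ Θ p (Pi.single 0 1, 0))
    (hgvec1 : ∀ p, gvec 1 p = fderiv ℝ Θ p (Pi.single 1 1, 0))
    (hgvec2 : ∀ p, gvec 2 p = fderiv ℝ Θ p (0, 1))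
    (ε₀ : ℝ) (hε₀ : 0 < ε₀)
    (hgind : ∀ p ∈ closure ω ×ˢ Icc (-ε₀) ε₀,
      LinearIndependent ℝ ![gvec 0 p, gvec 1 p, gvec 2 p])
    (lam mu : ℝ) (hlam : 0 ≤ lam) (hmu : 0 < mu)
    (G : ((Fin 2 → ℝ) × ℝ) → Matrix (Fin 3) (Fin 3) ℝ)
    (hG : ∀ p i j, G p i j = ∑ m, gvec i p m * gvec j p m)
    (Ginv : ℝ → ((Fin 2 → ℝ) × ℝ) → Matrix (Fin 3) (Fin 3) ℝ)
    (hGinv : ∀ ε p, Ginv ε p = (G (p.1, ε * p.2))⁻¹)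
    (Aε : ℝ → ((Fin 2 → ℝ) × ℝ) → Fin 3 → Fin 3 → Fin 3 → Fin 3 → ℝ)
    (hAε : ∀ ε p i j k l, Aε ε p i j k l = lam * Ginv ε p i j * Ginv ε p k l
      + mu * (Ginv ε p i k * Ginv ε p j l + Ginv ε p i l * Ginv ε p j k)) :
    ∃ Ce > (0 : ℝ), ∀ ε : ℝ, 0 < ε → ε ≤ ε₀ →
      ∀ p ∈ closure ω ×ˢ Icc (-1 : ℝ) 1,
        ∀ t : Matrix (Fin 3) (Fin 3) ℝ, t.IsSymm →
          ∑ i, ∑ j, |t i j| ^ 2 ≤ Ce * ∑ i, ∑ j, ∑ k, ∑ l, Aε ε p i j k l * t k l * t i j := by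
  classical
  -- the compact set of base points
  set K : Set ((Fin 2 → ℝ) × ℝ) := closure ω ×ˢ Icc (-ε₀) ε₀ with hKdef
  have hKcomp : IsCompact K := by
    refine IsCompact.prod ?_ isCompact_Icc
    exact Metric.isCompact_of_isClosed_isBounded isClosed_closure hωb.closure
  -- positive definiteness of G on K
  have hGpos : ∀ q ∈ K, (G q).PosDef := by
    intro q hq
    have hli : LinearIndependent ℝ (fun i => gvec i q) := by
      have := hgind q hq
      convert this using 1
      funext i
      fin_cases i <;> rfl
    have : G q = Matrix.of fun i j => ∑ m, gvec i q m * gvec j q m := by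
      ext i j; rw [hG]; rfl
    rw [this]
    exact gram_posDef _ hli
  -- continuity of G on a neighborhood of K
  have hGcont : ContinuousOn G K := by
    have hfd : ContDiffOn ℝ 2 (fderiv ℝ θ) U := hθ.fderiv_of_isOpen hUo (by norm_num)
    have ha2 : ∀ α : Fin 2, ContDiffOn ℝ 2 (a α) U := by
      intro α
      have h1 : ContDiffOn ℝ 2 (fun y => (fderiv ℝ θ y) (Pi.single α 1)) U := by
        have := ((ContinuousLinearMap.apply ℝ (Fin 3 → ℝ) (Pi.single α (1:ℝ)) :
          ((Fin 2 → ℝ) →L[ℝ] (Fin 3 → ℝ)) →L[ℝ] (Fin 3 → ℝ))).contDiff.comp_contDiffOn hfd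
        exact this
      have h2 : a α = fun y => (fderiv ℝ θ y) (Pi.single α 1) := funext (ha α)
      rw [h2]; exact h1
    have haent : ∀ (α : Fin 2) (i : Fin 3), ContDiffOn ℝ 2 (fun y => a α y i) U :=
      fun α i => (ContinuousLinearMap.proj i :
        (Fin 3 → ℝ) →L[ℝ] ℝ).contDiff.comp_contDiffOn (ha2 α)
    have hcall : ∀ i : Fin 3, ContDiffOn ℝ 2 (fun y => c y i) U := by
      have h0 : ContDiffOn ℝ 2 (fun y => c y 0) U := by
        have : (fun y => c y 0) = fun y => a 0 y 1 * a 1 y 2 - a 0 y 2 * a 1 y 1 := by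
          funext y; rw [hc]; simp
        rw [this]; exact ((haent 0 1).mul (haent 1 2)).sub ((haent 0 2).mul (haent 1 1))
      have h1 : ContDiffOn ℝ 2 (fun y => c y 1) U := by
        have : (fun y => c y 1) = fun y => a 0 y 2 * a 1 y 0 - a 0 y 0 * a 1 y 2 := by
          funext y; rw [hc]; simp
        rw [this]; exact ((haent 0 2).mul (haent 1 0)).sub ((haent 0 0).mul (haent 1 2))
      have h2 : ContDiffOn ℝ 2 (fun y => c y 2) U := by
        have : (fun y => c y 2) = fun y => a 0 y 0 * a 1 y 1 - a 0 y 1 * a 1 y 0 := by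
          funext y; rw [hc]; simp
        rw [this]; exact ((haent 0 0).mul (haent 1 1)).sub ((haent 0 1).mul (haent 1 0))
      intro i; fin_cases i <;> assumption
    have hcPi : ContDiffOn ℝ 2 c U := contDiffOn_pi.mpr hcall
    have hnr : ContDiffOn ℝ 2 (fun y => ∑ i, c y i ^ 2) U :=
      ContDiffOn.sum fun i _ => (hcall i).pow 2
    have hcne : ∀ y ∈ closure ω, c y ≠ 0 := by
      intro y hy
      have hcx : c y = crossProduct (a 0 y) (a 1 y) := by rw [hc]; rfl
      rw [hcx]
      exact crossProduct_ne_zero_iff_linearIndependent.mpr (hind y hy)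
    have hnpos : ∀ y ∈ closure ω, 0 < ∑ i, c y i ^ 2 := by
      intro y hy
      obtain ⟨i, hi⟩ := Function.ne_iff.mp (hcne y hy)
      refine Finset.sum_pos' (fun i _ => sq_nonneg _) ⟨i, Finset.mem_univ i, ?_⟩
      have : c y i ≠ 0 := by simpa using hi
      positivity
    set V : Set (Fin 2 → ℝ) := U ∩ (fun y => ∑ i, c y i ^ 2) ⁻¹' Ioi 0 with hVdef
    have hVo : IsOpen V :=
      hnr.continuousOn.isOpen_inter_preimage hUo isOpen_Ioi
    have hVU : V ⊆ U := inter_subset_left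
    have hωV : closure ω ⊆ V := fun y hy => ⟨hωU hy, hnpos y hy⟩
    have hVpos : ∀ y ∈ V, 0 < ∑ i, c y i ^ 2 := fun y hy => hy.2
    have ha3V : ContDiffOn ℝ 1 a3 V := by
      have h1 : ContDiffOn ℝ 1 (fun y => ∑ i, c y i ^ 2) V :=
        (hnr.of_le one_le_two).mono hVU
      have h2 : ContDiffOn ℝ 1 (fun y => Real.sqrt (∑ i, c y i ^ 2)) V :=
        h1.sqrt fun y hy => ne_of_gt (hVpos y hy)
      have h3 : ContDiffOn ℝ 1 (fun y => (Real.sqrt (∑ i, c y i ^ 2))⁻¹) V :=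
        h2.inv fun y hy => ne_of_gt (Real.sqrt_pos.mpr (hVpos y hy))
      have h4 : ContDiffOn ℝ 1 c V := (hcPi.of_le one_le_two).mono hVU
      have h5 : a3 = fun y => (Real.sqrt (∑ i, c y i ^ 2))⁻¹ • c y := funext ha3
      rw [h5]; exact h3.smul h4
    set W : Set ((Fin 2 → ℝ) × ℝ) := V ×ˢ (univ : Set ℝ) with hWdef
    have hWo : IsOpen W := hVo.prod isOpen_univ
    have hKW : K ⊆ W := fun q hq => mem_prod.mpr ⟨hωV (mem_prod.mp hq).1, trivial⟩
    have hΘW : ContDiffOn ℝ 1 Θ W := by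
      have hfst : ContDiffOn ℝ 1 (Prod.fst : (Fin 2 → ℝ) × ℝ → (Fin 2 → ℝ)) W :=
        contDiff_fst.contDiffOn
      have h1 : ContDiffOn ℝ 1 (fun p : (Fin 2 → ℝ) × ℝ => θ p.1) W :=
        ContDiffOn.comp (hθ.of_le (by norm_num)) hfst
          (fun p hp => hVU (mem_prod.mp hp).1)
      have h2 : ContDiffOn ℝ 1 (fun p : (Fin 2 → ℝ) × ℝ => a3 p.1) W :=
        ContDiffOn.comp ha3V hfst (fun p hp => (mem_prod.mp hp).1)
      have h3 : ContDiffOn ℝ 1 (fun p : (Fin 2 → ℝ) × ℝ => p.2) W :=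
        contDiff_snd.contDiffOn
      have h5 : Θ = fun p => θ p.1 + p.2 • a3 p.1 := funext hΘ
      rw [h5]; exact h1.add (h3.smul h2)
    have hdΘ : ContinuousOn (fderiv ℝ Θ) W :=
      hΘW.continuousOn_fderiv_of_isOpen hWo le_rfl
    have hgv : ∀ i : Fin 3, ContinuousOn (gvec i) W := by
      have h0 : ContinuousOn (gvec 0) W := by
        have : gvec 0 = fun p => (fderiv ℝ Θ p) (Pi.single 0 1, 0) := funext hgvec0
        rw [this]
        exact (ContinuousLinearMap.apply ℝ (Fin 3 → ℝ)
          ((Pi.single 0 1 : Fin 2 → ℝ), (0:ℝ))).continuous.comp_continuousOn hdΘ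
      have h1 : ContinuousOn (gvec 1) W := by
        have : gvec 1 = fun p => (fderiv ℝ Θ p) (Pi.single 1 1, 0) := funext hgvec1
        rw [this]
        exact (ContinuousLinearMap.apply ℝ (Fin 3 → ℝ)
          ((Pi.single 1 1 : Fin 2 → ℝ), (0:ℝ))).continuous.comp_continuousOn hdΘ
      have h2 : ContinuousOn (gvec 2) W := by
        have : gvec 2 = fun p => (fderiv ℝ Θ p) (0, 1) := funext hgvec2
        rw [this]
        exact (ContinuousLinearMap.apply ℝ (Fin 3 → ℝ)
          ((0 : Fin 2 → ℝ), (1:ℝ))).continuous.comp_continuousOn hdΘ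
      intro i; fin_cases i <;> assumption
    have hent : ∀ i j, ContinuousOn (fun q => G q i j) W := by
      intro i j
      have : (fun q => G q i j) = fun q => ∑ m, gvec i q m * gvec j q m :=
        funext fun q => hG q i j
      rw [this]
      refine continuousOn_finset_sum _ fun m _ => ?_
      exact ((continuous_apply m).comp_continuousOn (hgv i)).mul
        ((continuous_apply m).comp_continuousOn (hgv j))
    have hGW : ContinuousOn G W := by
      rw [continuousOn_iff_continuous_restrict]
      apply continuous_matrix
      intro i j
      exact continuousOn_iff_continuous_restrict.mp (hent i j)
    exact hGW.mono hKW
  -- continuity of entries of (G q)⁻¹ on K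
  have hdetne : ∀ q ∈ K, (G q).det ≠ 0 := fun q hq => ne_of_gt (hGpos q hq).det_pos
  have hGinvEnt : ∀ i j, ContinuousOn (fun q => (G q)⁻¹ i j) K := by
    intro i j
    have h1 : ContinuousOn (fun q => (G q).det) K :=
      continuous_id.matrix_det.comp_continuousOn hGcont
    have h2 : ContinuousOn (fun q => ((G q).det)⁻¹) K := h1.inv₀ hdetne
    have h3 : ContinuousOn (fun q => (G q).adjugate i j) K :=
      ((continuous_apply j).comp ((continuous_apply i).comp
        continuous_id.matrix_adjugate)).comp_continuousOn hGcont
    have key : ∀ q, (G q)⁻¹ i j = ((G q).det)⁻¹ * (G q).adjugate i j := by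
      intro q
      rw [Matrix.inv_def, Matrix.smul_apply, Ring.inverse_eq_inv, smul_eq_mul]
    exact (h2.mul h3).congr fun q _ => key q
  -- the unit sphere of symmetric matrices
  set T : Set (Fin 3 → Fin 3 → ℝ) :=
    {t | (∀ i j, t i j = t j i) ∧ ∑ i, ∑ j, (t i j) ^ 2 = 1} with hTdef
  have hTcomp : IsCompact T := by
    have hclosed : IsClosed T := by
      have hT2 : T = (⋂ i, ⋂ j, {t : Fin 3 → Fin 3 → ℝ | t i j = t j i}) ∩
          {t : Fin 3 → Fin 3 → ℝ | ∑ i, ∑ j, (t i j) ^ 2 = 1} := by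
        ext u; simp [hTdef, mem_iInter, forall_and]
      rw [hT2]
      refine IsClosed.inter (isClosed_iInter fun i => isClosed_iInter fun j =>
        isClosed_eq ?_ ?_) (isClosed_eq ?_ continuous_const)
      · exact (continuous_apply j).comp (continuous_apply i)
      · exact (continuous_apply i).comp (continuous_apply j)
      · refine continuous_finset_sum _ fun i _ => continuous_finset_sum _ fun j _ => ?_
        exact ((continuous_apply j).comp (continuous_apply i)).pow 2
    have hsub : T ⊆ Metric.closedBall 0 1 := by
      intro u hu
      rw [Metric.mem_closedBall, dist_zero_right]
      refine (pi_norm_le_iff_of_nonneg zero_le_one).mpr fun i => ?_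
      refine (pi_norm_le_iff_of_nonneg zero_le_one).mpr fun j => ?_
      have h1 : (u i j) ^ 2 ≤ 1 := by
        rw [← hu.2]
        have h2 : (u i j) ^ 2 ≤ ∑ jj, (u i jj) ^ 2 :=
          Finset.single_le_sum (f := fun jj => (u i jj) ^ 2)
            (fun jj _ => sq_nonneg _) (Finset.mem_univ j)
        have h3 : ∑ jj, (u i jj) ^ 2 ≤ ∑ ii, ∑ jj, (u ii jj) ^ 2 :=
          Finset.single_le_sum (f := fun ii => ∑ jj, (u ii jj) ^ 2)
            (fun ii _ => Finset.sum_nonneg fun jj _ => sq_nonneg _) (Finset.mem_univ i)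
        linarith
      have : ‖u i j‖ = |u i j| := rfl
      rw [this]
      nlinarith [abs_nonneg (u i j), sq_abs (u i j)]
    exact Metric.isCompact_of_isClosed_isBounded hclosed
      (Metric.isBounded_closedBall.subset hsub)
  have hTne : T.Nonempty := by
    refine ⟨fun i j => if i = 0 ∧ j = 0 then 1 else 0, fun i j => ?_, ?_⟩
    · by_cases h : i = 0 ∧ j = 0
      · simp [h.1, h.2]
      · have h' : ¬(j = 0 ∧ i = 0) := fun hh => h ⟨hh.2, hh.1⟩
        simp [h, h']
    · simp [Fin.sum_univ_three]
      decide
  have hKne : K.Nonempty := by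
    obtain ⟨y, hy⟩ := hωc.nonempty
    exact ⟨(y, 0), mem_prod.mpr ⟨subset_closure hy,
      mem_Icc.mpr ⟨by show -ε₀ ≤ (0:ℝ); linarith, by show (0:ℝ) ≤ ε₀; linarith⟩⟩⟩
  -- the quadratic form
  set Φ : (((Fin 2 → ℝ) × ℝ) × (Fin 3 → Fin 3 → ℝ)) → ℝ := fun z =>
    ∑ i, ∑ j, ∑ k, ∑ l,
      (lam * (G z.1)⁻¹ i j * (G z.1)⁻¹ k l
        + mu * ((G z.1)⁻¹ i k * (G z.1)⁻¹ j l + (G z.1)⁻¹ i l * (G z.1)⁻¹ j k))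
        * z.2 k l * z.2 i j with hΦdef
  have hΦcont : ContinuousOn Φ (K ×ˢ T) := by
    have hfst : ∀ i j, ContinuousOn (fun z : ((Fin 2 → ℝ) × ℝ) × (Fin 3 → Fin 3 → ℝ) =>
        (G z.1)⁻¹ i j) (K ×ˢ T) := by
      intro i j
      exact (hGinvEnt i j).comp continuous_fst.continuousOn
        (fun z hz => (mem_prod.mp hz).1)
    have hsnd : ∀ i j, ContinuousOn (fun z : ((Fin 2 → ℝ) × ℝ) × (Fin 3 → Fin 3 → ℝ) =>
        z.2 i j) (K ×ˢ T) :=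
      fun i j => (((continuous_apply j).comp ((continuous_apply i).comp
        continuous_snd)).continuousOn)
    apply continuousOn_finset_sum _ fun i _ => ?_
    apply continuousOn_finset_sum _ fun j _ => ?_
    apply continuousOn_finset_sum _ fun k _ => ?_
    apply continuousOn_finset_sum _ fun l _ => ?_
    exact ((((continuousOn_const.mul (hfst i j)).mul (hfst k l)).add
      (continuousOn_const.mul (((hfst i k).mul (hfst j l)).add
        ((hfst i l).mul (hfst j k))))).mul (hsnd k l)).mul (hsnd i j)
  -- positivity of Φ on K ×ˢ T
  have hΦpos : ∀ z ∈ K ×ˢ T, 0 < Φ z := by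
    intro z hz
    obtain ⟨hq, ht⟩ := mem_prod.mp hz
    set S : Matrix (Fin 3) (Fin 3) ℝ := (G z.1)⁻¹ with hSdef
    have hSpos : S.PosDef := (hGpos z.1 hq).inv
    have hSsymm : ∀ i j, S i j = S j i := by
      intro i j
      have := hSpos.isHermitian
      calc S i j = Sᴴ i j := by rw [this]
        _ = S j i := by simp [Matrix.conjTranspose_apply]
    set tm : Matrix (Fin 3) (Fin 3) ℝ := Matrix.of z.2 with htmdef
    have htsymm : ∀ i j, tm i j = tm j i := fun i j => ht.1 i j
    have htm0 : tm ≠ 0 := by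
      intro h
      have : ∑ i, ∑ j, (z.2 i j) ^ 2 = 0 := by
        refine Finset.sum_eq_zero fun i _ => Finset.sum_eq_zero fun j _ => ?_
        have : tm i j = 0 := by rw [h]; rfl
        simpa [htmdef] using this
      rw [ht.2] at this
      norm_num at this
    have hid := elas_identity lam mu S tm hSsymm htsymm
    have htrp : 0 < Matrix.trace (S * tm * S * tm) :=
      trace_pos_of_posDef hSpos (Matrix.IsSymm.ext fun i j => (htsymm j i)) htm0
    have : Φ z = lam * (∑ i, ∑ j, S i j * tm i j) ^ 2
        + 2 * mu * Matrix.trace (S * tm * S * tm) := hid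
    rw [this]
    have h1 : 0 ≤ lam * (∑ i, ∑ j, S i j * tm i j) ^ 2 :=
      mul_nonneg hlam (sq_nonneg _)
    nlinarith
  -- the minimum
  obtain ⟨z0, hz0mem, hz0min⟩ := (hKcomp.prod hTcomp).exists_isMinOn
    (hKne.prod hTne) hΦcont
  set m₀ : ℝ := Φ z0 with hm₀def
  have hm₀pos : 0 < m₀ := hΦpos z0 hz0mem
  refine ⟨m₀⁻¹, inv_pos.mpr hm₀pos, ?_⟩
  intro ε hε1 hε2 p hp t htsym
  set q : (Fin 2 → ℝ) × ℝ := (p.1, ε * p.2) with hqdef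
  obtain ⟨hp1, hp2⟩ := mem_prod.mp hp
  have hqK : q ∈ K := by
    refine mem_prod.mpr ⟨hp1, mem_Icc.mpr ⟨?_, ?_⟩⟩
    · obtain ⟨h1, h2⟩ := hp2
      show -ε₀ ≤ ε * p.2
      nlinarith [mul_nonneg hε1.le (by linarith : (0:ℝ) ≤ p.2 + 1)]
    · obtain ⟨h1, h2⟩ := hp2
      show ε * p.2 ≤ ε₀
      nlinarith [mul_nonneg hε1.le (by linarith : (0:ℝ) ≤ 1 - p.2)]
  -- rewrite the RHS as Φ (q, t)
  have hRHS : ∑ i, ∑ j, ∑ k, ∑ l, Aε ε p i j k l * t k l * t i j = Φ (q, fun i j => t i j) := by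
    refine Finset.sum_congr rfl fun i _ => Finset.sum_congr rfl fun j _ =>
      Finset.sum_congr rfl fun k _ => Finset.sum_congr rfl fun l _ => ?_
    rw [hAε, hGinv]
  rw [hRHS]
  -- handle t = 0
  by_cases ht0 : t = 0
  · subst ht0
    simp only [Matrix.zero_apply, abs_zero, hΦdef]
    norm_num
  -- scale t to the sphere
  have hr : 0 < ∑ i, ∑ j, (t i j) ^ 2 := by
    have hex : ∃ i j, t i j ≠ 0 := by
      by_contra h
      push_neg at h
      exact ht0 (by ext i j; exact h i j)
    obtain ⟨i, j, hij⟩ := hex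
    refine Finset.sum_pos' (fun i _ => Finset.sum_nonneg fun j _ => sq_nonneg _)
      ⟨i, Finset.mem_univ i, ?_⟩
    refine Finset.sum_pos' (fun j _ => sq_nonneg _) ⟨j, Finset.mem_univ j, ?_⟩
    positivity
  set r : ℝ := ∑ i, ∑ j, (t i j) ^ 2 with hrdef
  set s : ℝ := Real.sqrt r with hsdef
  have hspos : 0 < s := Real.sqrt_pos.mpr hr
  have hs2 : s ^ 2 = r := Real.sq_sqrt (le_of_lt hr)
  have htT : (fun i j => s⁻¹ * t i j) ∈ T := by
    constructor
    · intro i j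
      show s⁻¹ * t i j = s⁻¹ * t j i
      rw [show t i j = t j i from htsym.apply j i]
    · have : ∑ i, ∑ j, (s⁻¹ * t i j) ^ 2 = (s⁻¹) ^ 2 * r := by
        rw [hrdef, Finset.mul_sum]
        refine Finset.sum_congr rfl fun i _ => ?_
        rw [Finset.mul_sum]
        exact Finset.sum_congr rfl fun j _ => by ring
      rw [this, ← hs2]
      field_simp
  have hmin := hz0min (Set.mk_mem_prod hqK htT)
  -- Φ (q, s⁻¹ • t) = s⁻² * Φ (q, t)
  have hscale : Φ (q, fun i j => s⁻¹ * t i j) = (s⁻¹) ^ 2 * Φ (q, fun i j => t i j) :=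
    quad_scale _ _ _
  have hmin' : m₀ ≤ (s⁻¹) ^ 2 * Φ (q, fun i j => t i j) := by
    rw [← hscale]; exact hmin
  have hΦt : m₀ * r ≤ Φ (q, fun i j => t i j) := by
    have hs2' : (s⁻¹) ^ 2 = r⁻¹ := by rw [inv_pow, hs2]
    rw [hs2'] at hmin'
    have h1 : m₀ * r ≤ (r⁻¹ * Φ (q, fun i j => t i j)) * r :=
      mul_le_mul_of_nonneg_right hmin' hr.le
    have h2 : (r⁻¹ * Φ (q, fun i j => t i j)) * r = Φ (q, fun i j => t i j) := by
      field_simp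
    linarith
  have hLHS : ∑ i, ∑ j, |t i j| ^ 2 = r := by
    rw [show (∑ i, ∑ j, |t i j| ^ 2) = ∑ i, ∑ j, (t i j) ^ 2 from by
      refine Finset.sum_congr rfl fun i _ => Finset.sum_congr rfl fun j _ => sq_abs _]
  rw [hLHS]
  calc r = m₀⁻¹ * (m₀ * r) := by field_simp
    _ ≤ m₀⁻¹ * Φ (q, fun i j => t i j) :=
      mul_le_mul_of_nonneg_left hΦt (inv_nonneg.mpr hm₀pos.le)
end

section
/- Under the geometric hypotheses: ω ⊂ ℝ² a bounded domain, θ : closure(ω) → ℝ³ injective of class C³ with a_α := ∂_α θ linearly independent on closure(ω), a₃ := (a₁ × a₂)/|a₁ × a₂|, Θ(y, x₃) := θ(y) + x₃ a₃(y), and ε₀ > 0 such that g_i := ∂_i Θ are linearly independent on closure(ω) × [−ε₀, ε₀], let θ_v ≥ 0 and ρ > 0, let Ω := ω × (−1,1), and for 0 < ε ≤ ε₀ define (g^{ij}(ε)(x)) as the inverse of (g_i · g_j)(y, εx₃) and B^{ijkl}(ε) := θ_v g^{ij}(ε) g^{kl}(ε) + (ρ/2)(g^{ik}(ε) g^{jl}(ε)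 + g^{il}(ε) g^{jk}(ε)). Then there exists a constant C_v > 0, independent of ε and x, such that for all ε with 0 < ε ≤ ε₀, all x ∈ closure(Ω), and all symmetric 3×3 real matrices t = (t_{ij}): Σ_{i,j=1}^{3} |t_{ij}|² ≤ C_v · Σ_{i,j,k,l=1}^{3} B^{ijkl}(ε)(x) t_{kl} t_{ij}. -/
open Set Matrix

open Matrix in
lemma aux_trace_mul_nonneg {n : Type*} [Fintype n] [DecidableEq n] {P Q : Matrix n n ℝ}
    (hP : P.PosSemidef) (hQ : Q.PosSemidef) : 0 ≤ (P * Q).trace := by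
  open scoped MatrixOrder in
  obtain ⟨B, rfl⟩ := CStarAlgebra.nonneg_iff_eq_star_mul_self.mp hP.nonneg
  rw [star_eq_conjTranspose, Matrix.mul_assoc, Matrix.trace_mul_comm]
  exact (hQ.mul_mul_conjTranspose_same B).trace_nonneg

open Matrix in
lemma aux_key2 {n : Type*} [Fintype n] [DecidableEq n] {A t : Matrix n n ℝ} {m : ℝ} (hm : 0 ≤ m)
    (hA : A.PosSemidef) (hAm : (A - m • 1).PosSemidef) (ht : tᴴ = t) :
    m ^ 2 * (t * t).trace ≤ (A * t * A * t).trace := by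
  have htt : (t * t).PosSemidef := by
    have := Matrix.posSemidef_conjTranspose_mul_self t; rwa [ht] at this
  have htAt : (t * A * t).PosSemidef := by
    have := hA.conjTranspose_mul_mul_same t; rwa [ht] at this
  have h1 : 0 ≤ ((A - m • 1) * (t * t)).trace := aux_trace_mul_nonneg hAm htt
  have h2 : 0 ≤ ((A - m • 1) * (t * A * t)).trace := aux_trace_mul_nonneg hAm htAt
  have e0 : (A * (t * t)).trace = (t * A * t).trace := by
    rw [Matrix.trace_mul_comm, Matrix.trace_mul_cycle t A t]
  have e1 : ((A - m • 1) * (t * t)).trace = (t * A * t).trace - m * (t * t).trace := by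
    rw [Matrix.sub_mul, Matrix.trace_sub, Matrix.smul_mul, Matrix.one_mul, Matrix.trace_smul, e0]
    simp
  have e2 : ((A - m • 1) * (t * A * t)).trace
      = (A * t * A * t).trace - m * (t * A * t).trace := by
    rw [Matrix.sub_mul, Matrix.trace_sub, Matrix.smul_mul, Matrix.one_mul, Matrix.trace_smul]
    rw [show A * (t * A * t) = A * t * A * t by rw [← mul_assoc, ← mul_assoc]]
    simp
  rw [e1] at h1; rw [e2] at h2
  nlinarith [mul_le_mul_of_nonneg_left (show m * (t*t).trace ≤ (t*A*t).trace by linarith) hm]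


lemma aux_key3 (thv rho : ℝ) (A t : Matrix (Fin 3) (Fin 3) ℝ) (hAs : Aᵀ = A) (hts : tᵀ = t) :
    ∑ i, ∑ j, ∑ k, ∑ l,
      (thv * A i j * A k l + rho / 2 * (A i k * A j l + A i l * A j k)) * t k l * t i j
      = thv * (∑ i, ∑ j, A i j * t i j) ^ 2 + rho * (A * t * A * t).trace := by
  have a10 : A 1 0 = A 0 1 := congrFun (congrFun hAs _) _
  have a20 : A 2 0 = A 0 2 := congrFun (congrFun hAs _) _
  have a21 : A 2 1 = A 1 2 := congrFun (congrFun hAs _) _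
  have t10 : t 1 0 = t 0 1 := congrFun (congrFun hts _) _
  have t20 : t 2 0 = t 0 2 := congrFun (congrFun hts _) _
  have t21 : t 2 1 = t 1 2 := congrFun (congrFun hts _) _
  simp only [Matrix.trace_fin_three, Matrix.mul_apply, Fin.sum_univ_three]
  rw [a10, a20, a21, t10, t20, t21]
  ring

lemma aux_key4 (t : Matrix (Fin 3) (Fin 3) ℝ) (hts : tᵀ = t) :
    (t * t).trace = ∑ i, ∑ j, |t i j| ^ 2 := by
  have t10 : t 1 0 = t 0 1 := congrFun (congrFun hts _) _
  have t20 : t 2 0 = t 0 2 := congrFun (congrFun hts _) _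
  have t21 : t 2 1 = t 1 2 := congrFun (congrFun hts _) _
  simp only [Matrix.trace_fin_three, Matrix.mul_apply, Fin.sum_univ_three, sq_abs]
  rw [t10, t20, t21]
  ring


lemma aux_cs (g : Fin 3 → Fin 3 → ℝ) (Gq : Matrix (Fin 3) (Fin 3) ℝ)
    (hGq : ∀ i j, Gq i j = ∑ m, g i m * g j m) (x y : Fin 3 → ℝ) :
    (x ⬝ᵥ Gq *ᵥ y) ^ 2 ≤ (x ⬝ᵥ Gq *ᵥ x) * (y ⬝ᵥ Gq *ᵥ y) := by
  have e : ∀ u v : Fin 3 → ℝ,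
      u ⬝ᵥ Gq *ᵥ v = ∑ m, (∑ i, u i * g i m) * (∑ i, v i * g i m) := by
    intro u v
    simp only [dotProduct, Matrix.mulVec, hGq, Fin.sum_univ_three]
    ring
  rw [e, e, e]
  have h := Finset.sum_mul_sq_le_sq_mul_sq Finset.univ
    (fun m => ∑ i, x i * g i m) (fun m => ∑ i, y i * g i m)
  calc (∑ m, (∑ i, x i * g i m) * (∑ i, y i * g i m)) ^ 2
      ≤ (∑ m, (∑ i, x i * g i m) ^ 2) * (∑ m, (∑ i, y i * g i m) ^ 2) := h
    _ = _ := by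
        congr 1 <;> exact Finset.sum_congr rfl (fun m _ => by rw [pow_two])

lemma aux_cross (u v : Fin 3 → ℝ) (hLI : LinearIndependent ℝ ![u, v])
    (h1 : u 1 * v 2 - u 2 * v 1 = 0) (h2 : u 2 * v 0 - u 0 * v 2 = 0)
    (h3 : u 0 * v 1 - u 1 * v 0 = 0) : False := by
  have hu : u ≠ 0 := by have := hLI.ne_zero 0; simpa using this
  have hd : 0 < u 0 ^ 2 + u 1 ^ 2 + u 2 ^ 2 := by
    rcases (show u 0 ≠ 0 ∨ u 1 ≠ 0 ∨ u 2 ≠ 0 by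
      by_contra h
      push_neg at h
      exact hu (funext fun m => by fin_cases m <;> simp [h.1, h.2.1, h.2.2])) with h | h | h <;>
      positivity
  set d := u 0 ^ 2 + u 1 ^ 2 + u 2 ^ 2 with hdd
  set s := u 0 * v 0 + u 1 * v 1 + u 2 * v 2 with hss
  have e0 : v 0 = s / d * u 0 := by
    rw [div_mul_eq_mul_div, eq_div_iff hd.ne', hdd, hss]
    linear_combination (-(u 1)) * h3 + u 2 * h2
  have e1 : v 1 = s / d * u 1 := by
    rw [div_mul_eq_mul_div, eq_div_iff hd.ne', hdd, hss]
    linear_combination u 0 * h3 + (-(u 2)) * h1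
  have e2 : v 2 = s / d * u 2 := by
    rw [div_mul_eq_mul_div, eq_div_iff hd.ne', hdd, hss]
    linear_combination (-(u 0)) * h2 + u 1 * h1
  have hv : v = (s / d) • u := by
    funext m
    fin_cases m
    · exact e0
    · exact e1
    · exact e2
  have hz : ∑ i : Fin 2, (![s / d, -1] : Fin 2 → ℝ) i • ![u, v] i = 0 := by
    simp [Fin.sum_univ_two, hv]
  have := Fintype.linearIndependent_iff.1 hLI ![s / d, -1] hz 1
  norm_num at this

/-- Uniform positive definiteness of the scaled three-dimensional viscosity tensor
`B^{ijkl}(ε)`: the constant is independent of the point of the fixed domain and of the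
thickness parameter `ε ∈ (0, ε₀]`. -/
theorem stmt15 (ω : Set (Fin 2 → ℝ)) (hωo : IsOpen ω) (hωb : Bornology.IsBounded ω)
    (hωc : IsConnected ω)
    (U : Set (Fin 2 → ℝ)) (hUo : IsOpen U) (hωU : closure ω ⊆ U)
    (θ : (Fin 2 → ℝ) → Fin 3 → ℝ) (hθ : ContDiffOn ℝ 3 θ U) (hθinj : InjOn θ (closure ω))
    (a : Fin 2 → (Fin 2 → ℝ) → Fin 3 → ℝ)
    (ha : ∀ α y, a α y = fderiv ℝ θ y (Pi.single α 1))
    (hind : ∀ y ∈ closure ω, LinearIndependent ℝ ![a 0 y, a 1 y])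
    (c : (Fin 2 → ℝ) → Fin 3 → ℝ)
    (hc : ∀ y, c y = ![a 0 y 1 * a 1 y 2 - a 0 y 2 * a 1 y 1,
                       a 0 y 2 * a 1 y 0 - a 0 y 0 * a 1 y 2,
                       a 0 y 0 * a 1 y 1 - a 0 y 1 * a 1 y 0])
    (a3 : (Fin 2 → ℝ) → Fin 3 → ℝ)
    (ha3 : ∀ y, a3 y = (Real.sqrt (∑ i, c y i ^ 2))⁻¹ • c y)
    (Θ : (Fin 2 → ℝ) × ℝ → Fin 3 → ℝ)
    (hΘ : ∀ p, Θ p = θ p.1 + p.2 • a3 p.1)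
    (gvec : Fin 3 → ((Fin 2 → ℝ) × ℝ) → Fin 3 → ℝ)
    (hgvec0 : ∀ p, gvec 0 p = fderiv ℝ Θ p (Pi.single 0 1, 0))
    (hgvec1 : ∀ p, gvec 1 p = fderiv ℝ Θ p (Pi.single 1 1, 0))
    (hgvec2 : ∀ p, gvec 2 p = fderiv ℝ Θ p (0, 1))
    (ε₀ : ℝ) (hε₀ : 0 < ε₀)
    (hgind : ∀ p ∈ closure ω ×ˢ Icc (-ε₀) ε₀,
      LinearIndependent ℝ ![gvec 0 p, gvec 1 p, gvec 2 p])
    (thv rho : ℝ) (hthv : 0 ≤ thv) (hrho : 0 < rho)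
    (G : ((Fin 2 → ℝ) × ℝ) → Matrix (Fin 3) (Fin 3) ℝ)
    (hG : ∀ p i j, G p i j = ∑ m, gvec i p m * gvec j p m)
    (Ginv : ℝ → ((Fin 2 → ℝ) × ℝ) → Matrix (Fin 3) (Fin 3) ℝ)
    (hGinv : ∀ ε p, Ginv ε p = (G (p.1, ε * p.2))⁻¹)
    (Bε : ℝ → ((Fin 2 → ℝ) × ℝ) → Fin 3 → Fin 3 → Fin 3 → Fin 3 → ℝ)
    (hBε : ∀ ε p i j k l, Bε ε p i j k l = thv * Ginv ε p i j * Ginv ε p k l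
      + (rho / 2) * (Ginv ε p i k * Ginv ε p j l + Ginv ε p i l * Ginv ε p j k)) :
    ∃ Cv > (0 : ℝ), ∀ ε : ℝ, 0 < ε → ε ≤ ε₀ →
      ∀ p ∈ closure ω ×ˢ Icc (-1 : ℝ) 1,
        ∀ t : Matrix (Fin 3) (Fin 3) ℝ, t.IsSymm →
          ∑ i, ∑ j, |t i j| ^ 2 ≤ Cv * ∑ i, ∑ j, ∑ k, ∑ l, Bε ε p i j k l * t k l * t i j := by
  classical
  -- ANALYSIS PART
  have hfd : ContDiffOn ℝ 2 (fderiv ℝ θ) U := hθ.fderiv_of_isOpen hUo (by norm_num)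
  have haC : ∀ α : Fin 2, ContDiffOn ℝ 2 (a α) U := by
    intro α
    have h1 : ContDiffOn ℝ 2 (fun y => fderiv ℝ θ y (Pi.single α 1)) U :=
      hfd.clm_apply contDiffOn_const
    exact h1.congr fun y _ => ha α y
  have haCm : ∀ (α : Fin 2) (m : Fin 3), ContDiffOn ℝ 2 (fun y => a α y m) U := fun α m =>
    (ContinuousLinearMap.proj m : ((Fin 3 → ℝ) →L[ℝ] ℝ)).contDiff.comp_contDiffOn (haC α)
  have hcC : ContDiffOn ℝ 2 c U := by
    have h1 : ContDiffOn ℝ 2 (fun y => (![a 0 y 1 * a 1 y 2 - a 0 y 2 * a 1 y 1,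
        a 0 y 2 * a 1 y 0 - a 0 y 0 * a 1 y 2,
        a 0 y 0 * a 1 y 1 - a 0 y 1 * a 1 y 0] : Fin 3 → ℝ)) U := by
      rw [contDiffOn_pi]
      intro i
      fin_cases i
      · simpa using ((haCm 0 1).mul (haCm 1 2)).sub ((haCm 0 2).mul (haCm 1 1))
      · simpa using ((haCm 0 2).mul (haCm 1 0)).sub ((haCm 0 0).mul (haCm 1 2))
      · simpa using ((haCm 0 0).mul (haCm 1 1)).sub ((haCm 0 1).mul (haCm 1 0))
    exact h1.congr fun y _ => hc y
  have hcCm : ∀ m : Fin 3, ContDiffOn ℝ 2 (fun y => c y m) U := fun m =>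
    (ContinuousLinearMap.proj m : ((Fin 3 → ℝ) →L[ℝ] ℝ)).contDiff.comp_contDiffOn hcC
  have hnC : ContDiffOn ℝ 2 (fun y => ∑ i, c y i ^ 2) U := by
    have h1 : ContDiffOn ℝ 2 (fun y => c y 0 ^ 2 + c y 1 ^ 2 + c y 2 ^ 2) U :=
      (((hcCm 0).pow 2).add ((hcCm 1).pow 2)).add ((hcCm 2).pow 2)
    exact h1.congr fun y _ => by rw [Fin.sum_univ_three]
  have hcne : ∀ y ∈ closure ω, 0 < ∑ i, c y i ^ 2 := by
    intro y hy
    rcases lt_or_eq_of_le (Finset.sum_nonneg fun i _ => sq_nonneg (c y i)) with h | h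
    · exact h
    have hsum0 : ∀ i, c y i = 0 := by
      intro i
      have h0 := (Finset.sum_eq_zero_iff_of_nonneg (fun j _ => sq_nonneg (c y j))).1 h.symm
        i (Finset.mem_univ i)
      exact pow_eq_zero_iff (by norm_num) |>.1 h0
    exfalso
    apply aux_cross (a 0 y) (a 1 y) (hind y hy)
    · have := hsum0 0; rw [hc y] at this; simpa using this
    · have := hsum0 1; rw [hc y] at this; simpa using this
    · have := hsum0 2; rw [hc y] at this; simpa using this
  set V : Set (Fin 2 → ℝ) := U ∩ ((fun y => ∑ i, c y i ^ 2) ⁻¹' Set.Ioi 0) with hVdef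
  have hVo : IsOpen V := hnC.continuousOn.isOpen_inter_preimage hUo isOpen_Ioi
  have hωV : closure ω ⊆ V := fun y hy => ⟨hωU hy, hcne y hy⟩
  have hVU : V ⊆ U := Set.inter_subset_left
  have ha3C : ContDiffOn ℝ 2 a3 V := by
    have hnV : ContDiffOn ℝ 2 (fun y => ∑ i, c y i ^ 2) V := hnC.mono hVU
    have hsq : ContDiffOn ℝ 2 (fun y => Real.sqrt (∑ i, c y i ^ 2)) V :=
      hnV.sqrt fun y hy => (show (0:ℝ) < ∑ i, c y i ^ 2 from hy.2).ne'
    have hinv : ContDiffOn ℝ 2 (fun y => (Real.sqrt (∑ i, c y i ^ 2))⁻¹) V :=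
      hsq.inv fun y hy => (Real.sqrt_pos.2 (show (0:ℝ) < ∑ i, c y i ^ 2 from hy.2)).ne'
    have h1 : ContDiffOn ℝ 2 (fun y => (Real.sqrt (∑ i, c y i ^ 2))⁻¹ • c y) V :=
      hinv.smul (hcC.mono hVU)
    exact h1.congr fun y _ => ha3 y
  have hΘC : ContDiffOn ℝ 2 Θ (V ×ˢ (Set.univ : Set ℝ)) := by
    have h1 : ContDiffOn ℝ 2 (fun p : (Fin 2 → ℝ) × ℝ => θ p.1) (V ×ˢ Set.univ) :=
      (hθ.of_le (by norm_num)).comp contDiff_fst.contDiffOn fun p hp => hVU hp.1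
    have h2 : ContDiffOn ℝ 2 (fun p : (Fin 2 → ℝ) × ℝ => a3 p.1) (V ×ˢ Set.univ) :=
      ha3C.comp contDiff_fst.contDiffOn fun p hp => hp.1
    have h3 : ContDiffOn ℝ 2 (fun p : (Fin 2 → ℝ) × ℝ => p.2 • a3 p.1) (V ×ˢ Set.univ) :=
      contDiff_snd.contDiffOn.smul h2
    exact (h1.add h3).congr fun p _ => hΘ p
  have hWo : IsOpen (V ×ˢ (Set.univ : Set ℝ)) := hVo.prod isOpen_univ
  have hfdΘ : ContinuousOn (fderiv ℝ Θ) (V ×ˢ (Set.univ : Set ℝ)) :=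
    hΘC.continuousOn_fderiv_of_isOpen hWo (by norm_num)
  have hg0 : ContinuousOn (gvec 0) (V ×ˢ (Set.univ : Set ℝ)) :=
    (hfdΘ.clm_apply continuousOn_const).congr fun p _ => hgvec0 p
  have hg1 : ContinuousOn (gvec 1) (V ×ˢ (Set.univ : Set ℝ)) :=
    (hfdΘ.clm_apply continuousOn_const).congr fun p _ => hgvec1 p
  have hg2 : ContinuousOn (gvec 2) (V ×ˢ (Set.univ : Set ℝ)) :=
    (hfdΘ.clm_apply continuousOn_const).congr fun p _ => hgvec2 p
  have hgm : ∀ (i : Fin 3) (m : Fin 3),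
      ContinuousOn (fun p => gvec i p m) (V ×ˢ (Set.univ : Set ℝ)) := by
    intro i m
    have hgi : ContinuousOn (gvec i) (V ×ˢ (Set.univ : Set ℝ)) := by
      fin_cases i
      exacts [hg0, hg1, hg2]
    exact (continuous_apply m).comp_continuousOn hgi
  have hFC : ContinuousOn (fun p => ∑ i, ∑ m, gvec i p m ^ 2) (V ×ˢ (Set.univ : Set ℝ)) := by
    apply continuousOn_finset_sum
    intro i _
    apply continuousOn_finset_sum
    intro m _
    exact (hgm i m).pow 2
  -- COMPACTNESS
  set K : Set ((Fin 2 → ℝ) × ℝ) := closure ω ×ˢ Icc (-ε₀) ε₀ with hKdef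
  have hKc : IsCompact K := hωb.isCompact_closure.prod isCompact_Icc
  have hKW : K ⊆ V ×ˢ (Set.univ : Set ℝ) := Set.prod_mono hωV (Set.subset_univ _)
  obtain ⟨C0, hC0⟩ := hKc.exists_bound_of_continuousOn (hFC.mono hKW)
  set M : ℝ := max C0 1 with hMdef
  have hM0 : (0:ℝ) < M := lt_of_lt_of_le one_pos (le_max_right _ _)
  have hFM : ∀ q ∈ K, (∑ i, ∑ m, gvec i q m ^ 2) ≤ M := fun q hq =>
    le_trans (le_trans (le_abs_self _) (by simpa using hC0 q hq)) (le_max_left _ _)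
  -- GRAM MATRIX FACTS
  have hGsym : ∀ q, (G q)ᵀ = G q := fun q => Matrix.ext fun i j => by
    rw [Matrix.transpose_apply, hG, hG]
    exact Finset.sum_congr rfl fun m _ => mul_comm _ _
  have hquad : ∀ q (x : Fin 3 → ℝ), x ⬝ᵥ (G q) *ᵥ x = ∑ m, (∑ i, x i * gvec i q m) ^ 2 := by
    intro q x
    simp only [dotProduct, Matrix.mulVec, hG, Fin.sum_univ_three]
    ring
  have hGpd : ∀ q ∈ K, (G q).PosDef := by
    intro q hq
    refine Matrix.PosDef.of_dotProduct_mulVec_pos ?_ ?_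
    · exact (Matrix.conjTranspose_eq_transpose_of_trivial _).trans (hGsym q)
    · intro x hx
      have hstar : star x = x := funext fun i => star_trivial _
      rw [hstar, hquad]
      have hw : ∃ m, (∑ i, x i * gvec i q m) ≠ 0 := by
        by_contra hcon
        push_neg at hcon
        have hz : ∑ i : Fin 3, x i • ![gvec 0 q, gvec 1 q, gvec 2 q] i = 0 := by
          funext mm
          rw [Finset.sum_apply]
          have h' := hcon mm
          rw [Fin.sum_univ_three] at h'
          simp only [Fin.sum_univ_three, Pi.smul_apply, smul_eq_mul, Matrix.cons_val_zero,
            Matrix.cons_val_one, Matrix.head_cons, Pi.zero_apply]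
          simpa using h'
        have hall := Fintype.linearIndependent_iff.1 (hgind q hq) x hz
        exact hx (funext fun i => hall i)
      obtain ⟨m0, hm0⟩ := hw
      exact Finset.sum_pos' (fun m _ => sq_nonneg _)
        ⟨m0, Finset.mem_univ _, by positivity⟩
  have hGbd : ∀ q ∈ K, ∀ x : Fin 3 → ℝ, x ⬝ᵥ (G q) *ᵥ x ≤ M * (x ⬝ᵥ x) := by
    intro q hq x
    rw [hquad]
    have hxx : x ⬝ᵥ x = ∑ i, x i ^ 2 := by
      simp [dotProduct, sq]
    calc ∑ m, (∑ i, x i * gvec i q m) ^ 2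
        ≤ ∑ m, (∑ i, x i ^ 2) * (∑ i, gvec i q m ^ 2) :=
          Finset.sum_le_sum fun m _ =>
            Finset.sum_mul_sq_le_sq_mul_sq Finset.univ x (fun i => gvec i q m)
      _ = (∑ i, x i ^ 2) * (∑ m, ∑ i, gvec i q m ^ 2) := by rw [← Finset.mul_sum]
      _ = (∑ i, x i ^ 2) * (∑ i, ∑ m, gvec i q m ^ 2) := by rw [Finset.sum_comm]
      _ ≤ (∑ i, x i ^ 2) * M :=
          mul_le_mul_of_nonneg_left (hFM q hq) (Finset.sum_nonneg fun i _ => sq_nonneg _)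
      _ = M * (x ⬝ᵥ x) := by rw [hxx, mul_comm]
  have hinvlow : ∀ q ∈ K, ∀ x : Fin 3 → ℝ, M⁻¹ * (x ⬝ᵥ x) ≤ x ⬝ᵥ (G q)⁻¹ *ᵥ x := by
    intro q hq x
    by_cases hx : x = 0
    · simp [hx]
    · have hpd := hGpd q hq
      have hdet : IsUnit (G q).det := hpd.det_pos.ne'.isUnit
      have hGy : G q *ᵥ ((G q)⁻¹ *ᵥ x) = x := by
        rw [Matrix.mulVec_mulVec, Matrix.mul_nonsing_inv _ hdet, Matrix.one_mulVec]
      have hcs := aux_cs (fun i => gvec i q) (G q) (fun i j => hG q i j) x ((G q)⁻¹ *ᵥ x)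
      rw [hGy, dotProduct_comm ((G q)⁻¹ *ᵥ x) x] at hcs
      have hb := hGbd q hq x
      have hxx : 0 < x ⬝ᵥ x := by
        have e : x ⬝ᵥ x = ∑ i, x i ^ 2 := by simp [dotProduct, sq]
        rw [e]
        obtain ⟨i, hi⟩ := Function.ne_iff.1 hx
        have hi' : x i ≠ 0 := by simpa using hi
        exact Finset.sum_pos' (fun j _ => sq_nonneg _) ⟨i, Finset.mem_univ _, by positivity⟩
      have hApos : 0 ≤ x ⬝ᵥ (G q)⁻¹ *ᵥ x := by
        have h2 := hpd.inv.posSemidef.dotProduct_mulVec_nonneg x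
        have hstar : star x = x := funext fun i => star_trivial _
        rwa [hstar] at h2
      have hmain : x ⬝ᵥ x ≤ M * (x ⬝ᵥ (G q)⁻¹ *ᵥ x) := by
        nlinarith [hcs, mul_le_mul_of_nonneg_right hb hApos, hxx]
      calc M⁻¹ * (x ⬝ᵥ x) ≤ M⁻¹ * (M * (x ⬝ᵥ (G q)⁻¹ *ᵥ x)) :=
            mul_le_mul_of_nonneg_left hmain (inv_nonneg.2 hM0.le)
        _ = x ⬝ᵥ (G q)⁻¹ *ᵥ x := by field_simp
  -- FINAL ASSEMBLY
  refine ⟨M ^ 2 / rho, by positivity, ?_⟩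
  intro ε hε hεε₀ p hp t ht
  have hqK : (p.1, ε * p.2) ∈ K := by
    refine ⟨hp.1, ⟨?_, ?_⟩⟩
    · show -ε₀ ≤ ε * p.2
      nlinarith [mul_le_mul_of_nonneg_left hp.2.1 hε.le, hεε₀]
    · show ε * p.2 ≤ ε₀
      nlinarith [mul_le_mul_of_nonneg_left hp.2.2 hε.le, hεε₀]
  set A := (G (p.1, ε * p.2))⁻¹ with hA
  have hAsym : Aᵀ = A := by rw [hA, Matrix.transpose_nonsing_inv, hGsym]
  have htT : tᵀ = t := ht
  have htH : tᴴ = t := by rw [Matrix.conjTranspose_eq_transpose_of_trivial, htT]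
  have hApd : A.PosDef := (hGpd _ hqK).inv
  have hmps : (A - M⁻¹ • (1 : Matrix (Fin 3) (Fin 3) ℝ)).PosSemidef := by
    refine Matrix.PosSemidef.of_dotProduct_mulVec_nonneg ?_ ?_
    · show _ᴴ = _
      rw [Matrix.conjTranspose_eq_transpose_of_trivial, Matrix.transpose_sub, hAsym,
        Matrix.transpose_smul, Matrix.transpose_one]
    · intro x
      have hstar : star x = x := funext fun i => star_trivial _
      have h1 := hinvlow _ hqK x
      have e : x ⬝ᵥ (A - M⁻¹ • (1 : Matrix (Fin 3) (Fin 3) ℝ)) *ᵥ x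
          = x ⬝ᵥ A *ᵥ x - M⁻¹ * (x ⬝ᵥ x) := by
        rw [Matrix.sub_mulVec, dotProduct_sub, Matrix.smul_mulVec,
          Matrix.one_mulVec, dotProduct_smul, smul_eq_mul]
      rw [hstar, e]
      linarith [h1]
  have hkey2 := aux_key2 (m := M⁻¹) (inv_nonneg.2 hM0.le) hApd.posSemidef hmps htH
  have hRHS : ∑ i, ∑ j, ∑ k, ∑ l, Bε ε p i j k l * t k l * t i j
      = thv * (∑ i, ∑ j, A i j * t i j) ^ 2 + rho * (A * t * A * t).trace := by
    rw [← aux_key3 thv rho A t hAsym htT]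
    simp only [hBε, hGinv, ← hA]
  rw [hRHS, show (∑ i, ∑ j, |t i j| ^ 2) = (t * t).trace from (aux_key4 t htT).symm]
  have h6 : 0 ≤ thv * (∑ i, ∑ j, A i j * t i j) ^ 2 := mul_nonneg hthv (sq_nonneg _)
  have h7 : 0 ≤ (t * t).trace := by rw [aux_key4 t htT]; positivity
  have hMT : (t * t).trace ≤ M ^ 2 * (A * t * A * t).trace := by
    have h := mul_le_mul_of_nonneg_left hkey2 (by positivity : (0:ℝ) ≤ M ^ 2)
    calc (t * t).trace = M ^ 2 * ((M⁻¹) ^ 2 * (t * t).trace) := by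
          field_simp
      _ ≤ _ := h
  have hexp : M ^ 2 / rho * (thv * (∑ i, ∑ j, A i j * t i j) ^ 2 + rho * (A * t * A * t).trace)
      = M ^ 2 / rho * (thv * (∑ i, ∑ j, A i j * t i j) ^ 2) + M ^ 2 * (A * t * A * t).trace := by
    field_simp
  rw [hexp]
  have h8 : 0 ≤ M ^ 2 / rho * (thv * (∑ i, ∑ j, A i j * t i j) ^ 2) :=
    mul_nonneg (div_nonneg (sq_nonneg M) hrho.le) h6
  linarith [hMT, h8]
end

section
/- Let ω ⊂ ℝ² be a bounded domain and θ : closure(ω) → ℝ³ an injective C³ mapping with a_α := ∂_α θ linearly independent on closure(ω); let a₃ := (a₁ × a₂)/|a₁ × a₂|, Θ(y, x₃) := θ(y) + x₃ a₃(y), and let ε₀ > 0 be such that the vectors g_i := ∂_i Θ are linearly independent on closure(ω) × [−ε₀, ε₀]; let (g^i) be the corresponding contravariant basis (g^i · g_j = δ^i_j), and for 0 < ε ≤ ε₀ and x = (y, x₃) ∈ closure(ω) × [−1,1] define the scaled Christoffel symbols Γ^p_{ij}(ε)(x) := (g^p · ∂_i g_j)(y, εx₃). Let b_{αβ} := a₃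 · ∂_β a_α and b^σ_α := a^{στ} b_{τα}, where (a^{στ}) is the inverse of (a_α · a_β). Then for all 0 < ε ≤ ε₀ and all (y, x₃) ∈ closure(ω) × [−1,1]: Γ³_{α3}(ε) = 0 and Γ^p_{33}(ε) = 0 for every p ∈ {1,2,3} and α ∈ {1,2}, and Γ³_{αβ}(ε)(y, x₃) = b_{αβ}(y) − ε x₃ Σ_{σ=1}^{2} b^σ_α(y) b_{σβ}(y) for all α, β ∈ {1,2}. -/
open Set

private lemma dot_fderiv (f g : (Fin 2 → ℝ) → (Fin 3 → ℝ)) (y v : Fin 2 → ℝ)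
    (hf : DifferentiableAt ℝ f y) (hg : DifferentiableAt ℝ g y) :
    fderiv ℝ (fun z => ∑ m, f z m * g z m) y v
      = ∑ m, (fderiv ℝ f y v m * g y m + f y m * fderiv ℝ g y v m) := by
  have hfm : ∀ m : Fin 3, HasFDerivAt (fun z => f z m)
      ((ContinuousLinearMap.proj m).comp (fderiv ℝ f y)) y :=
    fun m => hasFDerivAt_pi'.1 hf.hasFDerivAt m
  have hgm : ∀ m : Fin 3, HasFDerivAt (fun z => g z m)
      ((ContinuousLinearMap.proj m).comp (fderiv ℝ g y)) y :=
    fun m => hasFDerivAt_pi'.1 hg.hasFDerivAt m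
  have hsum : HasFDerivAt (fun z => ∑ m, f z m * g z m)
      (∑ m : Fin 3, (f y m • ((ContinuousLinearMap.proj m).comp (fderiv ℝ g y))
        + g y m • ((ContinuousLinearMap.proj m).comp (fderiv ℝ f y)))) y :=
    HasFDerivAt.fun_sum (fun m _ => (hfm m).mul (hgm m))
  rw [hsum.fderiv]
  simp only [ContinuousLinearMap.sum_apply, ContinuousLinearMap.add_apply,
    ContinuousLinearMap.smul_apply, ContinuousLinearMap.comp_apply,
    ContinuousLinearMap.proj_apply, smul_eq_mul]
  exact Finset.sum_congr rfl fun m _ => by ring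

private lemma dual3 (v : Fin 3 → Fin 3 → ℝ) (hv : LinearIndependent ℝ v) (w : Fin 3 → ℝ)
    (hw : ∀ i, ∑ m, w m * v i m = 0) : w = 0 := by
  have hsp : Submodule.span ℝ (Set.range v) = ⊤ :=
    hv.span_eq_top_of_card_eq_finrank (by simp)
  have hmem : w ∈ Submodule.span ℝ (Set.range v) := by rw [hsp]; trivial
  obtain ⟨co, hco⟩ := (Submodule.mem_span_range_iff_exists_fun ℝ).1 hmem
  have hww : ∑ m, w m * w m = 0 := by
    have h1 : ∑ m, w m * w m = ∑ m, w m * (∑ i, co i • v i) m := by rw [hco]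
    rw [h1]
    simp only [Finset.sum_apply, Pi.smul_apply, smul_eq_mul, Finset.mul_sum]
    rw [Finset.sum_comm]
    calc (∑ i, ∑ m, w m * (co i * v i m)) = ∑ i, co i * ∑ m, w m * v i m := by
          refine Finset.sum_congr rfl fun i _ => ?_
          rw [Finset.mul_sum]; exact Finset.sum_congr rfl fun m _ => by ring
      _ = 0 := by simp [hw]
  funext m
  have h0 : ∀ m ∈ Finset.univ, (0:ℝ) ≤ w m * w m := fun m _ => mul_self_nonneg _
  have h2 := (Finset.sum_eq_zero_iff_of_nonneg h0).1 hww m (Finset.mem_univ m)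
  simpa using mul_self_eq_zero.1 h2


/-- Exact identities for the scaled three-dimensional Christoffel symbols of a shell:
`Γ³_{α3}(ε) = 0`, `Γ^p_{33}(ε) = 0`, and
`Γ³_{αβ}(ε)(y,x₃) = b_{αβ}(y) − ε x₃ b^σ_α(y) b_{σβ}(y)`. -/
theorem stmt16 (ω : Set (Fin 2 → ℝ)) (hωo : IsOpen ω) (hωb : Bornology.IsBounded ω)
    (hωc : IsConnected ω)
    (U : Set (Fin 2 → ℝ)) (hUo : IsOpen U) (hωU : closure ω ⊆ U)
    (θ : (Fin 2 → ℝ) → Fin 3 → ℝ) (hθ : ContDiffOn ℝ 3 θ U) (hθinj : InjOn θ (closure ω))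
    (a : Fin 2 → (Fin 2 → ℝ) → Fin 3 → ℝ)
    (ha : ∀ α y, a α y = fderiv ℝ θ y (Pi.single α 1))
    (hind : ∀ y ∈ closure ω, LinearIndependent ℝ ![a 0 y, a 1 y])
    (c : (Fin 2 → ℝ) → Fin 3 → ℝ)
    (hc : ∀ y, c y = ![a 0 y 1 * a 1 y 2 - a 0 y 2 * a 1 y 1,
                       a 0 y 2 * a 1 y 0 - a 0 y 0 * a 1 y 2,
                       a 0 y 0 * a 1 y 1 - a 0 y 1 * a 1 y 0])
    (a3 : (Fin 2 → ℝ) → Fin 3 → ℝ)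
    (ha3 : ∀ y, a3 y = (Real.sqrt (∑ i, c y i ^ 2))⁻¹ • c y)
    (Θ : (Fin 2 → ℝ) × ℝ → Fin 3 → ℝ)
    (hΘ : ∀ p, Θ p = θ p.1 + p.2 • a3 p.1)
    (gvec : Fin 3 → ((Fin 2 → ℝ) × ℝ) → Fin 3 → ℝ)
    (hgvec0 : ∀ p, gvec 0 p = fderiv ℝ Θ p (Pi.single 0 1, 0))
    (hgvec1 : ∀ p, gvec 1 p = fderiv ℝ Θ p (Pi.single 1 1, 0))
    (hgvec2 : ∀ p, gvec 2 p = fderiv ℝ Θ p (0, 1))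
    (ε₀ : ℝ) (hε₀ : 0 < ε₀)
    (hgind : ∀ p ∈ closure ω ×ˢ Icc (-ε₀) ε₀,
      LinearIndependent ℝ ![gvec 0 p, gvec 1 p, gvec 2 p])
    (gcon : Fin 3 → ((Fin 2 → ℝ) × ℝ) → Fin 3 → ℝ)
    (hgcon : ∀ p ∈ closure ω ×ˢ Icc (-ε₀) ε₀, ∀ i j : Fin 3,
      (∑ m, gcon i p m * gvec j p m) = if i = j then (1 : ℝ) else 0)
    (dgvec : Fin 3 → Fin 3 → ((Fin 2 → ℝ) × ℝ) → Fin 3 → ℝ)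
    (hdgvec : ∀ (j : Fin 3) q, dgvec 0 j q = fderiv ℝ (gvec j) q (Pi.single 0 1, 0) ∧
      dgvec 1 j q = fderiv ℝ (gvec j) q (Pi.single 1 1, 0) ∧
      dgvec 2 j q = fderiv ℝ (gvec j) q (0, 1))
    (Gam : ℝ → ((Fin 2 → ℝ) × ℝ) → Fin 3 → Fin 3 → Fin 3 → ℝ)
    (hGam : ∀ ε x q i j, Gam ε x q i j =
      ∑ m, gcon q (x.1, ε * x.2) m * dgvec i j (x.1, ε * x.2) m)
    (amat : (Fin 2 → ℝ) → Matrix (Fin 2) (Fin 2) ℝ)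
    (hamat : ∀ y α β, amat y α β = ∑ m, a α y m * a β y m)
    (bcov : (Fin 2 → ℝ) → Fin 2 → Fin 2 → ℝ)
    (hbcov : ∀ y α β, bcov y α β = ∑ m, a3 y m * fderiv ℝ (a α) y (Pi.single β 1) m)
    (bmix : (Fin 2 → ℝ) → Fin 2 → Fin 2 → ℝ)
    (hbmix : ∀ y σ α, bmix y σ α = ∑ τ, (amat y)⁻¹ σ τ * bcov y τ α) :
    ∀ ε : ℝ, 0 < ε → ε ≤ ε₀ → ∀ x ∈ closure ω ×ˢ Icc (-1 : ℝ) 1,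
      (∀ α : Fin 2, Gam ε x 2 α.castSucc 2 = 0) ∧
      (∀ q : Fin 3, Gam ε x q 2 2 = 0) ∧
      (∀ α β : Fin 2, Gam ε x 2 α.castSucc β.castSucc
        = bcov x.1 α β - ε * x.2 * ∑ σ, bmix x.1 σ α * bcov x.1 σ β) := by
  -- ### smoothness of a α
  have haeq : ∀ α, a α = fun y => fderiv ℝ θ y (Pi.single α 1) := fun α => funext (ha α)
  have haC : ∀ α : Fin 2, ContDiffOn ℝ 2 (a α) U := by
    intro α; rw [haeq α]
    exact (hθ.fderiv_of_isOpen hUo (by norm_num)).clm_apply contDiffOn_const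
  have ham : ∀ (α : Fin 2) (m : Fin 3), ContDiffOn ℝ 2 (fun y => a α y m) U :=
    fun α m => (contDiffOn_pi.1 (haC α)) m
  -- ### smoothness of c and s
  have hcC : ContDiffOn ℝ 2 c U := by
    have hceq : c = fun y => ![a 0 y 1 * a 1 y 2 - a 0 y 2 * a 1 y 1,
                       a 0 y 2 * a 1 y 0 - a 0 y 0 * a 1 y 2,
                       a 0 y 0 * a 1 y 1 - a 0 y 1 * a 1 y 0] := funext hc
    rw [hceq]
    apply contDiffOn_pi.2
    intro i
    fin_cases i <;>
      simp only [Matrix.cons_val_zero, Matrix.cons_val_one, Matrix.head_cons,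
        Matrix.cons_val_two, Matrix.tail_cons] <;>
      exact ((ham _ _).mul (ham _ _)).sub ((ham _ _).mul (ham _ _))
  have hsC : ContDiffOn ℝ 2 (fun y => ∑ i, c y i ^ 2) U := by
    apply ContDiffOn.sum
    intro i _
    exact (contDiffOn_pi.1 hcC i).pow 2
  -- ### c ≠ 0 on closure ω
  have hcne : ∀ y ∈ closure ω, c y ≠ 0 := by
    intro y hy
    have hcy : c y = crossProduct (a 0 y) (a 1 y) := by rw [hc, cross_apply]
    rw [hcy]
    exact crossProduct_ne_zero_iff_linearIndependent.2 (hind y hy)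
  have hspos : ∀ y ∈ closure ω, 0 < ∑ i, c y i ^ 2 := by
    intro y hy
    rcases (lt_or_eq_of_le (Finset.sum_nonneg fun i _ => sq_nonneg (c y i))) with h | h
    · exact h
    · exfalso
      apply hcne y hy
      funext i
      have := (Finset.sum_eq_zero_iff_of_nonneg (fun i _ => sq_nonneg (c y i))).1 h.symm i
        (Finset.mem_univ i)
      simpa using pow_eq_zero_iff (n := 2) (by norm_num) |>.1 this
  -- ### the open set V
  set V : Set (Fin 2 → ℝ) := {y | y ∈ U ∧ (∑ i, c y i ^ 2) ≠ 0} with hVdef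
  have hVU : V ⊆ U := fun y hy => hy.1
  have hVo : IsOpen V := by
    have hVeq : V = U ∩ (fun y => ∑ i, c y i ^ 2) ⁻¹' ({(0:ℝ)}ᶜ) := by
      ext z; simp [hVdef]
    rw [hVeq]
    exact hsC.continuousOn.isOpen_inter_preimage hUo isOpen_compl_singleton
  have hωV : closure ω ⊆ V := fun y hy => ⟨hωU hy, (hspos y hy).ne'⟩
  have hsposV : ∀ y ∈ V, 0 < ∑ i, c y i ^ 2 :=
    fun y hy => lt_of_le_of_ne (Finset.sum_nonneg fun i _ => sq_nonneg (c y i)) (Ne.symm hy.2)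
  -- ### smoothness of a3
  have ha3C : ContDiffOn ℝ 2 a3 V := by
    have h1 : ContDiffOn ℝ 2 (fun y => Real.sqrt (∑ i, c y i ^ 2)) V :=
      (hsC.mono hVU).sqrt (fun y hy => hy.2)
    have h2 : ContDiffOn ℝ 2 (fun y => (Real.sqrt (∑ i, c y i ^ 2))⁻¹) V :=
      h1.inv (fun y hy => Real.sqrt_ne_zero'.2 (hsposV y hy))
    have ha3eq : a3 = fun y => (Real.sqrt (∑ i, c y i ^ 2))⁻¹ • c y := funext ha3
    rw [ha3eq]
    exact h2.smul (hcC.mono hVU)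
  have ha3d : ∀ y ∈ V, DifferentiableAt ℝ a3 y := fun y hy =>
    ((ha3C.of_le (by norm_num)).differentiableOn one_ne_zero).differentiableAt (hVo.mem_nhds hy)
  have had : ∀ (α : Fin 2), ∀ y ∈ V, DifferentiableAt ℝ (a α) y := fun α y hy =>
    (((haC α).mono hVU).of_le (by norm_num) |>.differentiableOn one_ne_zero).differentiableAt
      (hVo.mem_nhds hy)
  set da3 : Fin 2 → (Fin 2 → ℝ) → Fin 3 → ℝ := fun β y => fderiv ℝ a3 y (Pi.single β 1)
    with hda3def
  have hda3C : ∀ β : Fin 2, ContDiffOn ℝ 1 (da3 β) V := by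
    intro β
    exact (ha3C.fderiv_of_isOpen hVo (by norm_num)).clm_apply contDiffOn_const
  have hda3d : ∀ (β : Fin 2), ∀ y ∈ V, DifferentiableAt ℝ (da3 β) y := fun β y hy =>
    ((hda3C β).differentiableOn one_ne_zero).differentiableAt (hVo.mem_nhds hy)
  -- ### pointwise identities
  have hnorm : ∀ y ∈ V, ∑ m, a3 y m * a3 y m = 1 := by
    intro y hy
    have hs := hsposV y hy
    have hsq : Real.sqrt (∑ i, c y i ^ 2) ^ 2 = ∑ i, c y i ^ 2 := Real.sq_sqrt hs.le
    simp only [ha3, Pi.smul_apply, smul_eq_mul]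
    have hterm : ∀ m : Fin 3, (Real.sqrt (∑ i, c y i ^ 2))⁻¹ * c y m
        * ((Real.sqrt (∑ i, c y i ^ 2))⁻¹ * c y m)
        = ((Real.sqrt (∑ i, c y i ^ 2))⁻¹) ^ 2 * c y m ^ 2 := fun m => by ring
    rw [Finset.sum_congr rfl fun m _ => hterm m, ← Finset.mul_sum]
    rw [inv_pow, hsq, inv_mul_cancel₀ hs.ne']
  have horthc : ∀ y, ∀ α : Fin 2, ∑ m, c y m * a α y m = 0 := by
    intro y α
    rw [Fin.sum_univ_three, hc]
    fin_cases α <;>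
      simp only [Fin.mk_zero, Fin.mk_one, Matrix.cons_val_zero, Matrix.cons_val_one,
        Matrix.head_cons, Matrix.cons_val_two, Matrix.tail_cons] <;> ring
  have horth : ∀ y ∈ V, ∀ α : Fin 2, ∑ m, a3 y m * a α y m = 0 := by
    intro y hy α
    simp only [ha3, Pi.smul_apply, smul_eq_mul]
    rw [Finset.sum_congr rfl fun (m : Fin 3) _ => mul_assoc _ (c y m) (a α y m),
      ← Finset.mul_sum, horthc y α, mul_zero]
  -- ### derivative identities
  have hself : ∀ y ∈ V, ∀ v : Fin 2 → ℝ, ∑ m, a3 y m * fderiv ℝ a3 y v m = 0 := by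
    intro y hy v
    have heq : (fun z => ∑ m, a3 z m * a3 z m) =ᶠ[nhds y] (fun _ => (1:ℝ)) :=
      Filter.eventuallyEq_of_mem (hVo.mem_nhds hy) (fun z hz => hnorm z hz)
    have h0 : fderiv ℝ (fun z => ∑ m, a3 z m * a3 z m) y = 0 := by
      rw [heq.fderiv_eq]; exact fderiv_const_apply 1
    have hd := dot_fderiv a3 a3 y v (ha3d y hy) (ha3d y hy)
    rw [h0] at hd
    simp only [ContinuousLinearMap.zero_apply] at hd
    have h2 : ∑ m : Fin 3, (fderiv ℝ a3 y v m * a3 y m + a3 y m * fderiv ℝ a3 y v m)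
        = 2 * ∑ m, a3 y m * fderiv ℝ a3 y v m := by
      rw [Finset.mul_sum]; exact Finset.sum_congr rfl fun m _ => by ring
    rw [h2] at hd
    linarith
  have hda3a : ∀ y ∈ V, ∀ α β : Fin 2,
      ∑ m, da3 β y m * a α y m = - bcov y α β := by
    intro y hy α β
    have heq : (fun z => ∑ m, a3 z m * a α z m) =ᶠ[nhds y] (fun _ => (0:ℝ)) :=
      Filter.eventuallyEq_of_mem (hVo.mem_nhds hy) (fun z hz => horth z hz α)
    have h0 : fderiv ℝ (fun z => ∑ m, a3 z m * a α z m) y = 0 := by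
      rw [heq.fderiv_eq]; exact fderiv_const_apply 0
    have hd := dot_fderiv a3 (a α) y (Pi.single β 1) (ha3d y hy) (had α y hy)
    rw [h0] at hd
    simp only [ContinuousLinearMap.zero_apply] at hd
    rw [Finset.sum_add_distrib] at hd
    rw [hbcov]
    have : ∑ m : Fin 3, fderiv ℝ a3 y (Pi.single β 1) m * a α y m
        = ∑ m, da3 β y m * a α y m := rfl
    linarith [hd, this]
  have hkey3 : ∀ y ∈ V, ∀ α β : Fin 2,
      ∑ m, a3 y m * fderiv ℝ (da3 β) y (Pi.single α 1) m
        = - ∑ m, da3 α y m * da3 β y m := by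
    intro y hy α β
    have heq : (fun z => ∑ m, a3 z m * da3 β z m) =ᶠ[nhds y] (fun _ => (0:ℝ)) :=
      Filter.eventuallyEq_of_mem (hVo.mem_nhds hy)
        (fun z hz => hself z hz (Pi.single β 1))
    have h0 : fderiv ℝ (fun z => ∑ m, a3 z m * da3 β z m) y = 0 := by
      rw [heq.fderiv_eq]; exact fderiv_const_apply 0
    have hd := dot_fderiv a3 (da3 β) y (Pi.single α 1) (ha3d y hy) (hda3d β y hy)
    rw [h0] at hd
    simp only [ContinuousLinearMap.zero_apply] at hd
    rw [Finset.sum_add_distrib] at hd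
    have h1 : ∑ m : Fin 3, fderiv ℝ a3 y (Pi.single α 1) m * da3 β y m
        = ∑ m, da3 α y m * da3 β y m := rfl
    linarith [hd, h1]
  -- ### derivative of Θ and values of gvec
  have hθdiff : ∀ y ∈ V, DifferentiableAt ℝ θ y := fun y hy =>
    ((hθ.of_le (by norm_num)).differentiableOn one_ne_zero).differentiableAt
      (hUo.mem_nhds (hVU hy))
  have hΘd : ∀ p : (Fin 2 → ℝ) × ℝ, p.1 ∈ V → HasFDerivAt Θ
      (((fderiv ℝ θ p.1).comp (ContinuousLinearMap.fst ℝ (Fin 2 → ℝ) ℝ))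
        + (p.2 • ((fderiv ℝ a3 p.1).comp (ContinuousLinearMap.fst ℝ (Fin 2 → ℝ) ℝ))
          + (ContinuousLinearMap.snd ℝ (Fin 2 → ℝ) ℝ).smulRight (a3 p.1))) p := by
    intro p hp
    have h1 : HasFDerivAt (fun q : (Fin 2 → ℝ) × ℝ => θ q.1)
        ((fderiv ℝ θ p.1).comp (ContinuousLinearMap.fst ℝ (Fin 2 → ℝ) ℝ)) p :=
      (hθdiff p.1 hp).hasFDerivAt.comp p hasFDerivAt_fst
    have h2 : HasFDerivAt (fun q : (Fin 2 → ℝ) × ℝ => a3 q.1)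
        ((fderiv ℝ a3 p.1).comp (ContinuousLinearMap.fst ℝ (Fin 2 → ℝ) ℝ)) p :=
      (ha3d p.1 hp).hasFDerivAt.comp p hasFDerivAt_fst
    have h3 : HasFDerivAt (fun q : (Fin 2 → ℝ) × ℝ => q.2 • a3 q.1)
        (p.2 • ((fderiv ℝ a3 p.1).comp (ContinuousLinearMap.fst ℝ (Fin 2 → ℝ) ℝ))
          + (ContinuousLinearMap.snd ℝ (Fin 2 → ℝ) ℝ).smulRight (a3 p.1)) p :=
      hasFDerivAt_snd.smul h2
    have hΘeq : Θ = fun q : (Fin 2 → ℝ) × ℝ => θ q.1 + q.2 • a3 q.1 := funext hΘ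
    rw [hΘeq]
    exact h1.add h3
  have hgv2 : ∀ p : (Fin 2 → ℝ) × ℝ, p.1 ∈ V → gvec 2 p = a3 p.1 := by
    intro p hp
    rw [hgvec2, (hΘd p hp).fderiv]
    simp
  have hgv0 : ∀ p : (Fin 2 → ℝ) × ℝ, p.1 ∈ V →
      gvec 0 p = a 0 p.1 + p.2 • da3 0 p.1 := by
    intro p hp
    rw [hgvec0, (hΘd p hp).fderiv]
    simp only [ContinuousLinearMap.add_apply, ContinuousLinearMap.coe_comp',
      Function.comp_apply, ContinuousLinearMap.coe_fst', ContinuousLinearMap.smul_apply,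
      ContinuousLinearMap.smulRight_apply, ContinuousLinearMap.coe_snd', zero_smul, add_zero,
      ha]
    rfl
  have hgv1 : ∀ p : (Fin 2 → ℝ) × ℝ, p.1 ∈ V →
      gvec 1 p = a 1 p.1 + p.2 • da3 1 p.1 := by
    intro p hp
    rw [hgvec1, (hΘd p hp).fderiv]
    simp only [ContinuousLinearMap.add_apply, ContinuousLinearMap.coe_comp',
      Function.comp_apply, ContinuousLinearMap.coe_fst', ContinuousLinearMap.smul_apply,
      ContinuousLinearMap.smulRight_apply, ContinuousLinearMap.coe_snd', zero_smul, add_zero,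
      ha]
    rfl
  -- ### derivatives of gvec
  have hmemn : ∀ q : (Fin 2 → ℝ) × ℝ, q.1 ∈ V → (V ×ˢ (univ : Set ℝ)) ∈ nhds q :=
    fun q hq => (hVo.prod isOpen_univ).mem_nhds ⟨hq, trivial⟩
  have hfg2 : ∀ q : (Fin 2 → ℝ) × ℝ, q.1 ∈ V → fderiv ℝ (gvec 2) q
      = (fderiv ℝ a3 q.1).comp (ContinuousLinearMap.fst ℝ (Fin 2 → ℝ) ℝ) := by
    intro q hq
    have heq : gvec 2 =ᶠ[nhds q] (fun p => a3 p.1) :=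
      Filter.eventuallyEq_of_mem (hmemn q hq) (fun p hp => hgv2 p hp.1)
    rw [heq.fderiv_eq]
    exact ((ha3d q.1 hq).hasFDerivAt.comp q hasFDerivAt_fst).fderiv
  have hfg0 : ∀ q : (Fin 2 → ℝ) × ℝ, q.1 ∈ V → fderiv ℝ (gvec 0) q
      = (fderiv ℝ (a 0) q.1).comp (ContinuousLinearMap.fst ℝ (Fin 2 → ℝ) ℝ)
        + (q.2 • ((fderiv ℝ (da3 0) q.1).comp (ContinuousLinearMap.fst ℝ (Fin 2 → ℝ) ℝ))
          + (ContinuousLinearMap.snd ℝ (Fin 2 → ℝ) ℝ).smulRight (da3 0 q.1)) := by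
    intro q hq
    have heq : gvec 0 =ᶠ[nhds q] (fun p => a 0 p.1 + p.2 • da3 0 p.1) :=
      Filter.eventuallyEq_of_mem (hmemn q hq) (fun p hp => hgv0 p hp.1)
    rw [heq.fderiv_eq]
    have h1 := (had 0 q.1 hq).hasFDerivAt.comp q
      (hasFDerivAt_fst (p := q) (𝕜 := ℝ) (E := Fin 2 → ℝ) (F := ℝ))
    have h2 := (hasFDerivAt_snd (p := q) (𝕜 := ℝ) (E := Fin 2 → ℝ) (F := ℝ)).smul
      ((hda3d 0 q.1 hq).hasFDerivAt.comp q hasFDerivAt_fst)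
    exact (h1.add h2).fderiv
  have hfg1 : ∀ q : (Fin 2 → ℝ) × ℝ, q.1 ∈ V → fderiv ℝ (gvec 1) q
      = (fderiv ℝ (a 1) q.1).comp (ContinuousLinearMap.fst ℝ (Fin 2 → ℝ) ℝ)
        + (q.2 • ((fderiv ℝ (da3 1) q.1).comp (ContinuousLinearMap.fst ℝ (Fin 2 → ℝ) ℝ))
          + (ContinuousLinearMap.snd ℝ (Fin 2 → ℝ) ℝ).smulRight (da3 1 q.1)) := by
    intro q hq
    have heq : gvec 1 =ᶠ[nhds q] (fun p => a 1 p.1 + p.2 • da3 1 p.1) :=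
      Filter.eventuallyEq_of_mem (hmemn q hq) (fun p hp => hgv1 p hp.1)
    rw [heq.fderiv_eq]
    have h1 := (had 1 q.1 hq).hasFDerivAt.comp q
      (hasFDerivAt_fst (p := q) (𝕜 := ℝ) (E := Fin 2 → ℝ) (F := ℝ))
    have h2 := (hasFDerivAt_snd (p := q) (𝕜 := ℝ) (E := Fin 2 → ℝ) (F := ℝ)).smul
      ((hda3d 1 q.1 hq).hasFDerivAt.comp q hasFDerivAt_fst)
    exact (h1.add h2).fderiv
  -- ### gcon 2 = a3
  have hgcon2 : ∀ q ∈ closure ω ×ˢ Icc (-ε₀) ε₀, gcon 2 q = a3 q.1 := by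
    intro q hq
    have hq1 : q.1 ∈ closure ω := hq.1
    have hqV : q.1 ∈ V := hωV hq1
    have hdots : ∀ j : Fin 3, ∑ m, a3 q.1 m * gvec j q m
        = if (2 : Fin 3) = j then (1:ℝ) else 0 := by
      intro j
      fin_cases j
      · show ∑ m, a3 q.1 m * gvec 0 q m = if (2:Fin 3) = 0 then (1:ℝ) else 0
        rw [hgv0 q hqV]
        simp only [Pi.add_apply, Pi.smul_apply, smul_eq_mul, mul_add]
        rw [Finset.sum_add_distrib, horth q.1 hqV 0]
        have h2 : ∑ m : Fin 3, a3 q.1 m * (q.2 * da3 0 q.1 m)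
            = q.2 * ∑ m, a3 q.1 m * da3 0 q.1 m := by
          rw [Finset.mul_sum]; exact Finset.sum_congr rfl fun m _ => by ring
        rw [h2, hself q.1 hqV (Pi.single 0 1)]
        rw [if_neg (by decide)]
        ring
      · show ∑ m, a3 q.1 m * gvec 1 q m = if (2:Fin 3) = 1 then (1:ℝ) else 0
        rw [hgv1 q hqV]
        simp only [Pi.add_apply, Pi.smul_apply, smul_eq_mul, mul_add]
        rw [Finset.sum_add_distrib, horth q.1 hqV 1]
        have h2 : ∑ m : Fin 3, a3 q.1 m * (q.2 * da3 1 q.1 m)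
            = q.2 * ∑ m, a3 q.1 m * da3 1 q.1 m := by
          rw [Finset.mul_sum]; exact Finset.sum_congr rfl fun m _ => by ring
        rw [h2, hself q.1 hqV (Pi.single 1 1)]
        rw [if_neg (by decide)]
        ring
      · show ∑ m, a3 q.1 m * gvec 2 q m = if (2:Fin 3) = 2 then (1:ℝ) else 0
        rw [hgv2 q hqV, hnorm q.1 hqV]
        norm_num
    have hzero : gcon 2 q - a3 q.1 = 0 := by
      apply dual3 ![gvec 0 q, gvec 1 q, gvec 2 q] (hgind q hq)
      intro i
      have hexp : ∀ j : Fin 3, ∑ m, (gcon 2 q - a3 q.1) m * gvec j q m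
          = (∑ m, gcon 2 q m * gvec j q m) - ∑ m, a3 q.1 m * gvec j q m := by
        intro j
        rw [← Finset.sum_sub_distrib]
        exact Finset.sum_congr rfl fun m _ => by simp [sub_mul]
      fin_cases i
      · show ∑ m, (gcon 2 q - a3 q.1) m * ![gvec 0 q, gvec 1 q, gvec 2 q] 0 m = 0
        rw [Matrix.cons_val_zero, hexp 0, hgcon q hq 2 0, hdots 0]; norm_num
      · show ∑ m, (gcon 2 q - a3 q.1) m * ![gvec 0 q, gvec 1 q, gvec 2 q] 1 m = 0
        rw [Matrix.cons_val_one, Matrix.cons_val_zero, hexp 1, hgcon q hq 2 1, hdots 1]; norm_num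
      · show ∑ m, (gcon 2 q - a3 q.1) m * ![gvec 0 q, gvec 1 q, gvec 2 q] 2 m = 0
        rw [Matrix.cons_val_two, Matrix.tail_cons, Matrix.head_cons, hexp 2,
          hgcon q hq 2 2, hdots 2]; norm_num
    exact sub_eq_zero.1 hzero
  -- ### bridging facts
  have hselfd : ∀ y ∈ V, ∀ β : Fin 2, ∑ m, a3 y m * da3 β y m = 0 :=
    fun y hy β => hself y hy (Pi.single β 1)
  -- ### matrix facts
  have hsym : ∀ (y : Fin 2 → ℝ) (σ τ : Fin 2), amat y σ τ = amat y τ σ := by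
    intro y σ τ
    rw [hamat, hamat]
    exact Finset.sum_congr rfl fun m _ => mul_comm _ _
  have hdet : ∀ y, (amat y).det = ∑ i, c y i ^ 2 := by
    intro y
    rw [Matrix.det_fin_two, hamat, hamat, hamat, hamat, Fin.sum_univ_three,
      Fin.sum_univ_three, Fin.sum_univ_three, Fin.sum_univ_three, Fin.sum_univ_three, hc]
    simp only [Matrix.cons_val_zero, Matrix.cons_val_one, Matrix.head_cons,
      Matrix.cons_val_two, Matrix.tail_cons]
    ring
  have hABI : ∀ y ∈ V, amat y * (amat y)⁻¹ = 1 := by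
    intro y hy
    exact Matrix.mul_nonsing_inv _ (isUnit_iff_ne_zero.2 (by rw [hdet]; exact hy.2))
  have hAinvB : ∀ y ∈ V, ∀ (τ α : Fin 2), ∑ σ, bmix y σ α * amat y σ τ = bcov y τ α := by
    intro y hy τ α
    have e : ∀ ρ τ' : Fin 2, ∑ σ, amat y τ' σ * (amat y)⁻¹ σ ρ
        = if τ' = ρ then (1:ℝ) else 0 := by
      intro ρ τ'
      have h2 := congrFun (congrFun (hABI y hy) τ') ρ
      rw [Matrix.mul_apply] at h2
      rw [h2, Matrix.one_apply]
    have hsym10 : amat y 1 0 = amat y 0 1 := hsym y 1 0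
    fin_cases τ
    · show ∑ σ, bmix y σ α * amat y σ 0 = bcov y 0 α
      have e00 := e 0 0; have e01 := e 1 0
      rw [Fin.sum_univ_two] at e00 e01 ⊢
      rw [if_pos rfl] at e00; rw [if_neg (by decide)] at e01
      rw [hbmix y 0 α, hbmix y 1 α, Fin.sum_univ_two, Fin.sum_univ_two]
      linear_combination bcov y 0 α * e00 + bcov y 1 α * e01
        + ((amat y)⁻¹ 1 0 * bcov y 0 α + (amat y)⁻¹ 1 1 * bcov y 1 α) * hsym10
    · show ∑ σ, bmix y σ α * amat y σ 1 = bcov y 1 α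
      have e10 := e 0 1; have e11 := e 1 1
      rw [Fin.sum_univ_two] at e10 e11 ⊢
      rw [if_neg (by decide)] at e10; rw [if_pos rfl] at e11
      rw [hbmix y 0 α, hbmix y 1 α, Fin.sum_univ_two, Fin.sum_univ_two]
      linear_combination bcov y 0 α * e10 + bcov y 1 α * e11
        - ((amat y)⁻¹ 0 0 * bcov y 0 α + (amat y)⁻¹ 0 1 * bcov y 1 α) * hsym10
  -- ### linear independence of the full frame
  have hli3 : ∀ y ∈ closure ω, LinearIndependent ℝ ![a 0 y, a 1 y, a3 y] := by
    intro y hy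
    have hyV := hωV hy
    rw [Fintype.linearIndependent_iff]
    intro g hg
    rw [Fin.sum_univ_three] at hg
    simp only [Matrix.cons_val_zero, Matrix.cons_val_one, Matrix.head_cons,
      Matrix.cons_val_two, Matrix.tail_cons] at hg
    have hgdot : ∑ m, a3 y m * (g 0 • a 0 y + g 1 • a 1 y + g 2 • a3 y) m = 0 := by
      rw [hg]; simp
    simp only [Pi.add_apply, Pi.smul_apply, smul_eq_mul, mul_add] at hgdot
    rw [Finset.sum_add_distrib, Finset.sum_add_distrib] at hgdot
    have p0 : ∑ m : Fin 3, a3 y m * (g 0 * a 0 y m) = g 0 * ∑ m, a3 y m * a 0 y m := by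
      rw [Finset.mul_sum]; exact Finset.sum_congr rfl fun m _ => by ring
    have p1 : ∑ m : Fin 3, a3 y m * (g 1 * a 1 y m) = g 1 * ∑ m, a3 y m * a 1 y m := by
      rw [Finset.mul_sum]; exact Finset.sum_congr rfl fun m _ => by ring
    have p2 : ∑ m : Fin 3, a3 y m * (g 2 * a3 y m) = g 2 * ∑ m, a3 y m * a3 y m := by
      rw [Finset.mul_sum]; exact Finset.sum_congr rfl fun m _ => by ring
    rw [p0, p1, p2, horth y hyV 0, horth y hyV 1, hnorm y hyV] at hgdot
    have hg2 : g 2 = 0 := by linarith [hgdot]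
    rw [hg2, zero_smul, add_zero] at hg
    have h01 := Fintype.linearIndependent_iff.1 (hind y hy) ![g 0, g 1] (by
      rw [Fin.sum_univ_two]
      simp only [Matrix.cons_val_zero, Matrix.cons_val_one, Matrix.head_cons]
      exact hg)
    intro i
    fin_cases i
    · exact h01 0
    · exact h01 1
    · exact hg2
  -- ### Weingarten formula
  have hW : ∀ y ∈ closure ω, ∀ α : Fin 2, da3 α y = - ∑ σ, bmix y σ α • a σ y := by
    intro y hy α
    have hyV := hωV hy
    have hamat3 : ∀ σ τ : Fin 2, amat y σ τ
        = a σ y 0 * a τ y 0 + a σ y 1 * a τ y 1 + a σ y 2 * a τ y 2 := by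
      intro σ τ; rw [hamat, Fin.sum_univ_three]
    apply eq_neg_of_add_eq_zero_left
    apply dual3 ![a 0 y, a 1 y, a3 y] (hli3 y hy)
    intro i
    fin_cases i
    · show ∑ m, (da3 α y + ∑ σ, bmix y σ α • a σ y) m * a 0 y m = 0
      have E1 := hda3a y hyV 0 α
      have E2 := hAinvB y hyV 0 α
      rw [Fin.sum_univ_three] at E1
      rw [Fin.sum_univ_two, hamat3, hamat3] at E2
      simp only [Pi.add_apply, Finset.sum_apply, Pi.smul_apply, smul_eq_mul,
        Fin.sum_univ_two]
      rw [Fin.sum_univ_three]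
      linear_combination E1 + E2
    · show ∑ m, (da3 α y + ∑ σ, bmix y σ α • a σ y) m * a 1 y m = 0
      have E1 := hda3a y hyV 1 α
      have E2 := hAinvB y hyV 1 α
      rw [Fin.sum_univ_three] at E1
      rw [Fin.sum_univ_two, hamat3, hamat3] at E2
      simp only [Pi.add_apply, Finset.sum_apply, Pi.smul_apply, smul_eq_mul,
        Fin.sum_univ_two]
      rw [Fin.sum_univ_three]
      linear_combination E1 + E2
    · show ∑ m, (da3 α y + ∑ σ, bmix y σ α • a σ y) m * a3 y m = 0
      have E1 := hselfd y hyV α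
      have E2 := horth y hyV 0
      have E3 := horth y hyV 1
      rw [Fin.sum_univ_three] at E1 E2 E3
      simp only [Pi.add_apply, Finset.sum_apply, Pi.smul_apply, smul_eq_mul,
        Fin.sum_univ_two]
      rw [Fin.sum_univ_three]
      linear_combination E1 + bmix y 0 α * E2 + bmix y 1 α * E3
  have hWdot : ∀ y ∈ closure ω, ∀ α β : Fin 2,
      ∑ m, da3 α y m * da3 β y m = ∑ σ, bmix y σ α * bcov y σ β := by
    intro y hy α β
    have hyV := hωV hy
    have hWc : ∀ m : Fin 3, da3 α y m
        = -(bmix y 0 α * a 0 y m + bmix y 1 α * a 1 y m) := by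
      intro m
      have h := congrFun (hW y hy α) m
      have h2 : (-(∑ σ, bmix y σ α • a σ y)) m
          = -(bmix y 0 α * a 0 y m + bmix y 1 α * a 1 y m) := by
        simp [Fin.sum_univ_two]
      rw [h, h2]
    have e0 := hda3a y hyV 0 β
    have e1 := hda3a y hyV 1 β
    rw [Fin.sum_univ_three] at e0 e1
    rw [Fin.sum_univ_three, Fin.sum_univ_two]
    linear_combination (da3 β y 0) * (hWc 0) + (da3 β y 1) * (hWc 1)
      + (da3 β y 2) * (hWc 2) - bmix y 0 α * e0 - bmix y 1 α * e1
  -- ### symmetry of bcov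
  have hbsym : ∀ y ∈ V, ∀ α β : Fin 2,
      ∑ m, a3 y m * fderiv ℝ (a β) y (Pi.single α 1) m = bcov y α β := by
    intro y hy α β
    have hyU := hVU hy
    have hθat : ContDiffAt ℝ 3 θ y := hθ.contDiffAt (hUo.mem_nhds hyU)
    have hsymm := hθat.isSymmSndFDerivAt (by norm_num)
    have hfd : DifferentiableAt ℝ (fderiv ℝ θ) y :=
      (((hθ.fderiv_of_isOpen hUo (by norm_num)).of_le
        (le_refl (1 : WithTop ℕ∞))).differentiableOn one_ne_zero).differentiableAt
        (hUo.mem_nhds hyU)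
    have key : ∀ γ δ : Fin 2, fderiv ℝ (a γ) y (Pi.single δ 1)
        = fderiv ℝ (fderiv ℝ θ) y (Pi.single δ 1) (Pi.single γ 1) := by
      intro γ δ
      rw [haeq γ, fderiv_clm_apply hfd (differentiableAt_const _)]
      simp
    rw [hbcov]
    exact Finset.sum_congr rfl fun m _ => by rw [key β α, key α β, hsymm]
  -- ### final assembly
  intro ε hεpos hεle x hx
  have hx1 : x.1 ∈ closure ω := hx.1
  have hx2 : -1 ≤ x.2 ∧ x.2 ≤ 1 := hx.2
  have hqmem : (x.1, ε * x.2) ∈ closure ω ×ˢ Icc (-ε₀) ε₀ := by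
    have h1 : (0:ℝ) ≤ ε * (x.2 + 1) := mul_nonneg hεpos.le (by linarith [hx2.1])
    have h2 : (0:ℝ) ≤ ε * (1 - x.2) := mul_nonneg hεpos.le (by linarith [hx2.2])
    refine ⟨hx1, ?_⟩
    simp only [mem_Icc]
    constructor <;> nlinarith [h1, h2]
  have hqV : ((x.1, ε * x.2) : (Fin 2 → ℝ) × ℝ).1 ∈ V := hωV hx1
  -- values of dgvec at the scaled point
  have hdg2 : ∀ i : Fin 2, dgvec i.castSucc 2 (x.1, ε * x.2) = da3 i x.1 := by
    intro i
    fin_cases i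
    · show dgvec 0 2 (x.1, ε * x.2) = da3 0 x.1
      rw [(hdgvec 2 (x.1, ε * x.2)).1, hfg2 _ hqV]
      rfl
    · show dgvec 1 2 (x.1, ε * x.2) = da3 1 x.1
      rw [(hdgvec 2 (x.1, ε * x.2)).2.1, hfg2 _ hqV]
      rfl
  have hd22 : dgvec 2 2 (x.1, ε * x.2) = 0 := by
    rw [(hdgvec 2 (x.1, ε * x.2)).2.2, hfg2 _ hqV]
    simp
  have hdg : ∀ i j : Fin 2, dgvec i.castSucc j.castSucc (x.1, ε * x.2)
      = fderiv ℝ (a j) x.1 (Pi.single i 1) + (ε * x.2) • fderiv ℝ (da3 j) x.1 (Pi.single i 1) := by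
    intro i j
    fin_cases i <;> fin_cases j
    · show dgvec 0 0 (x.1, ε * x.2) = _
      rw [(hdgvec 0 (x.1, ε * x.2)).1, hfg0 _ hqV]
      simp
    · show dgvec 0 1 (x.1, ε * x.2) = _
      rw [(hdgvec 1 (x.1, ε * x.2)).1, hfg1 _ hqV]
      simp
    · show dgvec 1 0 (x.1, ε * x.2) = _
      rw [(hdgvec 0 (x.1, ε * x.2)).2.1, hfg0 _ hqV]
      simp
    · show dgvec 1 1 (x.1, ε * x.2) = _
      rw [(hdgvec 1 (x.1, ε * x.2)).2.1, hfg1 _ hqV]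
      simp
  refine ⟨?_, ?_, ?_⟩
  · -- Γ³_{α3} = 0
    intro α
    rw [hGam, hgcon2 _ hqmem]
    have : ∀ m : Fin 3, dgvec α.castSucc 2 (x.1, ε * x.2) m = da3 α x.1 m :=
      fun m => by rw [hdg2 α]
    calc ∑ m, a3 (x.1, ε * x.2).1 m * dgvec α.castSucc 2 (x.1, ε * x.2) m
        = ∑ m, a3 x.1 m * da3 α x.1 m :=
          Finset.sum_congr rfl fun m _ => by rw [this m]
      _ = 0 := hselfd x.1 hqV α
  · -- Γ^p_{33} = 0
    intro p
    rw [hGam]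
    have : ∀ m : Fin 3, dgvec 2 2 (x.1, ε * x.2) m = 0 := fun m => by rw [hd22]; rfl
    calc ∑ m, gcon p (x.1, ε * x.2) m * dgvec 2 2 (x.1, ε * x.2) m
        = ∑ m : Fin 3, gcon p (x.1, ε * x.2) m * 0 :=
          Finset.sum_congr rfl fun m _ => by rw [this m]
      _ = 0 := by simp
  · -- Γ³_{αβ}
    intro α β
    rw [hGam, hgcon2 _ hqmem]
    have hexp : ∀ m : Fin 3, dgvec α.castSucc β.castSucc (x.1, ε * x.2) m
        = fderiv ℝ (a β) x.1 (Pi.single α 1) m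
          + (ε * x.2) * fderiv ℝ (da3 β) x.1 (Pi.single α 1) m :=
      fun m => by rw [hdg α β]; rfl
    have hpull : ∑ m : Fin 3, a3 x.1 m * ((ε * x.2) * fderiv ℝ (da3 β) x.1 (Pi.single α 1) m)
        = (ε * x.2) * ∑ m, a3 x.1 m * fderiv ℝ (da3 β) x.1 (Pi.single α 1) m := by
      rw [Finset.mul_sum]; exact Finset.sum_congr rfl fun m _ => by ring
    calc ∑ m, a3 (x.1, ε * x.2).1 m * dgvec α.castSucc β.castSucc (x.1, ε * x.2) m
        = ∑ m : Fin 3, (a3 x.1 m * fderiv ℝ (a β) x.1 (Pi.single α 1) m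
            + a3 x.1 m * ((ε * x.2) * fderiv ℝ (da3 β) x.1 (Pi.single α 1) m)) :=
          Finset.sum_congr rfl fun m _ => by rw [hexp m]; ring
      _ = bcov x.1 α β + (ε * x.2) * ∑ m, a3 x.1 m * fderiv ℝ (da3 β) x.1 (Pi.single α 1) m := by
          rw [Finset.sum_add_distrib, hbsym x.1 hqV α β, hpull]
      _ = bcov x.1 α β - ε * x.2 * ∑ σ, bmix x.1 σ α * bcov x.1 σ β := by
          rw [hkey3 x.1 hqV α β, hWdot x.1 hx1 α β]; ring
end
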